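/- arXiv:2307.00288 — 11 statements merged into one kernel-verified Lean document; each statement's English description precedes it below -/
import Mathlib

section
/- For every band matrix M of type (r,q) with entries (a_{ik}), the determinants Δ_k built from the moments of M are nonzero for all k ≥ 0, and the entries of the extreme lower diagonal of M are recovered from the moments by the formula a_{i+q,i} = (Δ_{i+q} Δ_{i−1})/(Δ_{i+q−1} Δ_i) for all i ≥ 0. -/
open scoped BigOperators

noncomputable section

/-- The `j`-th standard basis sequence `e_j`. -/
def stdBasis (j : ℕ) : ℕ → ℂ := fun i => if i = j then 1 else 0

/-- Action of a band matrix with band width `r` above the diagonal on a sequence: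
`(M v)_i = Σ_k a_{ik} v_k` (a finite sum, since `a i k = 0` for `k > i + r`). -/
def bandApply (r : ℕ) (a : ℕ → ℕ → ℂ) (v : ℕ → ℂ) : ℕ → ℂ :=
  fun i => ∑ k ∈ Finset.range (i + r + 1), a i k * v k

/-- `a` is a band matrix of type `(r, q)`. -/
structure IsBandMatrix (r q : ℕ) (a : ℕ → ℕ → ℂ) : Prop where
  upper : ∀ i k, i + r < k → a i k = 0
  lower : ∀ i k, k + q < i → a i k = 0
  diag_one : ∀ i, a i (i + r) = 1
  diag_ne : ∀ i, a (i + q) i ≠ 0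

/-- The moments `S_k^{m,n} = (M^k e_{n-1})_{m-1}` of a band matrix. -/
def moment (r : ℕ) (a : ℕ → ℕ → ℂ) (k m n : ℕ) : ℂ :=
  (bandApply r a)^[k] (stdBasis (n - 1)) (m - 1)

/-- The determinants `Δ_k` built from a family of moments `S`:
`Δ_k = det (α_{ij})_{i,j=0}^k` with `α_{ij} = S_{⌊i/r⌋+⌊j/q⌋}^{(i mod r)+1, (j mod q)+1}`. -/
def deltaFromMoments (r q : ℕ) (S : ℕ → ℕ → ℕ → ℂ) (k : ℕ) : ℂ :=
  Matrix.det (Matrix.of fun i j : Fin (k + 1) =>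
    S ((i : ℕ) / r + (j : ℕ) / q) ((i : ℕ) % r + 1) ((j : ℕ) % q + 1))

/-- The shifted determinant sequence: `deltaSh r q S n = Δ_{n-1}`, with `Δ_{-1} = 1`. -/
def deltaSh (r q : ℕ) (S : ℕ → ℕ → ℕ → ℂ) : ℕ → ℂ
  | 0 => 1
  | n + 1 => deltaFromMoments r q S n

namespace BandAux

/-- Matrix entries of the `s`-th power of the band matrix. -/
def P (r : ℕ) (a : ℕ → ℕ → ℂ) : ℕ → ℕ → ℕ → ℂ
  | 0, m, n => if m = n then 1 else 0
  | s + 1, m, n => ∑ k ∈ Finset.range (m + r + 1), a m k * P r a s k n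

variable {r q : ℕ} {a : ℕ → ℕ → ℂ}

lemma P_upper (ha : IsBandMatrix r q a) :
    ∀ (s m n : ℕ), m + s * r < n → P r a s m n = 0 := by
  intro s
  induction s with
  | zero =>
    intro m n h
    simp only [P]
    rw [if_neg]; omega
  | succ s ih =>
    intro m n h
    simp only [P]
    apply Finset.sum_eq_zero
    intro k hk
    simp only [Finset.mem_range] at hk
    have : k + s * r < n := by
      have : (s + 1) * r = s * r + r := by ring
      omega
    rw [ih k n this, mul_zero]

lemma P_lower (ha : IsBandMatrix r q a) :
    ∀ (s m n : ℕ), n + s * q < m → P r a s m n = 0 := by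
  intro s
  induction s with
  | zero =>
    intro m n h
    simp only [P]
    rw [if_neg]; omega
  | succ s ih =>
    intro m n h
    simp only [P]
    apply Finset.sum_eq_zero
    intro k hk
    by_cases hkq : k + q < m
    · rw [ha.lower m k hkq, zero_mul]
    · have : n + s * q < k := by
        have : (s + 1) * q = s * q + q := by ring
        omega
      rw [ih k n this, mul_zero]

lemma P_diag_upper (ha : IsBandMatrix r q a) :
    ∀ (s m : ℕ), P r a s m (m + s * r) = 1 := by
  intro s
  induction s with
  | zero => intro m; simp [P]
  | succ s ih =>
    intro m
    simp only [P]
    rw [Finset.sum_eq_single (m + r)]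
    · rw [ha.diag_one m, one_mul]
      have : m + (s + 1) * r = (m + r) + s * r := by ring
      rw [this, ih]
    · intro k hk hne
      simp only [Finset.mem_range] at hk
      have hklt : k < m + r := by omega
      have : k + s * r < m + (s + 1) * r := by
        have : (s + 1) * r = s * r + r := by ring
        omega
      rw [P_upper ha s k _ this, mul_zero]
    · intro h
      exact absurd (Finset.mem_range.mpr (by omega)) h

/-- Product of the extreme lower-diagonal entries. -/
def prodLow (s n : ℕ) (a : ℕ → ℕ → ℂ) : ℂ :=
  ∏ u ∈ Finset.range s, a (n + (u + 1) * q) (n + u * q)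

lemma P_diag_lower (ha : IsBandMatrix r q a) :
    ∀ (s n : ℕ), P r a s (n + s * q) n = prodLow (q := q) s n a := by
  intro s
  induction s with
  | zero => intro n; simp [P, prodLow]
  | succ s ih =>
    intro n
    simp only [P]
    rw [Finset.sum_eq_single (n + s * q)]
    · rw [ih n]
      simp only [prodLow, Finset.prod_range_succ]
      ring
    · intro k hk hne
      by_cases hkq : k + q < n + (s + 1) * q
      · rw [ha.lower _ k hkq, zero_mul]
      · have : n + s * q < k := by
          have : (s + 1) * q = s * q + q := by ring
          omega
        rw [P_lower ha s k n this, mul_zero]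
    · intro h
      have hx : (s + 1) * q = s * q + q := by ring
      exact absurd (Finset.mem_range.mpr (by omega)) h

lemma prodLow_ne_zero (ha : IsBandMatrix r q a) (s n : ℕ) :
    prodLow (q := q) s n a ≠ 0 := by
  apply Finset.prod_ne_zero_iff.mpr
  intro u _
  have h : n + (u + 1) * q = (n + u * q) + q := by ring
  rw [h]
  exact ha.diag_ne (n + u * q)

lemma iter_eq (ha : IsBandMatrix r q a) :
    ∀ (s : ℕ) (v : ℕ → ℂ) (m : ℕ),
      (bandApply r a)^[s] v m = ∑ n ∈ Finset.range (m + s * r + 1), P r a s m n * v n := by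
  intro s
  induction s with
  | zero =>
    intro v m
    simp only [Function.iterate_zero, id_eq, P, Nat.zero_mul, add_zero]
    rw [Finset.sum_congr rfl (fun n _ => by rw [ite_mul, one_mul, zero_mul]),
      Finset.sum_ite_eq (Finset.range (m + 1)) m v]
    simp
  | succ s ih =>
    intro v m
    rw [Function.iterate_succ_apply']
    simp only [bandApply]
    have step : ∀ k ∈ Finset.range (m + r + 1),
        a m k * (bandApply r a)^[s] v k
          = ∑ n ∈ Finset.range (m + (s + 1) * r + 1), a m k * (P r a s k n * v n) := by
      intro k hk
      simp only [Finset.mem_range] at hk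
      rw [ih v k, Finset.mul_sum]
      apply Finset.sum_subset
      · intro x hx
        simp only [Finset.mem_range] at *
        have : (s + 1) * r = s * r + r := by ring
        omega
      · intro n hn hnot
        simp only [Finset.mem_range, not_lt] at hnot
        rw [P_upper ha s k n (by omega), zero_mul, mul_zero]
    rw [Finset.sum_congr rfl step, Finset.sum_comm]
    apply Finset.sum_congr rfl
    intro n _
    simp only [P, Finset.sum_mul]
    apply Finset.sum_congr rfl
    intro k _
    ring

lemma iter_stdBasis (ha : IsBandMatrix r q a) (s m n : ℕ) :
    (bandApply r a)^[s] (stdBasis n) m = P r a s m n := by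
  rw [iter_eq ha s (stdBasis n) m]
  rw [Finset.sum_congr rfl (fun x _ => by
    rw [stdBasis, mul_ite, mul_one, mul_zero])]
  rw [Finset.sum_ite_eq' (Finset.range (m + s * r + 1)) n (P r a s m)]
  by_cases h : n ∈ Finset.range (m + s * r + 1)
  · rw [if_pos h]
  · rw [if_neg h]
    simp only [Finset.mem_range, not_lt] at h
    exact (P_upper ha s m n (by omega)).symm

lemma moment_eq (ha : IsBandMatrix r q a) (s t m0 n0 : ℕ) :
    moment r a (s + t) (m0 + 1) (n0 + 1)
      = ∑ n ∈ Finset.range (m0 + s * r + 1), P r a s m0 n * P r a t n n0 := by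
  simp only [moment, Nat.add_sub_cancel]
  rw [Function.iterate_add_apply, iter_eq ha s _ m0]
  exact Finset.sum_congr rfl fun n _ => by rw [iter_stdBasis ha]

/-- Each diagonal factor `c j`. -/
def cfac (q : ℕ) (a : ℕ → ℕ → ℂ) (j : ℕ) : ℂ := prodLow (q := q) (j / q) (j % q) a

lemma delta_eq (ha : IsBandMatrix r q a) (k : ℕ) :
    deltaFromMoments r q (moment r a) k = ∏ j ∈ Finset.range (k + 1), cfac q a j := by
  have hA : ∀ i : ℕ, i % r + (i / r) * r = i := fun i => Nat.mod_add_div' i r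
  have hB : ∀ j : ℕ, j % q + (j / q) * q = j := fun j => Nat.mod_add_div' j q
  set A : Matrix (Fin (k + 1)) (Fin (k + 1)) ℂ :=
    Matrix.of fun i n => P r a ((i : ℕ) / r) ((i : ℕ) % r) (n : ℕ) with hAdef
  set B : Matrix (Fin (k + 1)) (Fin (k + 1)) ℂ :=
    Matrix.of fun n j => P r a ((j : ℕ) / q) (n : ℕ) ((j : ℕ) % q) with hBdef
  have hmul : (Matrix.of fun i j : Fin (k + 1) =>
      moment r a ((i : ℕ) / r + (j : ℕ) / q) ((i : ℕ) % r + 1) ((j : ℕ) % q + 1)) = A * B := by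
    ext i j
    simp only [Matrix.of_apply, Matrix.mul_apply, hAdef, hBdef]
    rw [moment_eq ha]
    rw [Fin.sum_univ_eq_sum_range
      (fun n => P r a ((i : ℕ) / r) ((i : ℕ) % r) n * P r a ((j : ℕ) / q) n ((j : ℕ) % q))]
    apply Finset.sum_subset
    · intro x hx
      simp only [Finset.mem_range] at hx ⊢
      have h1 := hA (i : ℕ)
      have h2 : (i : ℕ) < k + 1 := i.isLt
      omega
    · intro n hn hnot
      simp only [Finset.mem_range, not_lt] at hnot
      have h1 := hA (i : ℕ)
      rw [P_upper ha _ _ n (by omega), zero_mul]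
  rw [deltaFromMoments, hmul, Matrix.det_mul]
  have hdetA : A.det = 1 := by
    rw [Matrix.det_of_lowerTriangular A]
    · apply Finset.prod_eq_one
      intro i _
      simp only [hAdef, Matrix.of_apply]
      have h := P_diag_upper ha ((i : ℕ) / r) ((i : ℕ) % r)
      rwa [hA (i : ℕ)] at h
    · intro i j hij
      simp only [hAdef, Matrix.of_apply]
      have hij' : (i : ℕ) < (j : ℕ) := hij
      exact P_upper ha _ _ _ (by
        have h1 := hA (i : ℕ)
        omega)
  have hdetB : B.det = ∏ j ∈ Finset.range (k + 1), cfac q a j := by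
    rw [Matrix.det_of_upperTriangular]
    · rw [← Fin.prod_univ_eq_prod_range (fun j => cfac q a j)]
      apply Finset.prod_congr rfl
      intro j _
      simp only [hBdef, Matrix.of_apply, cfac]
      have h := P_diag_lower ha ((j : ℕ) / q) ((j : ℕ) % q)
      rwa [hB (j : ℕ)] at h
    · intro n j hnj
      simp only [hBdef, Matrix.of_apply]
      have hnj' : (j : ℕ) < (n : ℕ) := hnj
      exact P_lower ha _ _ _ (by
        have h1 := hB (j : ℕ)
        omega)
  rw [hdetA, hdetB, one_mul]

lemma cfac_ne_zero (ha : IsBandMatrix r q a) (j : ℕ) : cfac q a j ≠ 0 :=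
  prodLow_ne_zero ha _ _

lemma cfac_shift (ha : IsBandMatrix r q a) (hq : 1 ≤ q) (i : ℕ) :
    cfac q a (i + q) = cfac q a i * a (i + q) i := by
  have h1 : (i + q) % q = i % q := Nat.add_mod_right i q
  have h2 : (i + q) / q = i / q + 1 := Nat.add_div_right i hq
  simp only [cfac, h1, h2, prodLow, Finset.prod_range_succ]
  congr 1
  · have e0 : (i / q + 1) * q = (i / q) * q + q := by ring
    have e2 : i % q + (i / q) * q = i := Nat.mod_add_div' i q
    have e1 : i % q + (i / q + 1) * q = i + q := by omega
    rw [e1, e2]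

end BandAux

/-- For every band matrix `M` of type `(r,q)` the determinants `Δ_k` built from its moments
are all nonzero, and `a_{i+q,i} = (Δ_{i+q} Δ_{i−1}) / (Δ_{i+q−1} Δ_i)` for all `i ≥ 0`. -/
theorem delta_ne_zero_and_extreme_diagonal_formula (r q : ℕ) (hr : 1 ≤ r) (hq : 1 ≤ q)
    (a : ℕ → ℕ → ℂ) (ha : IsBandMatrix r q a) :
    (∀ k, deltaFromMoments r q (moment r a) k ≠ 0) ∧
    (∀ i, a (i + q) i =
      deltaSh r q (moment r a) (i + q + 1) * deltaSh r q (moment r a) i /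
        (deltaSh r q (moment r a) (i + q) * deltaSh r q (moment r a) (i + 1))) := by
  have hdelta : ∀ n, deltaSh r q (moment r a) n = ∏ j ∈ Finset.range n, BandAux.cfac q a j := by
    intro n
    cases n with
    | zero =>
      rw [show deltaSh r q (moment r a) 0 = 1 from rfl, Finset.range_zero, Finset.prod_empty]
    | succ n => rw [deltaSh, BandAux.delta_eq ha]
  have hc := BandAux.cfac_ne_zero ha
  constructor
  · intro k
    rw [BandAux.delta_eq ha]
    exact Finset.prod_ne_zero_iff.mpr fun j _ => hc j
  · intro i
    have hiq : i + q = (i + q - 1) + 1 := by omega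
    simp only [hdelta]
    have hprod_ne : ∀ n, (∏ j ∈ Finset.range n, BandAux.cfac q a j) ≠ 0 := fun n =>
      Finset.prod_ne_zero_iff.mpr fun j _ => hc j
    rw [show i + q + 1 = (i + q) + 1 from rfl, Finset.prod_range_succ,
      Finset.prod_range_succ (n := i), BandAux.cfac_shift ha hq i,
      eq_div_iff (mul_ne_zero (hprod_ne (i + q)) (mul_ne_zero (hprod_ne i) (hc i)))]
    ring
end
end

section
/- For the matrix L1 built from nonzero complex numbers (a_i)_{i≥0} and p ≥ 1, the moments satisfy: S_0^1 = 1, S_{m−1}^m = a_0 a_1 ⋯ a_{m−2} for every 2 ≤ m ≤ p, and S_{p+1}^1 = a_0 a_1 ⋯ a_{p−1}. -/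
open scoped BigOperators

noncomputable section

/-- Entries of the matrix `L1`: `(L1)_{i,i+p} = 1`, `(L1)_{i+1,i} = a_i`, other entries zero. -/
def L1entry (p : ℕ) (a : ℕ → ℂ) : ℕ → ℕ → ℂ :=
  fun i k => if k = i + p then 1 else if i = k + 1 then a k else 0

/-- Action of `L1` on a sequence: `(L1 v)_i = Σ_k (L1)_{ik} v_k` (a finite sum). -/
def L1apply (p : ℕ) (a : ℕ → ℂ) (v : ℕ → ℂ) : ℕ → ℂ :=
  fun i => ∑ k ∈ Finset.range (i + p + 1), L1entry p a i k * v k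

/-- The moments of `L1`: `S_k^m = (L1^k e_0)_{m-1}`. -/
def momL1 (p : ℕ) (a : ℕ → ℂ) (k m : ℕ) : ℂ :=
  (L1apply p a)^[k] (stdBasis 0) (m - 1)

lemma L1apply_single (p : ℕ) (a : ℕ → ℂ) (c : ℂ) (j : ℕ) :
    L1apply p a (fun x => if x = j then c else 0) =
    fun i => (if j = i + p then c else 0) + (if i = j + 1 then a j * c else 0) := by
  funext i
  unfold L1apply
  simp only [mul_ite, mul_zero]
  rw [Finset.sum_ite_eq' (Finset.range (i + p + 1)) j (fun k => L1entry p a i k * c)]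
  by_cases h : j ∈ Finset.range (i + p + 1)
  · simp only [h, if_true]
    unfold L1entry
    by_cases h1 : j = i + p
    · have h2 : ¬ (i = j + 1) := by omega
      have h2' : ¬ (i = i + p + 1) := by omega
      simp only [h1, if_true, h2, if_false, one_mul, add_zero, h2', add_zero]
    · by_cases h2 : i = j + 1
      · have h3 : ¬ (j = j + 1 + p) := by omega
        simp [h1, h2, h3]
      · simp [h1, h2]
  · simp only [h, if_false]
    have h1 : ¬ (j = i + p) := by simp [Finset.mem_range] at h; omega
    have h2 : ¬ (i = j + 1) := by simp [Finset.mem_range] at h; omega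
    simp [h1, h2]

lemma iter_eq (p : ℕ) (a : ℕ → ℂ) :
    ∀ k, k ≤ p → (L1apply p a)^[k] (stdBasis 0) =
      fun i => if i = k then ∏ t ∈ Finset.range k, a t else 0 := by
  intro k
  induction k with
  | zero => intro _; funext i; simp [stdBasis]
  | succ k ih =>
      intro hk
      rw [Function.iterate_succ_apply', ih (by omega), L1apply_single]
      funext i
      have h1 : ¬ (k = i + p) := by omega
      simp only [h1, if_false, zero_add, Finset.prod_range_succ]
      by_cases h2 : i = k + 1 <;> simp [h2, mul_comm]

/-- `S_0^1 = 1`, `S_{m-1}^m = a_0 ⋯ a_{m-2}` for `2 ≤ m ≤ p`, and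
`S_{p+1}^1 = a_0 ⋯ a_{p-1}`. -/
theorem momL1_values (p : ℕ) (hp : 1 ≤ p) (a : ℕ → ℂ) (ha : ∀ i, a i ≠ 0) :
    momL1 p a 0 1 = 1 ∧
    (∀ m, 2 ≤ m → m ≤ p → momL1 p a (m - 1) m = ∏ i ∈ Finset.range (m - 1), a i) ∧
    momL1 p a (p + 1) 1 = ∏ i ∈ Finset.range p, a i := by
  refine ⟨?_, ?_, ?_⟩
  · simp [momL1, stdBasis]
  · intro m hm2 hmp
    unfold momL1
    rw [iter_eq p a (m - 1) (by omega)]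
    simp
  · unfold momL1
    rw [Function.iterate_succ_apply', iter_eq p a p le_rfl, L1apply_single]
    have h1 : (1 : ℕ) - 1 = 0 := rfl
    have h2 : p = 0 + p := by omega
    have h3 : ¬ ((0 : ℕ) = p + 1) := by omega
    simp [h1, ← h2, h3]
end
end

section
/- For the matrix L2 built from nonzero complex numbers (b_i)_{i≥0} and p ≥ 1, the moments satisfy: S̃_{n−1}^n = 1 and S̃_{n+p}^n = Σ_{l=0}^{n−1} b_l for every 1 ≤ n ≤ p. -/
open scoped BigOperators

noncomputable section

/-- Entries of the matrix `L2`: `(L2)_{i,i+1} = 1`, `(L2)_{i+p,i} = b_i`, other entries zero. -/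
def L2entry (p : ℕ) (b : ℕ → ℂ) : ℕ → ℕ → ℂ :=
  fun i k => if k = i + 1 then 1 else if i = k + p then b k else 0

/-- Action of `L2` on a sequence: `(L2 v)_i = Σ_k (L2)_{ik} v_k` (a finite sum). -/
def L2apply (p : ℕ) (b : ℕ → ℂ) (v : ℕ → ℂ) : ℕ → ℂ :=
  fun i => ∑ k ∈ Finset.range (i + 2), L2entry p b i k * v k

/-- The moments of `L2`: `S̃_k^n = (L2^k e_{n-1})_0`. -/
def momL2 (p : ℕ) (b : ℕ → ℂ) (k n : ℕ) : ℂ :=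
  (L2apply p b)^[k] (stdBasis (n - 1)) 0

lemma L2apply_add (p : ℕ) (b : ℕ → ℂ) (u v : ℕ → ℂ) :
    L2apply p b (u + v) = L2apply p b u + L2apply p b v := by
  funext i
  simp [L2apply, mul_add, Finset.sum_add_distrib]

lemma L2apply_smul (p : ℕ) (b : ℕ → ℂ) (c : ℂ) (v : ℕ → ℂ) :
    L2apply p b (c • v) = c • L2apply p b v := by
  funext i
  simp [L2apply, Finset.mul_sum, mul_left_comm]

lemma L2iter_add (p : ℕ) (b : ℕ → ℂ) (k : ℕ) (u v : ℕ → ℂ) :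
    (L2apply p b)^[k] (u + v) = (L2apply p b)^[k] u + (L2apply p b)^[k] v := by
  induction k generalizing u v with
  | zero => simp
  | succ k ih =>
      rw [Function.iterate_succ_apply, Function.iterate_succ_apply,
        Function.iterate_succ_apply, L2apply_add, ih]

lemma L2iter_smul (p : ℕ) (b : ℕ → ℂ) (k : ℕ) (c : ℂ) (v : ℕ → ℂ) :
    (L2apply p b)^[k] (c • v) = c • (L2apply p b)^[k] v := by
  induction k generalizing v with
  | zero => simp
  | succ k ih =>
      rw [Function.iterate_succ_apply, Function.iterate_succ_apply, L2apply_smul, ih]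

lemma L2apply_stdBasis (p : ℕ) (b : ℕ → ℂ) (j : ℕ) :
    L2apply p b (stdBasis j) =
      (if j = 0 then (0 : ℕ → ℂ) else stdBasis (j - 1)) + b j • stdBasis (j + p) := by
  funext i
  simp only [L2apply, stdBasis, L2entry, mul_ite, mul_one, mul_zero]
  rw [Finset.sum_ite_eq' (Finset.range (i + 2)) j]
  by_cases hj : j ∈ Finset.range (i + 2)
  · rw [if_pos hj]
    simp only [Finset.mem_range] at hj
    by_cases h1 : j = i + 1
    · rw [if_pos h1]
      have hj0 : j ≠ 0 := by omega
      have h2 : i ≠ j + p := by omega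
      simp [hj0, h1, h2, stdBasis]
      omega
    · rw [if_neg h1]
      by_cases h2 : i = j + p
      · rw [if_pos h2]
        by_cases hj0 : j = 0
        · simp [hj0, h2, stdBasis]
        · have : i ≠ j - 1 := by omega
          simp [hj0, h2, this, stdBasis]
          omega
      · rw [if_neg h2]
        by_cases hj0 : j = 0
        · subst hj0
          have h2' : i ≠ p := by omega
          simp [stdBasis, h2']
        · have h3 : i ≠ j - 1 := by omega
          simp [hj0, h3, h2, stdBasis]
  · rw [if_neg hj]
    simp only [Finset.mem_range] at hj
    have hj0 : j ≠ 0 := by omega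
    have h3 : i ≠ j - 1 := by omega
    have h2 : i ≠ j + p := by omega
    simp [hj0, h3, h2, stdBasis]

lemma L2apply_zero (p : ℕ) (b : ℕ → ℂ) : L2apply p b 0 = 0 := by
  funext i; simp [L2apply]

lemma L2iter_zero (p : ℕ) (b : ℕ → ℂ) (k : ℕ) : (L2apply p b)^[k] (0 : ℕ → ℂ) = 0 := by
  induction k with
  | zero => rfl
  | succ k ih => rw [Function.iterate_succ_apply, L2apply_zero, ih]

lemma momrec (p : ℕ) (b : ℕ → ℂ) (k j : ℕ) :
    (L2apply p b)^[k + 1] (stdBasis j) 0 =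
      (if j = 0 then 0 else (L2apply p b)^[k] (stdBasis (j - 1)) 0) +
        b j * (L2apply p b)^[k] (stdBasis (j + p)) 0 := by
  rw [Function.iterate_succ_apply, L2apply_stdBasis, L2iter_add, L2iter_smul]
  by_cases hj : j = 0
  · simp [hj, L2iter_zero]
  · simp [hj]

lemma mom_zero (p : ℕ) (b : ℕ → ℂ) :
    ∀ k j, k < j → (L2apply p b)^[k] (stdBasis j) 0 = 0 := by
  intro k
  induction k with
  | zero =>
      intro j hj
      simp [stdBasis]
      omega
  | succ k ih =>
      intro j hj
      rw [momrec]
      have hj0 : j ≠ 0 := by omega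
      rw [if_neg hj0, ih (j - 1) (by omega), ih (j + p) (by omega)]
      ring

lemma mom_one (p : ℕ) (b : ℕ → ℂ) :
    ∀ j, (L2apply p b)^[j] (stdBasis j) 0 = 1 := by
  intro j
  induction j with
  | zero => simp [stdBasis]
  | succ j ih =>
      rw [momrec]
      simp only [Nat.succ_ne_zero, if_false, Nat.add_sub_cancel]
      rw [ih, mom_zero p b j (j + 1 + p) (by omega)]
      ring

lemma mom_sum (p : ℕ) (b : ℕ → ℂ) :
    ∀ j, (L2apply p b)^[j + p + 1] (stdBasis j) 0 = ∑ l ∈ Finset.range (j + 1), b l := by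
  intro j
  induction j with
  | zero =>
      rw [momrec]
      simp only [if_pos rfl, zero_add]
      rw [mom_one]
      simp
  | succ j ih =>
      have h : j + 1 + p + 1 = (j + p + 1) + 1 := by omega
      rw [h, momrec]
      simp only [Nat.succ_ne_zero, if_false, Nat.add_sub_cancel]
      have h2 : j + 1 + p = j + p + 1 := by omega
      rw [ih, h2, mom_one, Finset.sum_range_succ (fun l => b l) (j + 1)]
      ring

/-- `S̃_{n-1}^n = 1` and `S̃_{n+p}^n = Σ_{l=0}^{n-1} b_l` for every `1 ≤ n ≤ p`. -/
theorem momL2_values (p : ℕ) (hp : 1 ≤ p) (b : ℕ → ℂ) (hb : ∀ i, b i ≠ 0) :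
    ∀ n, 1 ≤ n → n ≤ p →
      momL2 p b (n - 1) n = 1 ∧ momL2 p b (n + p) n = ∑ l ∈ Finset.range n, b l := by
  intro n hn _
  constructor
  · rw [momL2, mom_one]
  · rw [momL2]
    have h : n + p = (n - 1) + p + 1 := by omega
    rw [h, mom_sum, Nat.sub_add_cancel hn]
end
end

section
/- Let p ≥ 1 and let a_i : I → ℂ (i ∈ ℤ) be differentiable functions on an interval I satisfying the infinite Bogoyavlensky lattice a_i' = a_i(∏_{j=1}^p a_{i+j} − ∏_{j=1}^p a_{i−j}) for all i ∈ ℤ. Then the functions b_i := a_i a_{i+1} ⋯ a_{i+p−1} satisfy b_i' = b_i(Σ_{j=1}^p b_{i+j} − Σ_{j=1}^p b_{i−j}) for all i ∈ ℤ. -/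
open scoped BigOperators

/-- Miura transformation: if the `a_i` solve the infinite Bogoyavlensky lattice
`a_i' = a_i (∏_{j=1}^p a_{i+j} − ∏_{j=1}^p a_{i−j})`, then the functions
`b_i = a_i a_{i+1} ⋯ a_{i+p−1}` solve `b_i' = b_i (Σ_{j=1}^p b_{i+j} − Σ_{j=1}^p b_{i−j})`. -/
theorem miura_transform_infinite (p : ℕ) (hp : 1 ≤ p) (I : Set ℝ) (a : ℤ → ℝ → ℂ)
    (ha : ∀ i : ℤ, ∀ t ∈ I, HasDerivWithinAt (a i)
      (a i t * (∏ j ∈ Finset.Icc 1 p, a (i + (j : ℤ)) t -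
        ∏ j ∈ Finset.Icc 1 p, a (i - (j : ℤ)) t)) I t) :
    ∀ i : ℤ, ∀ t ∈ I,
      HasDerivWithinAt (fun s => ∏ j ∈ Finset.range p, a (i + (j : ℤ)) s)
        ((∏ j ∈ Finset.range p, a (i + (j : ℤ)) t) *
          ((∑ j ∈ Finset.Icc 1 p, ∏ j' ∈ Finset.range p, a (i + (j : ℤ) + (j' : ℤ)) t) -
            ∑ j ∈ Finset.Icc 1 p, ∏ j' ∈ Finset.range p, a (i - (j : ℤ) + (j' : ℤ)) t)) I t := by
  intro i t ht
  set B : ℤ → ℂ := fun m => ∏ j' ∈ Finset.range p, a (m + (j' : ℤ)) t with hB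
  have h := HasDerivWithinAt.finset_prod (u := Finset.range p)
      (f := fun j s => a (i + (j : ℤ)) s)
      (f' := fun j => a (i + (j : ℤ)) t * (∏ j' ∈ Finset.Icc 1 p, a (i + (j : ℤ) + (j' : ℤ)) t -
        ∏ j' ∈ Finset.Icc 1 p, a (i + (j : ℤ) - (j' : ℤ)) t))
      (s := I) (x := t) (fun j _ => ha (i + (j : ℤ)) t ht)
  -- rewrite Icc products as shifted B's
  have hIcc : ∀ m : ℤ, ∏ j' ∈ Finset.Icc 1 p, a (m + (j' : ℤ)) t = B (m + 1) := by
    intro m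
    rw [hB]
    rw [← Finset.Ico_add_one_right_eq_Icc, Finset.prod_Ico_eq_prod_range]
    refine Finset.prod_congr (by simp) fun k _ => by congr 1; push_cast; ring
  have hIcc' : ∀ m : ℤ, ∏ j' ∈ Finset.Icc 1 p, a (m - (j' : ℤ)) t = B (m - p) := by
    intro m
    rw [hB]
    rw [← Finset.Ico_add_one_right_eq_Icc, Finset.prod_Ico_eq_prod_range, ← Finset.prod_range_reflect]
    refine Finset.prod_congr (by simp) fun k hk => by
      simp only [Finset.mem_range] at hk
      congr 1; omega
  have hsum1 : ∑ j ∈ Finset.Icc 1 p, B (i + (j : ℤ)) =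
      ∑ k ∈ Finset.range p, B (i + (k : ℤ) + 1) := by
    rw [← Finset.Ico_add_one_right_eq_Icc, Finset.sum_Ico_eq_sum_range]
    refine Finset.sum_congr (by simp) fun k _ => by congr 1; push_cast; ring
  have hsum2 : ∑ j ∈ Finset.Icc 1 p, B (i - (j : ℤ)) =
      ∑ k ∈ Finset.range p, B (i + (k : ℤ) - p) := by
    rw [← Finset.Ico_add_one_right_eq_Icc, Finset.sum_Ico_eq_sum_range, ← Finset.sum_range_reflect]
    refine Finset.sum_congr (by simp) fun k hk => by
      simp only [Finset.mem_range] at hk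
      congr 1; omega
  convert h using 1
  case e'_4 => rfl
  case e'_8 => ext s; rw [Finset.prod_apply]
  have hterm : ∀ k ∈ Finset.range p,
      (∏ j ∈ (Finset.range p).erase k, a (i + (j : ℤ)) t) •
        (a (i + (k : ℤ)) t * (∏ j' ∈ Finset.Icc 1 p, a (i + (k : ℤ) + (j' : ℤ)) t -
          ∏ j' ∈ Finset.Icc 1 p, a (i + (k : ℤ) - (j' : ℤ)) t)) =
      B i * (B (i + (k : ℤ) + 1) - B (i + (k : ℤ) - p)) := by
    intro k hk
    rw [hIcc, hIcc', smul_eq_mul, ← mul_assoc, Finset.prod_erase_mul _ _ hk]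
  rw [Finset.sum_congr rfl hterm, ← Finset.mul_sum, Finset.sum_sub_distrib]
  have : (∑ j ∈ Finset.Icc 1 p, ∏ j' ∈ Finset.range p, a (i + (j : ℤ) + (j' : ℤ)) t) =
      ∑ j ∈ Finset.Icc 1 p, B (i + (j : ℤ)) := rfl
  rw [this]
  have : (∑ j ∈ Finset.Icc 1 p, ∏ j' ∈ Finset.range p, a (i - (j : ℤ) + (j' : ℤ)) t) =
      ∑ j ∈ Finset.Icc 1 p, B (i - (j : ℤ)) := rfl
  rw [this, hsum1, hsum2]
end

section
/- Let p ≥ 2, let b_i : I → ℂ (i ∈ ℤ) be differentiable functions on an interval I satisfying b_i' = b_i(Σ_{j=1}^p b_{i+j} − Σ_{j=1}^p b_{i−j}) for all i ∈ ℤ, and fix I₀ ∈ ℤ. Suppose a_{I₀}, …, a_{I₀+p−2} : I → ℂ are differentiable, nowhere vanishing, and satisfy a_i' = a_i(b_{i+1} − b_{i−p}) for i = I₀, …, I₀+p−2. Define a_{I₀+p−1} := b_{I₀}/(a_{I₀} a_{I₀+1} ⋯ a_{I₀+p−2}). Then a_{I₀+p−1} is differentiable and satisfies a_{I₀+p−1}'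 = a_{I₀+p−1}(b_{I₀+p} − b_{I₀−1}). -/
open scoped BigOperators

private lemma prod_deriv_aux (p : ℕ) (I : Set ℝ) (b : ℤ → ℝ → ℂ) (I₀ : ℤ) (a : ℤ → ℝ → ℂ)
    (haDeriv : ∀ i : ℤ, I₀ ≤ i → i ≤ I₀ + (p : ℤ) - 2 → ∀ t ∈ I,
      HasDerivWithinAt (a i) (a i t * (b (i + 1) t - b (i - (p : ℤ)) t)) I t)
    (n : ℕ) (hn : n ≤ p - 1) (hp : 2 ≤ p) : ∀ t ∈ I,
    HasDerivWithinAt (fun s => ∏ j ∈ Finset.range n, a (I₀ + (j : ℤ)) s)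
      ((∏ j ∈ Finset.range n, a (I₀ + (j : ℤ)) t) *
        ∑ j ∈ Finset.range n, (b (I₀ + (j : ℤ) + 1) t - b (I₀ + (j : ℤ) - (p : ℤ)) t)) I t := by
  induction n with
  | zero =>
    intro t ht
    simpa using (hasDerivWithinAt_const t I (1 : ℂ))
  | succ n ih =>
    intro t ht
    have hn' : n ≤ p - 1 := Nat.le_of_succ_le hn
    have h1 := ih hn' t ht
    have h2 := haDeriv (I₀ + (n : ℤ)) (by omega) (by push_cast; omega) t ht
    have := h1.mul h2
    simp only [Finset.prod_range_succ, Finset.sum_range_succ]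
    convert this using 1
    · rfl
    · rfl
    ring

/-- Inverse Miura step: if the `b_i` solve the lattice
`b_i' = b_i (Σ_{j=1}^p b_{i+j} − Σ_{j=1}^p b_{i−j})` and `a_{I₀}, …, a_{I₀+p−2}` are
nowhere-vanishing solutions of `a_i' = a_i (b_{i+1} − b_{i−p})`, then
`a_{I₀+p−1} := b_{I₀} / (a_{I₀} ⋯ a_{I₀+p−2})` is differentiable and satisfies
`a_{I₀+p−1}' = a_{I₀+p−1} (b_{I₀+p} − b_{I₀−1})`. -/
theorem inverse_miura_step (p : ℕ) (hp : 2 ≤ p) (I : Set ℝ) (b : ℤ → ℝ → ℂ)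
    (hb : ∀ i : ℤ, ∀ t ∈ I, HasDerivWithinAt (b i)
      (b i t * (∑ j ∈ Finset.Icc 1 p, b (i + (j : ℤ)) t -
        ∑ j ∈ Finset.Icc 1 p, b (i - (j : ℤ)) t)) I t)
    (I₀ : ℤ) (a : ℤ → ℝ → ℂ)
    (haDeriv : ∀ i : ℤ, I₀ ≤ i → i ≤ I₀ + (p : ℤ) - 2 → ∀ t ∈ I,
      HasDerivWithinAt (a i) (a i t * (b (i + 1) t - b (i - (p : ℤ)) t)) I t)
    (haNe : ∀ i : ℤ, I₀ ≤ i → i ≤ I₀ + (p : ℤ) - 2 → ∀ t ∈ I, a i t ≠ 0) :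
    ∀ t ∈ I,
      HasDerivWithinAt (fun s => b I₀ s / ∏ j ∈ Finset.range (p - 1), a (I₀ + (j : ℤ)) s)
        ((b I₀ t / ∏ j ∈ Finset.range (p - 1), a (I₀ + (j : ℤ)) t) *
          (b (I₀ + (p : ℤ)) t - b (I₀ - 1) t)) I t := by
  intro t ht
  have hPne : (∏ j ∈ Finset.range (p - 1), a (I₀ + (j : ℤ)) t) ≠ 0 :=
    Finset.prod_ne_zero_iff.2 fun j hj =>
      haNe _ (by omega) (by have := Finset.mem_range.1 hj; push_cast; omega) t ht
  have hPd := prod_deriv_aux p I b I₀ a haDeriv (p - 1) le_rfl hp t ht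
  have hbd := hb I₀ t ht
  have hdiv := hbd.div hPd hPne
  have hT : (∑ j ∈ Finset.range (p - 1), (b (I₀ + (j : ℤ) + 1) t - b (I₀ + (j : ℤ) - (p : ℤ)) t))
      = (∑ j ∈ Finset.range (p - 1), b (I₀ + (j : ℤ) + 1) t)
        - ∑ j ∈ Finset.range (p - 1), b (I₀ + (j : ℤ) - (p : ℤ)) t := by
    simp [Finset.sum_sub_distrib]
  have hIcc : Finset.Icc 1 p = Finset.Ico 1 (p + 1) := by
    ext x; simp [Nat.lt_succ_iff]
  have hS1 : (∑ j ∈ Finset.Icc 1 p, b (I₀ + (j : ℤ)) t)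
      = (∑ j ∈ Finset.range (p - 1), b (I₀ + (j : ℤ) + 1) t) + b (I₀ + (p : ℤ)) t := by
    rw [hIcc, Finset.sum_Ico_eq_sum_range,
      show p + 1 - 1 = (p - 1) + 1 by omega, Finset.sum_range_succ]
    congr 1
    · exact Finset.sum_congr rfl fun j hj => by congr 1; push_cast; ring
    · congr 1; push_cast; omega
  have hS2 : (∑ j ∈ Finset.Icc 1 p, b (I₀ - (j : ℤ)) t)
      = b (I₀ - 1) t + ∑ j ∈ Finset.range (p - 1), b (I₀ + (j : ℤ) - (p : ℤ)) t := by
    have h2 : ∑ j ∈ Finset.range (p - 1), b (I₀ + (j : ℤ) - (p : ℤ)) t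
        = ∑ j ∈ Finset.range (p - 1), b (I₀ - ((2 + j : ℕ) : ℤ)) t := by
      rw [← Finset.sum_range_reflect]
      refine Finset.sum_congr rfl fun j hj => ?_
      have := Finset.mem_range.1 hj
      congr 1; push_cast; omega
    rw [h2, show Finset.Icc 1 p = insert 1 (Finset.Ico 2 (p + 1)) by
        ext x; simp [Nat.lt_succ_iff]; omega,
      Finset.sum_insert (by simp), Finset.sum_Ico_eq_sum_range,
      show p + 1 - 2 = p - 1 by omega]
    norm_num
  have key : (∑ j ∈ Finset.Icc 1 p, b (I₀ + (j : ℤ)) t)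
      - (∑ j ∈ Finset.Icc 1 p, b (I₀ - (j : ℤ)) t)
      - (∑ j ∈ Finset.range (p - 1), (b (I₀ + (j : ℤ) + 1) t - b (I₀ + (j : ℤ) - (p : ℤ)) t))
      = b (I₀ + (p : ℤ)) t - b (I₀ - 1) t := by
    rw [hT, hS1, hS2]; ring
  convert hdiv using 1
  · rfl
  · rfl
  rw [show b I₀ t * ((∑ j ∈ Finset.Icc 1 p, b (I₀ + (j : ℤ)) t)
      - ∑ j ∈ Finset.Icc 1 p, b (I₀ - (j : ℤ)) t) * (∏ j ∈ Finset.range (p - 1), a (I₀ + (j : ℤ)) t)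
      - b I₀ t * ((∏ j ∈ Finset.range (p - 1), a (I₀ + (j : ℤ)) t) *
        ∑ j ∈ Finset.range (p - 1), (b (I₀ + (j : ℤ) + 1) t - b (I₀ + (j : ℤ) - (p : ℤ)) t))
      = b I₀ t * (∏ j ∈ Finset.range (p - 1), a (I₀ + (j : ℤ)) t) *
        ((∑ j ∈ Finset.Icc 1 p, b (I₀ + (j : ℤ)) t)
          - (∑ j ∈ Finset.Icc 1 p, b (I₀ - (j : ℤ)) t)
          - ∑ j ∈ Finset.range (p - 1), (b (I₀ + (j : ℤ) + 1) t - b (I₀ + (j : ℤ) - (p : ℤ)) t))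
      from by ring, key]
  field_simp
end

section
/- Let p ≥ 2 and let b_i : [0,T) → ℂ (i ≥ 0, with the convention b_l ≡ 0 for l < 0) be differentiable functions with b_i(t) ≠ 0 for all i ≥ 0 and t, satisfying the semi-infinite lattice b_i' = b_i(Σ_{j=1}^p b_{i+j} − Σ_{j=1}^p b_{i−j}). Fix nonzero complex numbers a_0(0), …, a_{p−2}(0) and define a_i(t) = a_i(0)·exp(∫_0^t b_{i+1}(τ) dτ) for 0 ≤ i ≤ p−2, and recursively a_i(t) = b_{i−p+1}(t)/(a_{i−p+1}(t) ⋯ a_{i−1}(t)) for i ≥ p−1. Then each a_i is differentiable and nowhere vanishing, a_i a_{i+1} ⋯ a_{i+p−1} = b_i for all i ≥ 0, and (a_i)_{i≥0} satisfies the semi-infinite lattice a_i' = a_i(∏_{j=1}^p a_{i+j} − ∏_{j=1}^p a_{i−j}) (with the convention a_l ≡ 0 for l < 0). -/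
open scoped BigOperators

/-- Inverse Miura transformation for the semi-infinite lattices: if the `b_i` solve the
semi-infinite lattice `b_i' = b_i (Σ_{j=1}^p b_{i+j} − Σ_{j=1}^p b_{i−j})` on `[0,T)`
(with `b_l ≡ 0` for `l < 0`), and `a_i` is defined by
`a_i(t) = a_i(0) exp(∫_0^t b_{i+1})` for `0 ≤ i ≤ p−2` and recursively
`a_i(t) = b_{i−p+1}(t) / (a_{i−p+1}(t) ⋯ a_{i−1}(t))` for `i ≥ p−1`, then each `a_i`
(for `i ≥ 0`) is differentiable and nowhere vanishing, `a_i a_{i+1} ⋯ a_{i+p−1} = b_i`,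
and the `a_i` solve the semi-infinite lattice
`a_i' = a_i (∏_{j=1}^p a_{i+j} − ∏_{j=1}^p a_{i−j})` (with `a_l ≡ 0` for `l < 0`). -/
theorem inverse_miura_semiinfinite (p : ℕ) (hp : 2 ≤ p) (T : ℝ) (hT : 0 < T)
    (b : ℤ → ℝ → ℂ)
    (hbneg : ∀ l : ℤ, l < 0 → ∀ t : ℝ, b l t = 0)
    (hbne : ∀ i : ℤ, 0 ≤ i → ∀ t ∈ Set.Ico (0 : ℝ) T, b i t ≠ 0)
    (hbode : ∀ i : ℤ, 0 ≤ i → ∀ t ∈ Set.Ico (0 : ℝ) T, HasDerivWithinAt (b i)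
      (b i t * (∑ j ∈ Finset.Icc 1 p, b (i + (j : ℤ)) t -
        ∑ j ∈ Finset.Icc 1 p, b (i - (j : ℤ)) t)) (Set.Ico (0 : ℝ) T) t)
    (α : ℤ → ℂ) (hα : ∀ i : ℤ, 0 ≤ i → i ≤ (p : ℤ) - 2 → α i ≠ 0)
    (a : ℤ → ℝ → ℂ)
    (haneg : ∀ l : ℤ, l < 0 → ∀ t : ℝ, a l t = 0)
    (hadef1 : ∀ i : ℤ, 0 ≤ i → i ≤ (p : ℤ) - 2 → ∀ t ∈ Set.Ico (0 : ℝ) T,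
      a i t = α i * Complex.exp (∫ τ in (0 : ℝ)..t, b (i + 1) τ))
    (hadef2 : ∀ i : ℤ, (p : ℤ) - 1 ≤ i → ∀ t ∈ Set.Ico (0 : ℝ) T,
      a i t = b (i - (p : ℤ) + 1) t /
        ∏ j ∈ Finset.range (p - 1), a (i - (p : ℤ) + 1 + (j : ℤ)) t) :
    ∀ i : ℤ, 0 ≤ i →
      (∀ t ∈ Set.Ico (0 : ℝ) T, a i t ≠ 0) ∧
      (∀ t ∈ Set.Ico (0 : ℝ) T, ∏ j ∈ Finset.range p, a (i + (j : ℤ)) t = b i t) ∧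
      (∀ t ∈ Set.Ico (0 : ℝ) T, HasDerivWithinAt (a i)
        (a i t * (∏ j ∈ Finset.Icc 1 p, a (i + (j : ℤ)) t -
          ∏ j ∈ Finset.Icc 1 p, a (i - (j : ℤ)) t)) (Set.Ico (0 : ℝ) T) t) := by
  set s : Set ℝ := Set.Ico (0 : ℝ) T with hsdef
  -- continuity of b on s
  have hbcont : ∀ i : ℤ, 0 ≤ i → ContinuousOn (b i) s :=
    fun i hi x hx => (hbode i hi x hx).continuousWithinAt
  -- reindexing lemmas
  have hIccP : ∀ (f : ℕ → ℂ), ∏ j ∈ Finset.Icc 1 p, f j = ∏ j ∈ Finset.range p, f (j + 1) := by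
    intro f
    rw [← Finset.Ico_add_one_right_eq_Icc, Finset.prod_Ico_eq_prod_range]
    exact Finset.prod_congr rfl fun j _ => by rw [Nat.add_comm]
  have hIccS : ∀ (f : ℕ → ℂ), ∑ j ∈ Finset.Icc 1 p, f j = ∑ j ∈ Finset.range p, f (j + 1) := by
    intro f
    rw [← Finset.Ico_add_one_right_eq_Icc, Finset.sum_Ico_eq_sum_range]
    exact Finset.sum_congr rfl fun j _ => by rw [Nat.add_comm]
  -- FTC: derivative of the integral of b i
  have hF : ∀ i : ℤ, 0 ≤ i → ∀ t ∈ s, HasDerivWithinAt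
      (fun u => ∫ τ in (0 : ℝ)..u, b i τ) (b i t) s t := by
    intro i hi t ht
    obtain ⟨ht0, htT⟩ := ht
    set t' : ℝ := (t + T) / 2 with ht'def
    have htt' : t < t' := by rw [ht'def]; linarith
    have ht'T : t' < T := by rw [ht'def]; linarith
    have hsub : Set.Icc (0 : ℝ) t' ⊆ s := fun x hx => ⟨hx.1, lt_of_le_of_lt hx.2 ht'T⟩
    have hco : ContinuousOn (b i) (Set.Icc (0 : ℝ) t') := (hbcont i hi).mono hsub
    have hint : IntervalIntegrable (b i) MeasureTheory.volume 0 t := by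
      apply ContinuousOn.intervalIntegrable
      rw [Set.uIcc_of_le ht0]
      exact hco.mono (Set.Icc_subset_Icc_right (le_of_lt htt'))
    haveI : Fact (t ∈ Set.Icc (0 : ℝ) t') := ⟨⟨ht0, le_of_lt htt'⟩⟩
    have h1 : HasDerivWithinAt (fun u => ∫ τ in (0 : ℝ)..u, b i τ) (b i t)
        (Set.Icc (0 : ℝ) t') t :=
      intervalIntegral.integral_hasDerivWithinAt_right hint
        (hco.stronglyMeasurableAtFilter_nhdsWithin measurableSet_Icc t)
        (hco t ⟨ht0, le_of_lt htt'⟩)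
    exact h1.mono_of_mem_nhdsWithin (mem_nhdsWithin.mpr
      ⟨Set.Iio t', isOpen_Iio, htt', fun x hx => ⟨hx.2.1, le_of_lt hx.1⟩⟩)
  -- derivative of a i for 0 ≤ i ≤ p-2
  have hder1 : ∀ i : ℤ, 0 ≤ i → i ≤ (p : ℤ) - 2 → ∀ t ∈ s,
      HasDerivWithinAt (a i) (a i t * b (i + 1) t) s t := by
    intro i h0 h2 t ht
    have key : HasDerivWithinAt (fun u => α i * Complex.exp (∫ τ in (0 : ℝ)..u, b (i + 1) τ))
        (α i * (Complex.exp (∫ τ in (0 : ℝ)..t, b (i + 1) τ) * b (i + 1) t)) s t :=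
      ((hF (i + 1) (by omega) t ht).cexp).const_mul _
    have key2 := key.congr (fun x hx => hadef1 i h0 h2 x hx) (hadef1 i h0 h2 t ht)
    refine key2.congr_deriv ?_
    rw [hadef1 i h0 h2 t ht]; ring
  -- nonvanishing of a
  have hane : ∀ n : ℕ, ∀ t ∈ s, a (n : ℤ) t ≠ 0 := by
    intro n
    induction n using Nat.strong_induction_on with
    | _ n IH =>
      intro t ht
      by_cases hcase : (n : ℤ) ≤ (p : ℤ) - 2
      · rw [hadef1 n (Int.ofNat_nonneg n) hcase t ht]
        exact mul_ne_zero (hα n (Int.ofNat_nonneg n) hcase) (Complex.exp_ne_zero _)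
      · push_neg at hcase
        rw [hadef2 n (by omega) t ht]
        apply div_ne_zero (hbne _ (by omega) t ht)
        apply Finset.prod_ne_zero_iff.mpr
        intro j hj
        have hj' : j < p - 1 := Finset.mem_range.mp hj
        have hidx : (0 : ℤ) ≤ (n : ℤ) - p + 1 + j := by omega
        obtain ⟨m, hm⟩ : ∃ m : ℕ, (m : ℤ) = (n : ℤ) - p + 1 + (j : ℤ) :=
          ⟨((n : ℤ) - p + 1 + j).toNat, Int.toNat_of_nonneg hidx⟩
        rw [← hm]
        exact IH m (by omega) t ht
  have hane' : ∀ i : ℤ, 0 ≤ i → ∀ t ∈ s, a i t ≠ 0 := by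
    intro i hi
    lift i to ℕ using hi
    exact hane i
  -- product identity
  have hprod : ∀ i : ℤ, 0 ≤ i → ∀ t ∈ s, ∏ j ∈ Finset.range p, a (i + (j : ℤ)) t = b i t := by
    intro i hi t ht
    have h1 := hadef2 (i + p - 1) (by omega) t ht
    simp only [show i + (p : ℤ) - 1 - p + 1 = i from by ring] at h1
    have hd : ∏ j ∈ Finset.range (p - 1), a (i + (j : ℤ)) t ≠ 0 :=
      Finset.prod_ne_zero_iff.mpr fun j hj => hane' _ (by omega) t ht
    have h2 : ∏ j ∈ Finset.range p, a (i + (j : ℤ)) t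
        = (∏ j ∈ Finset.range (p - 1), a (i + (j : ℤ)) t) * a (i + (p : ℤ) - 1) t := by
      rw [show p = (p - 1) + 1 from by omega, Finset.prod_range_succ]
      congr 2
      all_goals omega
    rw [h2, h1, mul_div_cancel₀ _ hd]
  -- telescoping sum identities
  have htelP : ∀ (m : ℤ) (t : ℝ),
      ∑ j ∈ Finset.Icc 1 p, b (m + 1 + (j : ℤ)) t - ∑ j ∈ Finset.Icc 1 p, b (m + (j : ℤ)) t
        = b (m + 1 + p) t - b (m + 1) t := by
    intro m t
    set G : ℕ → ℂ := fun k => b (m + 1 + (k : ℤ)) t with hG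
    have e1 : ∑ j ∈ Finset.Icc 1 p, b (m + 1 + (j : ℤ)) t = ∑ j ∈ Finset.range p, G (j + 1) := by
      rw [hIccS (fun j => b (m + 1 + (j : ℤ)) t)]
    have e2 : ∑ j ∈ Finset.Icc 1 p, b (m + (j : ℤ)) t = ∑ j ∈ Finset.range p, G j := by
      rw [hIccS (fun j => b (m + (j : ℤ)) t)]
      exact Finset.sum_congr rfl fun j _ => by simp only [hG]; congr 1; push_cast; ring
    rw [e1, e2, ← Finset.sum_sub_distrib, Finset.sum_range_sub G p]
    simp only [hG]
    congr 2 <;> push_cast <;> ring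
  have htelM : ∀ (m : ℤ) (t : ℝ),
      ∑ j ∈ Finset.Icc 1 p, b (m + 1 - (j : ℤ)) t - ∑ j ∈ Finset.Icc 1 p, b (m - (j : ℤ)) t
        = b m t - b (m - p) t := by
    intro m t
    set G : ℕ → ℂ := fun k => b (m - p + (k : ℤ)) t with hG
    have e1 : ∑ j ∈ Finset.Icc 1 p, b (m + 1 - (j : ℤ)) t = ∑ j ∈ Finset.range p, G (j + 1) := by
      rw [hIccS (fun j => b (m + 1 - (j : ℤ)) t),
        ← Finset.sum_range_reflect (fun j => G (j + 1)) p]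
      refine Finset.sum_congr rfl fun j hj => ?_
      have hj' : j < p := Finset.mem_range.mp hj
      simp only [hG]; congr 1; omega
    have e2 : ∑ j ∈ Finset.Icc 1 p, b (m - (j : ℤ)) t = ∑ j ∈ Finset.range p, G j := by
      rw [hIccS (fun j => b (m - (j : ℤ)) t), ← Finset.sum_range_reflect (fun j => G j) p]
      refine Finset.sum_congr rfl fun j hj => ?_
      have hj' : j < p := Finset.mem_range.mp hj
      simp only [hG]; congr 1; omega
    rw [e1, e2, ← Finset.sum_sub_distrib, Finset.sum_range_sub G p]
    simp only [hG]
    congr 2 <;> push_cast <;> ring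
  -- Icc products of a in terms of b
  have hIccPlusProd : ∀ i : ℤ, 0 ≤ i → ∀ t ∈ s,
      ∏ j ∈ Finset.Icc 1 p, a (i + (j : ℤ)) t = b (i + 1) t := by
    intro i hi t ht
    rw [hIccP (fun j => a (i + (j : ℤ)) t), ← hprod (i + 1) (by omega) t ht]
    exact Finset.prod_congr rfl fun j _ => by congr 1; push_cast; ring
  have hIccMinusLow : ∀ i : ℤ, i < (p : ℤ) → ∀ t : ℝ,
      ∏ j ∈ Finset.Icc 1 p, a (i - (j : ℤ)) t = 0 :=
    fun i hi t => Finset.prod_eq_zero (Finset.mem_Icc.mpr ⟨by omega, le_rfl⟩)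
      (haneg (i - p) (by omega) t)
  have hIccMinusHigh : ∀ i : ℤ, (p : ℤ) ≤ i → ∀ t ∈ s,
      ∏ j ∈ Finset.Icc 1 p, a (i - (j : ℤ)) t = b (i - p) t := by
    intro i hi t ht
    rw [hIccP (fun j => a (i - (j : ℤ)) t), ← hprod (i - p) (by omega) t ht,
      ← Finset.prod_range_reflect (fun j => a (i - (p : ℤ) + (j : ℤ)) t) p]
    refine Finset.prod_congr rfl fun j hj => ?_
    have hj' : j < p := Finset.mem_range.mp hj
    congr 1
    omega
  -- derivative of partial products of the first a's
  have hP : ∀ m : ℕ, (m : ℤ) ≤ (p : ℤ) - 1 → ∀ t ∈ s,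
      HasDerivWithinAt (fun u => ∏ j ∈ Finset.range m, a (j : ℤ) u)
        ((∏ j ∈ Finset.range m, a (j : ℤ) t) * ∑ j ∈ Finset.range m, b ((j : ℤ) + 1) t) s t := by
    intro m
    induction m with
    | zero =>
      intro _ t ht
      simp only [Finset.range_zero, Finset.prod_empty, Finset.sum_empty, mul_zero]
      exact hasDerivWithinAt_const t s 1
    | succ m IH =>
      intro hm t ht
      have h1 := IH (by omega) t ht
      have h2 := hder1 m (Int.ofNat_nonneg m) (by omega) t ht
      have h3 := h1.mul h2
      simp only [Finset.prod_range_succ, Finset.sum_range_succ]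
      refine h3.congr_deriv ?_
      push_cast
      ring
  have hrp : Finset.range p = Finset.range ((p - 1) + 1) := by
    rw [Nat.sub_add_cancel (by omega : 1 ≤ p)]
  -- the main derivative statement, in terms of b
  have hder : ∀ n : ℕ, ∀ t ∈ s, HasDerivWithinAt (a (n : ℤ))
      (a (n : ℤ) t * (b ((n : ℤ) + 1) t - b ((n : ℤ) - (p : ℤ)) t)) s t := by
    intro n
    induction n using Nat.strong_induction_on with
    | _ n IH =>
    intro t ht
    rcases lt_trichotomy ((n : ℤ)) ((p : ℤ) - 1) with hc1 | hc2 | hc3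
    · -- case 0 ≤ n ≤ p - 2
      have h := hder1 (n : ℤ) (Int.ofNat_nonneg n) (by omega) t ht
      convert h using 1
      rw [hbneg ((n : ℤ) - (p : ℤ)) (by omega) t]
      ring
    · -- case n = p - 1
      have heq : ∀ x ∈ s, a (n : ℤ) x
          = b 0 x / ∏ j ∈ Finset.range (p - 1), a (j : ℤ) x := by
        intro x hx
        have h1 := hadef2 (n : ℤ) (by omega) x hx
        simp only [show (n : ℤ) - (p : ℤ) + 1 = 0 from by omega, zero_add] at h1
        exact h1
      have hPne' : ∀ x ∈ s, (∏ j ∈ Finset.range (p - 1), a (j : ℤ) x) ≠ 0 :=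
        fun x hx => Finset.prod_ne_zero_iff.mpr fun j _ => hane j x hx
      have hPd := hP (p - 1) (by omega) t ht
      have hb0 := hbode 0 le_rfl t ht
      have hdiv := hb0.div hPd (hPne' t ht)
      have hfin := hdiv.congr (fun x hx => heq x hx) (heq t ht)
      refine hfin.congr_deriv ?_
      have hSm : ∑ j ∈ Finset.Icc 1 p, b (0 - (j : ℤ)) t = 0 :=
        Finset.sum_eq_zero fun j hj => by
          have := (Finset.mem_Icc.mp hj).1
          exact hbneg _ (by omega) t
      have hbn : b ((n : ℤ) - (p : ℤ)) t = 0 := hbneg _ (by omega) t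
      have hSp : ∑ j ∈ Finset.Icc 1 p, b (0 + (j : ℤ)) t
          = (∑ j ∈ Finset.range (p - 1), b ((j : ℤ) + 1) t) + b ((n : ℤ) + 1) t := by
        rw [hIccS (fun j => b (0 + (j : ℤ)) t)]
        rw [hrp, Finset.sum_range_succ]
        congr 1
        · exact Finset.sum_congr rfl fun j _ => by congr 1; push_cast; ring
        · congr 1; push_cast; omega
      rw [heq t ht, hbn, hSm, hSp]
      field_simp [hPne' t ht]
      ring
    · -- case n ≥ p
      have hip : (p : ℤ) ≤ (n : ℤ) := by omega
      obtain ⟨m, hm⟩ : ∃ m : ℕ, (m : ℤ) = (n : ℤ) - (p : ℤ) :=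
        ⟨((n : ℤ) - p).toNat, Int.toNat_of_nonneg (by omega)⟩
      have IH' := IH m (by omega) t ht
      rw [hm] at IH'
      have hdb1 := hbode ((n : ℤ) - (p : ℤ) + 1) (by omega) t ht
      have hdb2 := hbode ((n : ℤ) - (p : ℤ)) (by omega) t ht
      have hb2ne := hbne ((n : ℤ) - (p : ℤ)) (by omega) t ht
      have hcomb := (IH'.mul hdb1).div hdb2 hb2ne
      have heq : ∀ x ∈ s, a (n : ℤ) x = a ((n : ℤ) - (p : ℤ)) x
          * b ((n : ℤ) - (p : ℤ) + 1) x / b ((n : ℤ) - (p : ℤ)) x := by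
        intro x hx
        have h1 := hadef2 (n : ℤ) (by omega) x hx
        have h2 := hadef2 ((n : ℤ) - 1) (by omega) x hx
        simp only [show (n : ℤ) - 1 - (p : ℤ) + 1 = (n : ℤ) - (p : ℤ) from by ring] at h2
        have hD1 : (∏ j ∈ Finset.range (p - 1), a ((n : ℤ) - (p : ℤ) + 1 + (j : ℤ)) x) ≠ 0 :=
          Finset.prod_ne_zero_iff.mpr fun j _ => hane' _ (by omega) x hx
        have hD0 : (∏ j ∈ Finset.range (p - 1), a ((n : ℤ) - (p : ℤ) + (j : ℤ)) x) ≠ 0 :=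
          Finset.prod_ne_zero_iff.mpr fun j hj => by
            have hj' : j < p - 1 := Finset.mem_range.mp hj
            exact hane' _ (by omega) x hx
        have ha1 : a ((n : ℤ) - 1) x ≠ 0 := hane' _ (by omega) x hx
        have hkey : (∏ j ∈ Finset.range (p - 1), a ((n : ℤ) - (p : ℤ) + 1 + (j : ℤ)) x)
              * a ((n : ℤ) - (p : ℤ)) x
            = (∏ j ∈ Finset.range (p - 1), a ((n : ℤ) - (p : ℤ) + (j : ℤ)) x)
              * a ((n : ℤ) - 1) x := by
          have l1 : (∏ j ∈ Finset.range (p - 1), a ((n : ℤ) - (p : ℤ) + 1 + (j : ℤ)) x)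
                * a ((n : ℤ) - (p : ℤ)) x
              = ∏ j ∈ Finset.range p, a ((n : ℤ) - (p : ℤ) + (j : ℤ)) x := by
            rw [hrp, Finset.prod_range_succ' (fun j => a ((n : ℤ) - (p : ℤ) + (j : ℤ)) x) (p - 1)]
            congr 1
            · exact Finset.prod_congr rfl fun j _ => by congr 1; push_cast; ring
            · congr 1; push_cast; ring
          have l2 : (∏ j ∈ Finset.range (p - 1), a ((n : ℤ) - (p : ℤ) + (j : ℤ)) x)
                * a ((n : ℤ) - 1) x
              = ∏ j ∈ Finset.range p, a ((n : ℤ) - (p : ℤ) + (j : ℤ)) x := by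
            rw [hrp, Finset.prod_range_succ]
            congr 1
            congr 1
            omega
          rw [l1, l2]
        have hb2 : b ((n : ℤ) - (p : ℤ)) x
            = a ((n : ℤ) - 1) x * ∏ j ∈ Finset.range (p - 1), a ((n : ℤ) - (p : ℤ) + (j : ℤ)) x := by
          rw [h2]; field_simp
        rw [h1, hb2, div_eq_div_iff hD1 (by exact mul_ne_zero ha1 hD0)]
        linear_combination (- b ((n : ℤ) - (p : ℤ) + 1) x) * hkey
      have hfin := hcomb.congr (fun x hx => heq x hx) (heq t ht)
      refine hfin.congr_deriv ?_
      have ht1 := htelP ((n : ℤ) - (p : ℤ)) t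
      have ht2 := htelM ((n : ℤ) - (p : ℤ)) t
      rw [show (n : ℤ) - (p : ℤ) + 1 + (p : ℤ) = (n : ℤ) + 1 from by ring] at ht1
      rw [heq t ht, eq_add_of_sub_eq ht1, eq_add_of_sub_eq ht2]
      simp only [Pi.mul_apply]
      field_simp
      ring
  -- conclusion
  intro i hi
  lift i to ℕ using hi
  refine ⟨hane i, hprod i (Int.ofNat_nonneg i), ?_⟩
  intro t ht
  have h := hder i t ht
  rw [hIccPlusProd i (Int.ofNat_nonneg i) t ht]
  rcases le_or_gt ((p : ℤ)) ((i : ℤ)) with hc | hc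
  · rw [hIccMinusHigh i hc t ht]
    exact h
  · rw [hIccMinusLow i hc t]
    rw [hbneg ((i : ℤ) - (p : ℤ)) (by omega) t] at h
    exact h
end

section
/- Let p ≥ 1 and let (a_i)_{i≥0} be differentiable functions a_i : [0,T) → ℂ with a_i(t) ≠ 0 for all i,t, satisfying the semi-infinite lattice a_i' = a_i(∏_{j=1}^p a_{i+j} − ∏_{j=1}^p a_{i−j}) (with a_l ≡ 0 for l < 0). Let S_k^m(t) denote the moments of the matrix L1(t) built from (a_i(t)). Then for all k ≥ 0 and 1 ≤ m ≤ p one has the evolution equation (S_k^m)'(t) = S_{k+p+1}^m(t) − S_{p+1}^1(t)·S_k^m(t) for all t ∈ [0,T). -/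
open scoped BigOperators

noncomputable section

lemma L1apply_eq (p : ℕ) (hp : 1 ≤ p) (a v : ℕ → ℂ) (j : ℕ) :
    L1apply p a v j = v (j + p) + (if 1 ≤ j then a (j - 1) * v (j - 1) else 0) := by
  unfold L1apply L1entry
  have hsplit : ∀ k ∈ Finset.range (j + p + 1),
      (if k = j + p then (1:ℂ) else if j = k + 1 then a k else 0) * v k
      = (if k = j + p then v (j+p) else 0)
        + (if 1 ≤ j then (if k = j - 1 then a (j-1) * v (j-1) else 0) else 0) := by
    intro k _
    by_cases h1 : k = j + p
    · subst h1
      have h2 : ¬ (j + p = j - 1) := by omega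
      simp [h2]
    · by_cases h2 : 1 ≤ j
      · by_cases h3 : k = j - 1
        · subst h3
          have hje : j = (j - 1) + 1 := by omega
          rw [if_pos hje, if_neg h1, if_pos h2, if_pos rfl, if_neg h1, zero_add]
        · have : ¬ (j = k + 1) := by omega
          simp [h1, h2, h3, this]
      · have : ¬ (j = k + 1) := by omega
        simp [h1, h2, this]
  rw [Finset.sum_congr rfl hsplit, Finset.sum_add_distrib, Finset.sum_ite_eq']
  by_cases h2 : 1 ≤ j
  · simp only [if_pos h2]
    rw [Finset.sum_ite_eq']
    have : j + p ∈ Finset.range (j+p+1) := by simp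
    have h4 : j - 1 ∈ Finset.range (j+p+1) := by simp; omega
    simp [this, h4]
  · simp only [if_neg h2]
    have : j + p ∈ Finset.range (j+p+1) := by simp
    simp [this]

lemma iter_small (p : ℕ) (hp : 1 ≤ p) (a : ℕ → ℂ) : ∀ k : ℕ,
    (k ≤ p → (L1apply p a)^[k] (stdBasis 0) 0 = if k = 0 then 1 else 0) ∧
    (k ≤ p + 1 → ∀ j, 1 ≤ j → (L1apply p a)^[k] (stdBasis 0) j
      = if j = k then ∏ i ∈ Finset.range k, a i else 0) := by
  intro k
  induction k with
  | zero =>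
    constructor
    · intro _; simp [stdBasis]
    · intro _ j hj
      have : ¬ (j = 0) := by omega
      simp [stdBasis, this]
  | succ k IH =>
    constructor
    · intro hk
      rw [Function.iterate_succ_apply', L1apply_eq p hp]
      simp only [if_neg (by omega : ¬ (1:ℕ) ≤ 0), add_zero, zero_add]
      rw [IH.2 (by omega) p (by omega)]
      have h1 : ¬ (p = k) := by omega
      have h2 : ¬ (k + 1 = 0) := by omega
      simp [h1, h2]
    · intro hk j hj
      rw [Function.iterate_succ_apply', L1apply_eq p hp]
      rw [if_pos hj, IH.2 (by omega) (j + p) (by omega)]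
      have h1 : ¬ (j + p = k) := by omega
      rw [if_neg h1, zero_add]
      by_cases hj1 : j = 1
      · subst hj1
        simp only [Nat.sub_self]  -- 1 - 1 = 0
        rw [IH.1 (by omega)]
        by_cases hk0 : k = 0
        · subst hk0; simp
        · have : ¬ (1 = k + 1) := by omega
          simp [hk0, this]
      · have hj2 : 1 ≤ j - 1 := by omega
        rw [IH.2 (by omega) (j-1) hj2]
        by_cases hje : j = k + 1
        · have : j - 1 = k := by omega
          rw [if_pos this, if_pos hje, this, Finset.prod_range_succ]
          ring
        · have h3 : ¬ (j - 1 = k) := by omega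
          rw [if_neg h3, if_neg hje, mul_zero]

def Pr (p : ℕ) (a : ℤ → ℝ → ℂ) (m : ℤ) (s : ℝ) : ℂ :=
  ∏ i ∈ Finset.range (p + 1), a (m + (i : ℤ)) s

lemma Pr_neg (p : ℕ) (a : ℤ → ℝ → ℂ) (haneg : ∀ l : ℤ, l < 0 → ∀ t : ℝ, a l t = 0)
    {m : ℤ} (hm : m < 0) (s : ℝ) : Pr p a m s = 0 := by
  apply Finset.prod_eq_zero (Finset.mem_range.mpr (by omega : 0 < p + 1))
  simpa using haneg m hm s

lemma prod_up (p : ℕ) (a : ℤ → ℝ → ℂ) (m : ℤ) (s : ℝ) :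
    a m s * ∏ i ∈ Finset.Icc 1 p, a (m + (i : ℤ)) s = Pr p a m s := by
  unfold Pr
  rw [Finset.prod_range_succ' (fun i => a (m + (i:ℤ)) s) p]
  have h1 : ∏ i ∈ Finset.Icc 1 p, a (m + (i : ℤ)) s
      = ∏ i ∈ Finset.range p, a (m + ((i+1 : ℕ) : ℤ)) s := by
    rw [← Finset.Ico_add_one_right_eq_Icc, Finset.prod_Ico_eq_prod_range]
    apply Finset.prod_congr (by congr 1)
    intro i _
    have : m + ((1 + i : ℕ) : ℤ) = m + ((i + 1 : ℕ) : ℤ) := by push_cast; ring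
    rw [this]
  rw [h1]
  have : m + ((0:ℕ):ℤ) = m := by push_cast; ring
  rw [this]
  ring

lemma prod_down (p : ℕ) (a : ℤ → ℝ → ℂ) (m : ℤ) (s : ℝ) :
    a m s * ∏ i ∈ Finset.Icc 1 p, a (m - (i : ℤ)) s = Pr p a (m - p) s := by
  unfold Pr
  rw [Finset.prod_range_succ (fun i => a (m - (p:ℤ) + (i:ℤ)) s) p]
  have h1 : ∏ i ∈ Finset.Icc 1 p, a (m - (i : ℤ)) s
      = ∏ i ∈ Finset.range p, a (m - (p:ℤ) + (i:ℤ)) s := by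
    apply Finset.prod_nbij' (fun i => p - i) (fun i => p - i)
    · intro i hi; simp only [Finset.mem_Icc] at hi; simp only [Finset.mem_range]; omega
    · intro i hi; simp only [Finset.mem_range] at hi; simp only [Finset.mem_Icc]; omega
    · intro i hi; simp only [Finset.mem_Icc] at hi; omega
    · intro i hi; simp only [Finset.mem_range] at hi; omega
    · intro i hi
      simp only [Finset.mem_Icc] at hi
      congr 1
      have : ((p - i : ℕ) : ℤ) = (p : ℤ) - i := by omega
      rw [this]; ring
  rw [h1]
  have : m - (p:ℤ) + (p:ℤ) = m := by ring
  rw [this]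
  ring

lemma Pr_shift (p : ℕ) (a : ℤ → ℝ → ℂ) (m : ℤ) (s : ℝ) :
    a m s * Pr p a (m + 1) s = a (m + (p:ℤ) + 1) s * Pr p a m s := by
  unfold Pr
  have h1 : ∏ i ∈ Finset.range (p + 1), a (m + 1 + (i:ℤ)) s
      = ∏ i ∈ Finset.range (p + 1), a (m + ((i+1 : ℕ):ℤ)) s := by
    apply Finset.prod_congr rfl
    intro i _
    have : m + 1 + (i:ℤ) = m + ((i+1 : ℕ):ℤ) := by push_cast; ring
    rw [this]
  rw [h1]
  have h2 : a m s * ∏ i ∈ Finset.range (p + 1), a (m + ((i+1 : ℕ):ℤ)) s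
      = ∏ i ∈ Finset.range (p + 2), a (m + (i:ℤ)) s := by
    rw [Finset.prod_range_succ' (fun i => a (m + (i:ℤ)) s) (p+1)]
    have : m + ((0:ℕ):ℤ) = m := by push_cast; ring
    rw [this]
    ring
  rw [h2, Finset.prod_range_succ (fun i => a (m + (i:ℤ)) s) (p+1)]
  have : m + ((p+1 : ℕ):ℤ) = m + (p:ℤ) + 1 := by push_cast; ring
  rw [this]
  ring

def Fm (p : ℕ) (a : ℤ → ℝ → ℂ) (k j : ℕ) (s : ℝ) : ℂ :=
  (L1apply p (fun n : ℕ => a (n : ℤ) s))^[k] (stdBasis 0) j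

lemma Fm_succ (p : ℕ) (hp : 1 ≤ p) (a : ℤ → ℝ → ℂ) (k j : ℕ) (s : ℝ) :
    Fm p a (k+1) j s = Fm p a k (j+p) s
      + (if 1 ≤ j then a (((j-1 : ℕ)) : ℤ) s * Fm p a k (j-1) s else 0) := by
  unfold Fm
  rw [Function.iterate_succ_apply', L1apply_eq p hp]

lemma master (p : ℕ) (hp : 1 ≤ p) (T : ℝ)
    (a : ℤ → ℝ → ℂ)
    (haneg : ∀ l : ℤ, l < 0 → ∀ t : ℝ, a l t = 0)
    (haode : ∀ i : ℤ, 0 ≤ i → ∀ t ∈ Set.Ico (0 : ℝ) T, HasDerivWithinAt (a i)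
      (a i t * (∏ j ∈ Finset.Icc 1 p, a (i + (j : ℤ)) t -
        ∏ j ∈ Finset.Icc 1 p, a (i - (j : ℤ)) t)) (Set.Ico (0 : ℝ) T) t) :
    ∀ k j : ℕ, ∀ t ∈ Set.Ico (0 : ℝ) T,
      HasDerivWithinAt (fun s => Fm p a k j s)
        (Fm p a (k+p+1) j t - Fm p a (p+1) 0 t * Fm p a k j t
          - Pr p a ((j : ℤ) - ((p:ℤ)+1)) t * Fm p a k (j - (p+1)) t)
        (Set.Ico (0 : ℝ) T) t := by
  intro k
  induction k with
  | zero =>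
    intro j t ht
    have hconst : (fun s => Fm p a 0 j s) = fun _ => stdBasis 0 j := by
      funext s; simp [Fm]
    rw [hconst]
    have hval : Fm p a (0+p+1) j t - Fm p a (p+1) 0 t * Fm p a 0 j t
        - Pr p a ((j : ℤ) - ((p:ℤ)+1)) t * Fm p a 0 (j - (p+1)) t = 0 := by
      have h0 : ∀ j', Fm p a 0 j' t = stdBasis 0 j' := by intro j'; simp [Fm]
      rw [h0, h0]
      rcases Nat.eq_zero_or_pos j with hj | hj
      · subst hj
        rw [Pr_neg p a haneg (by omega) t]
        simp [stdBasis]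
      · have hsmall := (iter_small p hp (fun n : ℕ => a (n:ℤ) t) (p+1)).2 le_rfl j hj
        have hF : Fm p a (0+p+1) j t
            = if j = p + 1 then ∏ i ∈ Finset.range (p+1), a ((i:ℕ) : ℤ) t else 0 := by
          rw [show 0+p+1 = p+1 from by omega]
          exact hsmall
        rw [hF]
        have hjz : stdBasis 0 j = 0 := by simp [stdBasis]; omega
        rw [hjz, mul_zero, sub_zero]
        rcases lt_trichotomy j (p+1) with h | h | h
        · rw [if_neg (by omega), Pr_neg p a haneg (by omega) t]
          ring
        · rw [if_pos h]
          have hsub : j - (p+1) = 0 := by omega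
          have hPr : Pr p a ((j : ℤ) - ((p:ℤ)+1)) t
              = ∏ i ∈ Finset.range (p+1), a ((i:ℕ) : ℤ) t := by
            unfold Pr
            apply Finset.prod_congr rfl
            intro i _
            congr 1
            omega
          rw [hsub, hPr]
          simp [stdBasis]
        · rw [if_neg (by omega)]
          have : stdBasis 0 (j - (p+1)) = 0 := by simp [stdBasis]; omega
          rw [this, mul_zero]
          ring
    rw [hval]
    exact hasDerivWithinAt_const t _ _
  | succ k IH =>
    intro j t ht
    rcases Nat.eq_zero_or_pos j with hj | hj
    · -- j = 0 case
      subst hj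
      have hd := IH p t ht
      have hfun : ∀ s, Fm p a (k+1) 0 s = Fm p a k p s := by
        intro s
        rw [Fm_succ p hp, if_neg (by omega)]
        simp
      have hval : Fm p a (k+1+p+1) 0 t - Fm p a (p+1) 0 t * Fm p a (k+1) 0 t
            - Pr p a ((0 : ℤ) - ((p:ℤ)+1)) t * Fm p a (k+1) (0 - (p+1)) t
          = Fm p a (k+p+1) p t - Fm p a (p+1) 0 t * Fm p a k p t
            - Pr p a ((p : ℤ) - ((p:ℤ)+1)) t * Fm p a k (p - (p+1)) t := by
        have e1 : k+1+p+1 = (k+p+1)+1 := by omega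
        rw [e1, Fm_succ p hp a (k+p+1) 0 t, if_neg (by omega : ¬ (1:ℕ) ≤ 0),
            Fm_succ p hp a k 0 t, if_neg (by omega : ¬ (1:ℕ) ≤ 0)]
        rw [Pr_neg p a haneg (by omega : (0 : ℤ) - ((p:ℤ)+1) < 0) t,
            Pr_neg p a haneg (by omega : (p : ℤ) - ((p:ℤ)+1) < 0) t]
        simp
      rw [show ((0:ℕ):ℤ) = (0:ℤ) from rfl, hval]
      exact hd.congr (fun s _ => hfun s) (hfun t)
    · -- j = m + 1
      obtain ⟨m, rfl⟩ : ∃ m, j = m + 1 := ⟨j - 1, by omega⟩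
      have hd1 := IH (m+1+p) t ht
      have hd2 := IH m t ht
      have hda := haode (m : ℤ) (by positivity) t ht
      have key := hd1.add (hda.mul hd2)
      have hfun : ∀ s, Fm p a (k+1) (m+1) s
          = Fm p a k (m+1+p) s + a (m : ℤ) s * Fm p a k m s := by
        intro s
        rw [Fm_succ p hp, if_pos (by omega)]
        simp
      refine HasDerivWithinAt.congr_deriv
        (key.congr (fun s _ => hfun s) (hfun t)) ?_
      -- value identity
      have e1 : (m+1+p) - (p+1) = m := by omega
      have e2 : ((m+1+p : ℕ) : ℤ) - ((p:ℤ)+1) = (m : ℤ) := by push_cast; ring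
      have e3 : ((m+1 : ℕ) : ℤ) - ((p:ℤ)+1) = (m : ℤ) - (p:ℤ) := by push_cast; ring
      have e4 : k+1+p+1 = (k+p+1)+1 := by omega
      rw [e1, e2, e4, e3]
      rw [Fm_succ p hp a (k+p+1) (m+1) t, if_pos (by omega),
          Fm_succ p hp a k (m+1) t, if_pos (by omega)]
      simp only [Nat.add_sub_cancel]
      -- A' rewriting
      rw [mul_sub (a (m:ℤ) t), prod_up p a (m:ℤ) t, prod_down p a (m:ℤ) t]
      rcases lt_trichotomy m p with hm | hm | hm
      · -- m < p
        rw [Pr_neg p a haneg (by omega : (m:ℤ) - (p:ℤ) < 0) t,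
            Pr_neg p a haneg (by omega : (m:ℤ) - ((p:ℤ)+1) < 0) t]
        ring
      · -- m = p
        rw [Pr_neg p a haneg (by omega : (m:ℤ) - ((p:ℤ)+1) < 0) t]
        have e5 : (m+1) - (p+1) = 0 := by omega
        rw [e5, Fm_succ p hp a k 0 t, if_neg (by omega : ¬ (1:ℕ) ≤ 0)]
        rw [show (0:ℕ) + p = m from by omega]
        have e6 : (m:ℤ) - (p:ℤ) = (m:ℤ) - (m:ℤ) := by omega
        ring
      · -- m > p
        have e5 : (m+1) - (p+1) = m - p := by omega
        rw [e5, Fm_succ p hp a k (m-p) t, if_pos (by omega)]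
        have e6 : m - p + p = m := by omega
        have e7 : m - p - 1 = m - (p+1) := by omega
        rw [e6, e7]
        have hshift := Pr_shift p a ((m:ℤ) - ((p:ℤ)+1)) t
        have e8 : (m:ℤ) - ((p:ℤ)+1) + 1 = (m:ℤ) - (p:ℤ) := by ring
        have e9 : (m:ℤ) - ((p:ℤ)+1) + (p:ℤ) + 1 = (m:ℤ) := by ring
        have e10 : ((m - (p+1) : ℕ) : ℤ) = (m:ℤ) - ((p:ℤ)+1) := by omega
        rw [e8, e9] at hshift
        rw [e10]
        linear_combination (Fm p a k (m - (p+1)) t) * hshift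

/-- Evolution of the moments of `L1(t)` under the semi-infinite Bogoyavlensky lattice:
`(S_k^m)' = S_{k+p+1}^m − S_{p+1}^1 · S_k^m`. -/
theorem momL1_evolution (p : ℕ) (hp : 1 ≤ p) (T : ℝ) (hT : 0 < T)
    (a : ℤ → ℝ → ℂ)
    (haneg : ∀ l : ℤ, l < 0 → ∀ t : ℝ, a l t = 0)
    (hane : ∀ i : ℤ, 0 ≤ i → ∀ t ∈ Set.Ico (0 : ℝ) T, a i t ≠ 0)
    (haode : ∀ i : ℤ, 0 ≤ i → ∀ t ∈ Set.Ico (0 : ℝ) T, HasDerivWithinAt (a i)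
      (a i t * (∏ j ∈ Finset.Icc 1 p, a (i + (j : ℤ)) t -
        ∏ j ∈ Finset.Icc 1 p, a (i - (j : ℤ)) t)) (Set.Ico (0 : ℝ) T) t) :
    ∀ k m : ℕ, 1 ≤ m → m ≤ p → ∀ t ∈ Set.Ico (0 : ℝ) T,
      HasDerivWithinAt (fun s => momL1 p (fun n : ℕ => a (n : ℤ) s) k m)
        (momL1 p (fun n : ℕ => a (n : ℤ) t) (k + p + 1) m -
          momL1 p (fun n : ℕ => a (n : ℤ) t) (p + 1) 1 *
            momL1 p (fun n : ℕ => a (n : ℤ) t) k m)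
        (Set.Ico (0 : ℝ) T) t := by
  intro k m hm1 hmp t ht
  have h := master p hp T a haneg haode k (m-1) t ht
  have hPr : Pr p a (((m-1 : ℕ) : ℤ) - ((p:ℤ)+1)) t = 0 :=
    Pr_neg p a haneg (by omega) t
  rw [hPr, zero_mul, sub_zero] at h
  exact h
end
end

section
/- Let p ≥ 1 and let (b_i)_{i≥0} be differentiable functions b_i : [0,T) → ℂ with b_i(t) ≠ 0 for all i,t, satisfying the semi-infinite lattice b_i' = b_i(Σ_{j=1}^p b_{i+j} − Σ_{j=1}^p b_{i−j}) (with b_l ≡ 0 for l < 0). Let S̃_k^n(t) denote the moments of the matrix L2(t) built from (b_i(t)). Then for all k ≥ 0 and 1 ≤ n ≤ p one has the evolution equation (S̃_k^n)'(t) = S̃_{k+p+1}^n(t) − S̃_{p+n}^n(t)·S̃_k^n(t) for all t ∈ [0,T). -/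
open scoped BigOperators

noncomputable section

namespace MomAux

/-- `L` in a convenient form, using `β : ℤ → ℂ` vanishing on negatives. -/
def Lop (p : ℕ) (β : ℤ → ℂ) (v : ℕ → ℂ) : ℕ → ℂ :=
  fun i => v (i + 1) + β ((i : ℤ) - (p : ℤ)) * v (i - p)

/-- Diagonal entries of `L^{p+1}`. -/
def dd (p : ℕ) (β : ℤ → ℂ) (i : ℕ) : ℂ :=
  ∑ j ∈ Finset.range (p + 1), β ((i : ℤ) - (j : ℤ))

/-- The (diagonal + upper) part `M` of `L^{p+1}`. -/
def Mop (p : ℕ) (β : ℤ → ℂ) (v : ℕ → ℂ) : ℕ → ℂ :=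
  fun i => dd p β i * v i + v (i + p + 1)

/-- The right-hand side of the lattice ODE. -/
def bd (p : ℕ) (β : ℤ → ℂ) (l : ℤ) : ℂ :=
  β l * (∑ j ∈ Finset.Icc 1 p, β (l + (j : ℤ)) - ∑ j ∈ Finset.Icc 1 p, β (l - (j : ℤ)))

theorem L2apply_eq (p : ℕ) (β : ℤ → ℂ) (hneg : ∀ l : ℤ, l < 0 → β l = 0) :
    L2apply p (fun m : ℕ => β (m : ℤ)) = Lop p β := by
  funext v i
  have hsum : ∀ k ∈ Finset.range (i + 2),
      L2entry p (fun m : ℕ => β (m : ℤ)) i k * v k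
        = (if k = i + 1 then v k else 0) + (if i = k + p then β (k : ℤ) * v k else 0) := by
    intro k _
    simp only [L2entry]
    split_ifs <;> first | (exfalso; omega) | ring
  show (∑ k ∈ Finset.range (i + 2), L2entry p (fun m : ℕ => β (m : ℤ)) i k * v k) = _
  rw [Finset.sum_congr rfl hsum, Finset.sum_add_distrib, Finset.sum_ite_eq']
  have h1 : i + 1 ∈ Finset.range (i + 2) := by simp
  rw [if_pos h1]
  by_cases hpi : p ≤ i
  · have h2 : (∑ k ∈ Finset.range (i + 2), if i = k + p then β (k : ℤ) * v k else 0)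
        = β ((i - p : ℕ) : ℤ) * v (i - p) := by
      rw [Finset.sum_eq_single (i - p)]
      · rw [if_pos (by omega)]
      · intro a _ ha; rw [if_neg (by omega)]
      · intro h; exact absurd (Finset.mem_range.mpr (by omega)) h
    rw [h2, Lop]
    have : ((i - p : ℕ) : ℤ) = (i : ℤ) - (p : ℤ) := by omega
    rw [this]
  · have h2 : (∑ k ∈ Finset.range (i + 2), if i = k + p then β (k : ℤ) * v k else 0) = 0 := by
      apply Finset.sum_eq_zero; intro a _; rw [if_neg (by omega)]
    rw [h2, Lop, hneg ((i : ℤ) - (p : ℤ)) (by omega), zero_mul]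

theorem momL2_eq (p : ℕ) (β : ℤ → ℂ) (hneg : ∀ l : ℤ, l < 0 → β l = 0) (k n : ℕ) :
    momL2 p (fun m : ℕ => β (m : ℤ)) k n = (Lop p β)^[k] (stdBasis (n - 1)) 0 := by
  rw [momL2, L2apply_eq p β hneg]

theorem Lop_lin (p : ℕ) (β : ℤ → ℂ) (u w : ℕ → ℂ) (c : ℂ) :
    Lop p β (fun j => u j + c * w j) = fun j => Lop p β u j + c * Lop p β w j := by
  funext i; simp only [Lop]; ring

theorem Lop_iter_lin (p : ℕ) (β : ℤ → ℂ) (m : ℕ) (u w : ℕ → ℂ) (c : ℂ) :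
    (Lop p β)^[m] (fun j => u j + c * w j)
      = fun j => (Lop p β)^[m] u j + c * (Lop p β)^[m] w j := by
  induction m generalizing u w with
  | zero => simp
  | succ m ih =>
    rw [Function.iterate_succ_apply, Function.iterate_succ_apply, Function.iterate_succ_apply,
      Lop_lin, ih]

theorem Lop_iter_smul (p : ℕ) (β : ℤ → ℂ) (m : ℕ) (w : ℕ → ℂ) (c : ℂ) :
    (Lop p β)^[m] (fun j => c * w j) = fun j => c * (Lop p β)^[m] w j := by
  have h0 : (Lop p β)^[m] (fun _ => (0 : ℂ)) = fun _ => (0 : ℂ) := by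
    induction m with
    | zero => simp
    | succ m ih => rw [Function.iterate_succ_apply]
                   have : Lop p β (fun _ => (0 : ℂ)) = fun _ => (0 : ℂ) := by
                     funext i; simp [Lop]
                   rw [this, ih]
  have := Lop_iter_lin p β m (fun _ => (0 : ℂ)) w c
  simp only [zero_add] at this
  rw [this, h0]
  funext j; simp

/-- telescoping for `dd`. -/
theorem dd_succ (p : ℕ) (β : ℤ → ℂ) (i : ℕ) :
    dd p β (i + 1) = dd p β i + β ((i : ℤ) + 1) - β ((i : ℤ) - (p : ℤ)) := by
  have h1 : dd p β (i + 1)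
      = (∑ j ∈ Finset.range p, β ((i : ℤ) - (j : ℤ))) + β ((i : ℤ) + 1) := by
    rw [dd, Finset.sum_range_succ']
    congr 1
    apply Finset.sum_congr rfl; intro j _; congr 1; omega
  have h2 : dd p β i
      = (∑ j ∈ Finset.range p, β ((i : ℤ) - (j : ℤ))) + β ((i : ℤ) - (p : ℤ)) := by
    rw [dd, Finset.sum_range_succ]
  rw [h1, h2]; ring

theorem sum_shift_upper (p : ℕ) (β : ℤ → ℂ) (a : ℤ) :
    ∑ j ∈ Finset.range (p + 1), β (a + (p : ℤ) - (j : ℤ))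
      = β a + ∑ j ∈ Finset.Icc 1 p, β (a + (j : ℤ)) := by
  have hrefl := Finset.sum_range_reflect (fun j => β (a + (j : ℤ))) (p + 1)
  have h0 : ∑ j ∈ Finset.range (p + 1), β (a + (p : ℤ) - (j : ℤ))
      = ∑ j ∈ Finset.range (p + 1), β (a + ((p + 1 - 1 - j : ℕ) : ℤ)) := by
    apply Finset.sum_congr rfl
    intro j hj; rw [Finset.mem_range] at hj; congr 1; omega
  rw [h0, hrefl, Finset.sum_range_succ']
  have h1 : ∑ j ∈ Finset.Icc 1 p, β (a + (j : ℤ))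
      = ∑ j ∈ Finset.range p, β (a + ((j + 1 : ℕ) : ℤ)) := by
    rw [← Finset.Ico_add_one_right_eq_Icc, Finset.sum_Ico_eq_sum_range]
    apply Finset.sum_congr (by norm_num)
    intro j _; congr 1; omega
  rw [h1]; norm_num; ring

theorem sum_shift_lower (p : ℕ) (β : ℤ → ℂ) (a : ℤ) :
    ∑ j ∈ Finset.range (p + 1), β (a - (j : ℤ))
      = β a + ∑ j ∈ Finset.Icc 1 p, β (a - (j : ℤ)) := by
  rw [Finset.sum_range_succ']
  have h1 : ∑ j ∈ Finset.Icc 1 p, β (a - (j : ℤ))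
      = ∑ j ∈ Finset.range p, β (a - ((j + 1 : ℕ) : ℤ)) := by
    rw [← Finset.Ico_add_one_right_eq_Icc, Finset.sum_Ico_eq_sum_range]
    apply Finset.sum_congr (by norm_num)
    intro j _; congr 1; omega
  rw [h1]; norm_num; ring

/-- the Lax identity `M L = L M + L'`. -/
theorem lax (p : ℕ) (β : ℤ → ℂ) (hneg : ∀ l : ℤ, l < 0 → β l = 0) (v : ℕ → ℂ) (i : ℕ) :
    Mop p β (Lop p β v) i
      = Lop p β (Mop p β v) i + bd p β ((i : ℤ) - (p : ℤ)) * v (i - p) := by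
  by_cases hpi : p ≤ i
  · obtain ⟨m, rfl⟩ : ∃ m, i = m + p := ⟨i - p, by omega⟩
    simp only [Mop, Lop, bd]
    rw [show m + p - p = m from by omega]
    rw [show m + p + p + 1 + 1 = m + p + 1 + p + 1 from by omega]
    rw [show m + p + p + 1 - p = m + p + 1 from by omega]
    rw [show ((m + p : ℕ) : ℤ) - (p : ℤ) = (m : ℤ) from by omega]
    rw [show ((m + p + p + 1 : ℕ) : ℤ) - (p : ℤ) = ((m + p : ℕ) : ℤ) + 1 from by omega]
    rw [dd_succ p β (m + p)]
    rw [show ((m + p : ℕ) : ℤ) - (p : ℤ) = (m : ℤ) from by omega]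
    have hdd1 : dd p β (m + p) = β (m : ℤ) + ∑ j ∈ Finset.Icc 1 p, β ((m : ℤ) + (j : ℤ)) := by
      rw [dd]
      rw [Finset.sum_congr rfl (fun j _ => by
        rw [show ((m + p : ℕ) : ℤ) - (j : ℤ) = (m : ℤ) + (p : ℤ) - (j : ℤ) from by omega])]
      exact sum_shift_upper p β (m : ℤ)
    have hdd2 : dd p β m = β (m : ℤ) + ∑ j ∈ Finset.Icc 1 p, β ((m : ℤ) - (j : ℤ)) := by
      rw [dd]; exact sum_shift_lower p β (m : ℤ)
    rw [hdd1, hdd2]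
    ring
  · simp only [Mop, Lop, bd]
    rw [hneg ((i : ℤ) - (p : ℤ)) (by omega)]
    rw [show i + p + 1 + 1 = i + 1 + p + 1 from by omega]
    rw [show i + p + 1 - p = i + 1 from by omega]
    rw [show ((i + p + 1 : ℕ) : ℤ) - (p : ℤ) = (i : ℤ) + 1 from by omega]
    rw [dd_succ p β i, hneg ((i : ℤ) - (p : ℤ)) (by omega)]
    ring

theorem iter_p1_zero (p : ℕ) (β : ℤ → ℂ) (hneg : ∀ l : ℤ, l < 0 → β l = 0) (w : ℕ → ℂ) :
    (Lop p β)^[p + 1] w 0 = β 0 * w 0 + w (p + 1) := by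
  have key : ∀ j, j ≤ p → (Lop p β)^[j + 1] w (p - j) = β 0 * w 0 + w (p + 1) := by
    intro j
    induction j with
    | zero =>
      intro _
      rw [Function.iterate_one]
      show w (p + 1) + β ((p : ℤ) - (p : ℤ)) * w (p - p) = _
      rw [show (p : ℤ) - (p : ℤ) = 0 from by ring, Nat.sub_self]
      ring
    | succ j ih =>
      intro hj
      rw [Function.iterate_succ_apply']
      show (Lop p β)^[j + 1] w (p - (j + 1) + 1)
          + β ((↑(p - (j + 1)) : ℤ) - (p : ℤ)) * (Lop p β)^[j + 1] w (p - (j + 1) - p) = _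
      rw [show p - (j + 1) + 1 = p - j from by omega,
        hneg ((↑(p - (j + 1)) : ℤ) - (p : ℤ)) (by omega), ih (by omega)]
      ring
  have := key p (le_refl p)
  rwa [Nat.sub_self] at this

theorem iter_support (p : ℕ) (β : ℤ → ℂ) (v : ℕ → ℂ) (a : ℕ)
    (h : ∀ i, i < a → v i = 0) :
    ∀ j, j ≤ a → (∀ i, i < a - j → (Lop p β)^[j] v i = 0) ∧ (Lop p β)^[j] v (a - j) = v a := by
  intro j
  induction j with
  | zero =>
    intro _
    constructor
    · simpa using h
    · simp
  | succ j ih =>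
    intro hj
    obtain ⟨ih1, ih2⟩ := ih (by omega)
    constructor
    · intro i hi
      rw [Function.iterate_succ_apply']
      show (Lop p β)^[j] v (i + 1) + β ((i : ℤ) - (p : ℤ)) * (Lop p β)^[j] v (i - p) = 0
      rw [ih1 (i + 1) (by omega), ih1 (i - p) (by omega)]
      ring
    · rw [Function.iterate_succ_apply']
      show (Lop p β)^[j] v (a - (j + 1) + 1)
          + β ((↑(a - (j + 1)) : ℤ) - (p : ℤ)) * (Lop p β)^[j] v (a - (j + 1) - p) = v a
      rw [show a - (j + 1) + 1 = a - j from by omega, ih2, ih1 (a - (j + 1) - p) (by omega)]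
      ring

theorem iter_diag (p : ℕ) (β : ℤ → ℂ) (hneg : ∀ l : ℤ, l < 0 → β l = 0) (m : ℕ) :
    (Lop p β)^[m] (stdBasis m) 0 = 1 ∧
      (Lop p β)^[m] (stdBasis m) (p + 1) = ∑ j ∈ Finset.range m, β ((j : ℤ) + 1) := by
  induction m with
  | zero =>
    constructor
    · simp [stdBasis]
    · simp [stdBasis]
  | succ m ih =>
    have hL : Lop p β (stdBasis (m + 1))
        = fun i => stdBasis m i + β ((m : ℤ) + 1) * stdBasis (m + 1 + p) i := by
      funext i
      show stdBasis (m + 1) (i + 1) + β ((i : ℤ) - (p : ℤ)) * stdBasis (m + 1) (i - p) = _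
      by_cases h1 : i = m
      · simp [h1, stdBasis, show ¬(m - p = m + 1) from by omega,
          show ¬(m = m + 1 + p) from by omega]
      · by_cases h2 : i = m + 1 + p
        · subst h2
          rw [show ((m + 1 + p : ℕ) : ℤ) - (p : ℤ) = (m : ℤ) + 1 from by omega]
          simp [stdBasis, show ¬(m + 1 + p + 1 = m + 1) from by omega,
            show m + 1 + p - p = m + 1 from by omega,
            show ¬(m + 1 + p = m) from by omega]
        · have hC : ¬(i - p = m + 1) := by
            by_cases hip : p ≤ i
            · omega
            · omega
          simp [stdBasis, show ¬(i + 1 = m + 1) from by omega, h1, h2, hC]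
    have hsup := iter_support p β (stdBasis (m + 1 + p)) (m + 1 + p)
      (by intro i hi; simp only [stdBasis]; rw [if_neg (by omega)]) m (by omega)
    rw [show m + 1 + p - m = p + 1 from by omega] at hsup
    have hone : stdBasis (m + 1 + p) (m + 1 + p) = 1 := by simp [stdBasis]
    constructor
    · rw [Function.iterate_succ_apply, hL, Lop_iter_lin]
      show (Lop p β)^[m] (stdBasis m) 0
          + β ((m : ℤ) + 1) * (Lop p β)^[m] (stdBasis (m + 1 + p)) 0 = 1
      rw [ih.1, hsup.1 0 (by omega)]
      ring
    · rw [Function.iterate_succ_apply, hL, Lop_iter_lin]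
      show (Lop p β)^[m] (stdBasis m) (p + 1)
          + β ((m : ℤ) + 1) * (Lop p β)^[m] (stdBasis (m + 1 + p)) (p + 1)
          = ∑ j ∈ Finset.range (m + 1), β ((j : ℤ) + 1)
      rw [ih.2, hsup.2, hone, Finset.sum_range_succ]
      ring

theorem dd_zero (p : ℕ) (β : ℤ → ℂ) (hneg : ∀ l : ℤ, l < 0 → β l = 0) :
    dd p β 0 = β 0 := by
  rw [dd, Finset.sum_range_succ',
    Finset.sum_eq_zero (fun j _ => hneg _ (by omega))]
  simp

theorem dd_val (p : ℕ) (β : ℤ → ℂ) (hneg : ∀ l : ℤ, l < 0 → β l = 0) (n : ℕ)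
    (hn1 : 1 ≤ n) (hnp : n ≤ p) :
    dd p β (n - 1) = β 0 + ∑ j ∈ Finset.range (n - 1), β ((j : ℤ) + 1) := by
  rw [dd, Finset.range_eq_Ico,
    ← Finset.sum_Ico_consecutive _ (Nat.zero_le n) (by omega : n ≤ p + 1)]
  rw [Finset.sum_eq_zero (s := Finset.Ico n (p + 1)) (fun j hj => hneg _ (by
    have := Finset.mem_Ico.mp hj; omega)), add_zero]
  rw [← Finset.range_eq_Ico]
  have hrefl := Finset.sum_range_reflect (fun j => β ((j : ℕ) : ℤ)) n
  have h0 : ∑ j ∈ Finset.range n, β ((↑(n - 1) : ℤ) - (j : ℤ))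
      = ∑ j ∈ Finset.range n, β (((n - 1 - j : ℕ) : ℤ)) := by
    apply Finset.sum_congr rfl
    intro j hj; rw [Finset.mem_range] at hj; congr 1; omega
  rw [h0, hrefl]
  conv_lhs => rw [show n = (n - 1) + 1 from by omega]
  rw [Finset.sum_range_succ']
  have h1 : ∑ j ∈ Finset.range (n - 1), β (((j + 1 : ℕ)) : ℤ)
      = ∑ j ∈ Finset.range (n - 1), β ((j : ℤ) + 1) := by
    apply Finset.sum_congr rfl
    intro j _; norm_cast
  rw [h1]
  norm_num [add_comm]

theorem Mop_basis (p : ℕ) (β : ℤ → ℂ) (n : ℕ) (hn1 : 1 ≤ n) (hnp : n ≤ p) :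
    Mop p β (stdBasis (n - 1)) = fun i => dd p β (n - 1) * stdBasis (n - 1) i := by
  funext i
  show dd p β i * stdBasis (n - 1) i + stdBasis (n - 1) (i + p + 1) = _
  have h2 : stdBasis (n - 1) (i + p + 1) = 0 := by
    simp only [stdBasis]; rw [if_neg (by omega)]
  rw [h2, add_zero]
  by_cases h : i = n - 1
  · subst h; rfl
  · simp only [stdBasis]; rw [if_neg h, mul_zero, mul_zero]

theorem deriv_key (p : ℕ) (T : ℝ) (b : ℤ → ℝ → ℂ) (t : ℝ) (e : ℕ → ℂ)
    (hneg : ∀ l : ℤ, l < 0 → (fun l' : ℤ => b l' t) l = 0)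
    (hder : ∀ l : ℤ, HasDerivWithinAt (fun s => b l s) (bd p (fun l' => b l' t) l)
      (Set.Ico (0 : ℝ) T) t) :
    ∀ K i, HasDerivWithinAt (fun s => (Lop p (fun l => b l s))^[K] e i)
      (Mop p (fun l => b l t) ((Lop p (fun l => b l t))^[K] e) i
        - (Lop p (fun l => b l t))^[K] (Mop p (fun l => b l t) e) i)
      (Set.Ico (0 : ℝ) T) t := by
  intro K
  induction K with
  | zero =>
    intro i
    simp only [Function.iterate_zero, id_eq, sub_self]
    exact hasDerivWithinAt_const _ _ _
  | succ K ih =>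
    intro i
    have h1 : (fun s => (Lop p (fun l => b l s))^[K + 1] e i)
        = fun s => ((Lop p (fun l => b l s))^[K] e (i + 1)
            + b ((i : ℤ) - (p : ℤ)) s * (Lop p (fun l => b l s))^[K] e (i - p)) := by
      funext s; rw [Function.iterate_succ_apply']; rfl
    rw [h1]
    have hd := (ih (i + 1)).add ((hder ((i : ℤ) - (p : ℤ))).mul (ih (i - p)))
    convert hd using 1
    · rfl
    · rfl
    rw [Function.iterate_succ_apply', Function.iterate_succ_apply',
      lax p (fun l => b l t) hneg ((Lop p (fun l => b l t))^[K] e) i]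
    simp only [Lop]
    ring

end MomAux

open MomAux in
/-- Evolution of the moments of `L2(t)` under the semi-infinite Bogoyavlensky lattice:
`(S̃_k^n)' = S̃_{k+p+1}^n − S̃_{p+n}^n · S̃_k^n`. -/
theorem momL2_evolution (p : ℕ) (hp : 1 ≤ p) (T : ℝ) (hT : 0 < T)
    (b : ℤ → ℝ → ℂ)
    (hbneg : ∀ l : ℤ, l < 0 → ∀ t : ℝ, b l t = 0)
    (hbne : ∀ i : ℤ, 0 ≤ i → ∀ t ∈ Set.Ico (0 : ℝ) T, b i t ≠ 0)
    (hbode : ∀ i : ℤ, 0 ≤ i → ∀ t ∈ Set.Ico (0 : ℝ) T, HasDerivWithinAt (b i)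
      (b i t * (∑ j ∈ Finset.Icc 1 p, b (i + (j : ℤ)) t -
        ∑ j ∈ Finset.Icc 1 p, b (i - (j : ℤ)) t)) (Set.Ico (0 : ℝ) T) t) :
    ∀ k n : ℕ, 1 ≤ n → n ≤ p → ∀ t ∈ Set.Ico (0 : ℝ) T,
      HasDerivWithinAt (fun s => momL2 p (fun m : ℕ => b (m : ℤ) s) k n)
        (momL2 p (fun m : ℕ => b (m : ℤ) t) (k + p + 1) n -
          momL2 p (fun m : ℕ => b (m : ℤ) t) (p + n) n *
            momL2 p (fun m : ℕ => b (m : ℤ) t) k n)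
        (Set.Ico (0 : ℝ) T) t := by
  intro k n hn1 hnp t ht
  have hnegt : ∀ l : ℤ, l < 0 → (fun l' : ℤ => b l' t) l = 0 := fun l hl => hbneg l hl t
  have hder : ∀ l : ℤ, HasDerivWithinAt (fun s => b l s) (bd p (fun l' => b l' t) l)
      (Set.Ico (0 : ℝ) T) t := by
    intro l
    rcases lt_or_ge l 0 with hl | hl
    · have hfun : (fun s => b l s) = fun _ : ℝ => (0 : ℂ) := funext fun s => hbneg l hl s
      have hval : bd p (fun l' => b l' t) l = 0 := by
        rw [bd]
        show b l t * _ = 0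
        rw [hbneg l hl t, zero_mul]
      rw [hfun, hval]
      exact hasDerivWithinAt_const _ _ _
    · have := hbode l hl t ht
      simpa [bd] using this
  have key := deriv_key p T b t (stdBasis (n - 1)) hnegt hder k 0
  have hfun : (fun s => momL2 p (fun m : ℕ => b (m : ℤ) s) k n)
      = fun s => (Lop p (fun l => b l s))^[k] (stdBasis (n - 1)) 0 :=
    funext fun s => momL2_eq p (fun l => b l s) (fun l hl => hbneg l hl s) k n
  rw [hfun]
  convert key using 1
  congr 1
  · -- `S̃_{k+p+1} = (M L^k e)_0`
    rw [momL2_eq p (fun l => b l t) hnegt]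
    rw [show k + p + 1 = (p + 1) + k from by omega, Function.iterate_add_apply]
    rw [iter_p1_zero p (fun l => b l t) hnegt]
    show _ = dd p (fun l => b l t) 0 * (Lop p (fun l => b l t))^[k] (stdBasis (n - 1)) 0
        + (Lop p (fun l => b l t))^[k] (stdBasis (n - 1)) (0 + p + 1)
    rw [dd_zero p (fun l => b l t) hnegt]
    norm_num
  · -- `S̃_{p+n} S̃_k = (L^k M e)_0`
    rw [Mop_basis p (fun l => b l t) n hn1 hnp, Lop_iter_smul]
    show _ = dd p (fun l => b l t) (n - 1) * (Lop p (fun l => b l t))^[k] (stdBasis (n - 1)) 0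
    congr 1
    · -- `S̃_{p+n} = dd (n-1)`
      rw [momL2_eq p (fun l => b l t) hnegt,
        show p + n = (p + 1) + (n - 1) from by omega,
        Function.iterate_add_apply, iter_p1_zero p (fun l => b l t) hnegt,
        (iter_diag p (fun l => b l t) hnegt (n - 1)).1,
        (iter_diag p (fun l => b l t) hnegt (n - 1)).2,
        dd_val p (fun l => b l t) hnegt n hn1 hnp, mul_one]
    · exact momL2_eq p (fun l => b l t) hnegt k n
end
end

section
/- Let p ≥ 1 and let (a_i)_{i≥0} be a bounded solution of the semi-infinite lattice a_i' = a_i(∏_{j=1}^p a_{i+j} − ∏_{j=1}^p a_{i−j}) on [0,T) (i.e. each a_i is differentiable, a_i(t) ≠ 0, a_l ≡ 0 for l < 0, and sup_{i≥0, t∈[0,T)} |a_i(t)| < ∞). Let S_k^m(t) be the moments of L1(t). Then for every k ≥ 0, 1 ≤ m ≤ p, and t ∈ [0,T), the series Σ_{l=0}^∞ S_{k+(p+1)l}^m(0)·t^l/l! and Σ_{l=0}^∞ S_{(p+1)l}^1(0)·t^l/l! converge absolutely and S_k^m(t)·Σ_{l=0}^∞ S_{(p+1)l}^1(0)·t^l/l!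 = Σ_{l=0}^∞ S_{k+(p+1)l}^m(0)·t^l/l!. -/
open scoped BigOperators

noncomputable section

namespace Bogo

def Lop (p : ℕ) (a : ℕ → ℂ) (w : ℕ → ℂ) : ℕ → ℂ :=
  fun n => w (n + p) + if n = 0 then 0 else a (n - 1) * w (n - 1)

lemma L1apply_eq (p : ℕ) (a : ℕ → ℂ) : L1apply p a = Lop p a := by
  funext w n
  unfold L1apply L1entry Lop
  have h1 : ∀ k ∈ Finset.range (n + p + 1),
      (if k = n + p then (1:ℂ) else if n = k + 1 then a k else 0) * w k
      = (if k = n + p then w k else 0) + (if n = k + 1 then a k * w k else 0) := by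
    intro k _
    rcases eq_or_ne k (n + p) with hk | hk
    · subst hk
      simp [show ¬ (n = n + p + 1) by omega]
    · simp [hk]
  rw [Finset.sum_congr rfl h1, Finset.sum_add_distrib]
  congr 1
  · rw [Finset.sum_ite_eq' (Finset.range (n+p+1)) (n+p) w]
    simp
  · rcases n with _ | q
    · simp
    · rw [Finset.sum_eq_single q]
      · simp
      · intro b _ hb
        simp [show ¬ (q + 1 = b + 1) by omega, show ¬ (q = b) by omega]
      · intro h
        exact absurd (Finset.mem_range.2 (by omega)) h

def pprod (p : ℕ) (a : ℕ → ℂ) (i : ℕ) : ℂ := ∏ j ∈ Finset.range (p + 1), a (i + j)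

def Pio (p : ℕ) (a : ℕ → ℂ) (w : ℕ → ℂ) : ℕ → ℂ :=
  fun n => if n ≤ p then 0 else pprod p a (n - (p+1)) * w (n - (p+1))

def Bop (p : ℕ) (a : ℕ → ℂ) (w : ℕ → ℂ) : ℕ → ℂ :=
  fun n => (Lop p a)^[p+1] w n - Pio p a w n

def da (p : ℕ) (a : ℕ → ℂ) (i : ℕ) : ℂ :=
  pprod p a i - if i < p then 0 else pprod p a (i - p)

lemma pprod_shift (p : ℕ) (a : ℕ → ℂ) (i : ℕ) :
    pprod p a i * a (i + p + 1) = a i * pprod p a (i + 1) := by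
  have h1 : pprod p a i * a (i + p + 1) = ∏ j ∈ Finset.range (p+2), a (i+j) := by
    rw [show p+2 = (p+1)+1 from rfl, Finset.prod_range_succ]
    unfold pprod
    congr 2
  have h2 : a i * pprod p a (i+1) = ∏ j ∈ Finset.range (p+2), a (i+j) := by
    rw [show p+2 = (p+1)+1 from rfl, Finset.prod_range_succ', mul_comm]
    unfold pprod
    congr 1
    all_goals try exact Finset.prod_congr rfl fun j _ => by congr 1; omega
    all_goals congr 1
  rw [h1, h2]

lemma lax (p : ℕ) (a : ℕ → ℂ) (w : ℕ → ℂ) (n : ℕ) :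
    Bop p a (Lop p a w) n =
      Lop p a (Bop p a w) n + (if n = 0 then 0 else da p a (n-1) * w (n-1)) := by
  have hit : (Lop p a)^[p+1] (Lop p a w) n = Lop p a ((Lop p a)^[p+1] w) n := by
    rw [← Function.iterate_succ_apply, Function.iterate_succ_apply']
  unfold Bop
  rw [hit]
  have hlin : Lop p a (fun x => (Lop p a)^[p+1] w x - Pio p a w x) n
      = Lop p a ((Lop p a)^[p+1] w) n - Lop p a (Pio p a w) n := by
    unfold Lop
    rcases n with _ | q
    · simp
    · by_cases h : q + 1 = 0
      · omega
      · simp only [if_neg h]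
        ring
  rw [hlin]
  have key : Lop p a (Pio p a w) n - Pio p a (Lop p a w) n
      = (if n = 0 then 0 else da p a (n-1) * w (n-1)) := by
    rcases n with _ | q
    · have e1 : Lop p a (Pio p a w) 0 = Pio p a w p := by
        simp [Lop, Pio]
      have e2 : Pio p a (Lop p a w) 0 = 0 := by simp [Pio]
      have e3 : Pio p a w p = 0 := by simp [Pio]
      simp [e1, e2, e3]
    · rw [if_neg (show ¬(q+1 = 0) by omega), Nat.add_sub_cancel]
      have eL : Lop p a (Pio p a w) (q+1) = Pio p a w (q+1+p) + a q * Pio p a w q := by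
        simp [Lop]
      have ePa : Pio p a w (q+1+p) = pprod p a q * w q := by
        unfold Pio
        rw [if_neg (by omega), show q+1+p-(p+1) = q by omega]
      rcases lt_or_ge q p with hq | hq
      · have eP1 : Pio p a w q = 0 := by unfold Pio; rw [if_pos (by omega)]
        have eP2 : Pio p a (Lop p a w) (q+1) = 0 := by unfold Pio; rw [if_pos (by omega)]
        rw [eL, ePa, eP1, eP2]
        unfold da
        rw [if_pos hq]
        ring
      · have eP2 : Pio p a (Lop p a w) (q+1)
            = pprod p a (q-p) * ((Lop p a w) (q-p)) := by
          unfold Pio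
          rw [if_neg (by omega), show q+1-(p+1) = q - p by omega]
        rcases Nat.eq_or_lt_of_le hq with hq' | hq'
        · -- q = p
          subst hq'
          have eP1 : Pio p a w p = 0 := by unfold Pio; rw [if_pos le_rfl]
          have eLw : Lop p a w 0 = w p := by
            simp [Lop]
          rw [eL, ePa, eP1, eP2, Nat.sub_self, eLw]
          unfold da
          rw [if_neg (show ¬ (p < p) by omega), Nat.sub_self]
          ring
        · -- q > p, q = r + p + 1
          obtain ⟨r, hr⟩ : ∃ r, q = r + p + 1 := ⟨q - p - 1, by omega⟩
          subst hr
          have eP1 : Pio p a w (r+p+1) = pprod p a r * w r := by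
            unfold Pio
            rw [if_neg (by omega), show r+p+1-(p+1) = r by omega]
          have hqp : r + p + 1 - p = r + 1 := by omega
          have eLw : Lop p a w (r+1) = w (r+1+p) + a r * w r := by
            simp [Lop]
          rw [eL, ePa, eP1, eP2, hqp, eLw]
          unfold da
          rw [if_neg (show ¬ (r+p+1 < p) by omega),
            show r+p+1-p = r+1 by omega, show r+1+p = r+p+1 by omega]
          have hps := pprod_shift p a r
          linear_combination w r * hps
  linear_combination key





/-- vanishing of `L^k e0` off the admissible set -/
lemma V_vanish (p : ℕ) (a : ℕ → ℂ) :
    ∀ k n, (¬ ∃ d, k = n + (p+1) * d) → (Lop p a)^[k] (stdBasis 0) n = 0 := by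
  intro k
  induction k with
  | zero =>
    intro n hn
    have : n ≠ 0 := fun h => hn ⟨0, by omega⟩
    simp [stdBasis, this]
  | succ k ih =>
    intro n hn
    rw [Function.iterate_succ_apply']
    show (Lop p a)^[k] (stdBasis 0) (n + p)
        + (if n = 0 then 0 else a (n-1) * (Lop p a)^[k] (stdBasis 0) (n-1)) = 0
    have h1 : (Lop p a)^[k] (stdBasis 0) (n + p) = 0 := by
      apply ih
      rintro ⟨d, hd⟩
      exact hn ⟨d + 1, by rw [Nat.mul_succ]; omega⟩
    rw [h1]
    rcases eq_or_ne n 0 with h | h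
    · simp [h]
    · rw [if_neg h]
      have h2 : (Lop p a)^[k] (stdBasis 0) (n-1) = 0 := by
        apply ih
        rintro ⟨d, hd⟩
        exact hn ⟨d, by omega⟩
      rw [h2, mul_zero, add_zero]

/-- top entry of `L^k e0` -/
lemma V_top (p : ℕ) (a : ℕ → ℂ) :
    ∀ k, (Lop p a)^[k] (stdBasis 0) k = ∏ j ∈ Finset.range k, a j := by
  intro k
  induction k with
  | zero => simp [stdBasis]
  | succ k ih =>
    rw [Function.iterate_succ_apply']
    show (Lop p a)^[k] (stdBasis 0) (k + 1 + p)
        + (if k + 1 = 0 then 0 else a k * (Lop p a)^[k] (stdBasis 0) k) = _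
    have h1 : (Lop p a)^[k] (stdBasis 0) (k + 1 + p) = 0 := by
      apply V_vanish
      rintro ⟨d, hd⟩
      rcases d with _ | d
      · omega
      · rw [Nat.mul_succ] at hd; omega
    rw [h1, if_neg (by omega), ih, zero_add, Finset.prod_range_succ]
    ring

lemma Bop_e0 (p : ℕ) (a : ℕ → ℂ) (n : ℕ) :
    Bop p a (stdBasis 0) n = ((Lop p a)^[p+1] (stdBasis 0) 0) * stdBasis 0 n := by
  unfold Bop
  rcases eq_or_ne n 0 with h | h
  · subst h
    have hP : Pio p a (stdBasis 0) 0 = 0 := by unfold Pio; rw [if_pos (by omega)]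
    simp [hP, stdBasis]
  · rw [show stdBasis 0 n = 0 by simp [stdBasis, h], mul_zero]
    rcases lt_or_ge p n with h1 | h1
    · rcases eq_or_ne n (p+1) with h2 | h2
      · subst h2
        have hP : Pio p a (stdBasis 0) (p+1) = pprod p a 0 := by
          unfold Pio
          rw [if_neg (by omega), Nat.sub_self]
          simp [stdBasis]
        rw [hP, V_top]
        unfold pprod
        rw [sub_eq_zero]
        exact Finset.prod_congr rfl fun j _ => by rw [Nat.zero_add]
      · have hP : Pio p a (stdBasis 0) n = 0 := by
          unfold Pio
          rcases le_or_gt n p with h3 | h3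
          · rw [if_pos h3]
          · rw [if_neg (by omega)]
            have : stdBasis 0 (n - (p+1)) = 0 := by
              simp [stdBasis]; omega
            rw [this, mul_zero]
        have hV : (Lop p a)^[p+1] (stdBasis 0) n = 0 := by
          apply V_vanish
          rintro ⟨d, hd⟩
          rcases d with _ | d
          · omega
          · rcases d with _ | d
            · omega
            · rw [Nat.mul_succ, Nat.mul_succ] at hd; omega
        rw [hP, hV, sub_zero]
    · -- 1 ≤ n ≤ p
      have hP : Pio p a (stdBasis 0) n = 0 := by unfold Pio; rw [if_pos h1]
      have hV : (Lop p a)^[p+1] (stdBasis 0) n = 0 := by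
        apply V_vanish
        rintro ⟨d, hd⟩
        rcases d with _ | d
        · omega
        · rw [Nat.mul_succ] at hd; omega
      rw [hP, hV, sub_zero]

/-- norm bound on entries of `L^k e0` -/
lemma V_bound (p : ℕ) (a : ℕ → ℂ) (C : ℝ) (hC : 0 ≤ C) (ha : ∀ i, ‖a i‖ ≤ C) :
    ∀ k n, ‖(Lop p a)^[k] (stdBasis 0) n‖ ≤ (1 + C) ^ k := by
  intro k
  induction k with
  | zero =>
    intro n
    rcases eq_or_ne n 0 with h | h <;> simp [stdBasis, h]
  | succ k ih =>
    intro n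
    rw [Function.iterate_succ_apply']
    show ‖(Lop p a)^[k] (stdBasis 0) (n + p)
        + (if n = 0 then 0 else a (n-1) * (Lop p a)^[k] (stdBasis 0) (n-1))‖ ≤ _
    have hb : ‖(if n = 0 then (0:ℂ) else a (n-1) * (Lop p a)^[k] (stdBasis 0) (n-1))‖
        ≤ C * (1 + C)^k := by
      rcases eq_or_ne n 0 with h | h
      · rw [if_pos h]
        simpa using by positivity
      · rw [if_neg h, norm_mul]
        exact mul_le_mul (ha _) (ih _) (norm_nonneg _) hC
    calc ‖_ + _‖ ≤ _ + _ := norm_add_le _ _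
      _ ≤ (1+C)^k + C * (1+C)^k := add_le_add (ih _) hb
      _ = (1+C)^(k+1) := by ring


open Set in
lemma hasDeriv_V (p : ℕ) (T : ℝ) (A : ℕ → ℝ → ℂ)
    (hode : ∀ i, ∀ t ∈ Set.Ico (0:ℝ) T,
      HasDerivWithinAt (A i) (da p (fun n => A n t) i) (Set.Ico (0:ℝ) T) t) :
    ∀ k n, ∀ t ∈ Set.Ico (0:ℝ) T,
      HasDerivWithinAt (fun u => (Lop p (fun i => A i u))^[k] (stdBasis 0) n)
        (Bop p (fun i => A i t) ((Lop p (fun i => A i t))^[k] (stdBasis 0)) n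
          - ((Lop p (fun i => A i t))^[p+1] (stdBasis 0) 0)
            * (Lop p (fun i => A i t))^[k] (stdBasis 0) n)
        (Set.Ico (0:ℝ) T) t := by
  intro k
  induction k with
  | zero =>
    intro n t ht
    simp only [Function.iterate_zero, id_eq]
    rw [Bop_e0, sub_self]
    exact hasDerivWithinAt_const _ _ _
  | succ k ih =>
    intro n t ht
    have hfun : (fun u => (Lop p (fun i => A i u))^[k+1] (stdBasis 0) n)
        = (fun u => (Lop p (fun i => A i u))^[k] (stdBasis 0) (n+p)
            + if n = 0 then 0
              else A (n-1) u * (Lop p (fun i => A i u))^[k] (stdBasis 0) (n-1)) := by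
      funext u
      rw [Function.iterate_succ_apply']
      rfl
    rw [hfun]
    set a := fun i => A i t with ha
    set v := (Lop p a)^[k] (stdBasis 0) with hv
    set S := (Lop p a)^[p+1] (stdBasis 0) 0 with hS
    have hit : (Lop p a)^[k+1] (stdBasis 0) = Lop p a v := by
      rw [Function.iterate_succ_apply']
    rw [hit]
    have hD' : HasDerivWithinAt
        (fun u => (Lop p (fun i => A i u))^[k] (stdBasis 0) (n+p)
            + if n = 0 then 0
              else A (n-1) u * (Lop p (fun i => A i u))^[k] (stdBasis 0) (n-1))
        ((Bop p a v (n+p) - S * v (n+p))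
          + if n = 0 then 0
            else da p a (n-1) * v (n-1) + A (n-1) t * (Bop p a v (n-1) - S * v (n-1)))
        (Set.Ico (0:ℝ) T) t := by
      rcases eq_or_ne n 0 with h | h
      · subst h
        simp only [if_pos rfl]
        simpa only [add_zero, ↓reduceIte] using (ih (0+p) t ht).add_const 0
      · simp only [if_neg h]
        exact (ih (n+p) t ht).add (((hode (n-1) t ht).mul (ih (n-1) t ht)))
    have hval : Bop p a (Lop p a v) n - S * Lop p a v n
        = (Bop p a v (n+p) - S * v (n+p))
          + if n = 0 then 0
            else da p a (n-1) * v (n-1) + A (n-1) t * (Bop p a v (n-1) - S * v (n-1)) := by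
      rw [lax p a v n]
      show Lop p a (Bop p a v) n + _ - S * Lop p a v n = _
      unfold Lop
      rcases eq_or_ne n 0 with h | h
      · subst h
        simp only [if_pos rfl, if_true, ite_true]
        ring
      · simp only [if_neg h]
        have : A (n-1) t = a (n-1) := rfl
        rw [this]
        ring
    rw [hval]
    exact hD'
end Bogo
open Set Finset in
lemma hode_of (p : ℕ) (hp : 1 ≤ p) (T : ℝ) (a : ℤ → ℝ → ℂ)
    (haneg : ∀ l : ℤ, l < 0 → ∀ t : ℝ, a l t = 0)
    (haode : ∀ i : ℤ, 0 ≤ i → ∀ t ∈ Set.Ico (0 : ℝ) T, HasDerivWithinAt (a i)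
      (a i t * (∏ j ∈ Finset.Icc 1 p, a (i + (j : ℤ)) t -
        ∏ j ∈ Finset.Icc 1 p, a (i - (j : ℤ)) t)) (Set.Ico (0 : ℝ) T) t) :
    ∀ (i : ℕ), ∀ t ∈ Set.Ico (0:ℝ) T,
      HasDerivWithinAt (fun u => a (i : ℤ) u)
        (Bogo.da p (fun n : ℕ => a (n : ℤ) t) i) (Set.Ico (0:ℝ) T) t := by
  intro i t ht
  have h := haode (i : ℤ) (by positivity) t ht
  have hIcc : ∀ (g : ℕ → ℂ), ∏ j ∈ Finset.Icc 1 p, g j = ∏ j ∈ Finset.range p, g (1 + j) := by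
    intro g
    rw [show Finset.Icc 1 p = Finset.Ico 1 (p+1) by rw [Finset.Ico_add_one_right_eq_Icc],
      Finset.prod_Ico_eq_prod_range]
    simp
  have eq1 : a (i:ℤ) t * (∏ j ∈ Finset.Icc 1 p, a ((i:ℤ) + (j : ℤ)) t)
      = Bogo.pprod p (fun n : ℕ => a (n : ℤ) t) i := by
    unfold Bogo.pprod
    rw [hIcc (fun j => a ((i:ℤ) + (j:ℤ)) t), Finset.prod_range_succ']
    rw [mul_comm]
    congr 1
    all_goals try (apply Finset.prod_congr rfl; intro j _; congr 1; push_cast; ring)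
  rcases lt_or_ge i p with hip | hip
  · have eq2 : ∏ j ∈ Finset.Icc 1 p, a ((i:ℤ) - (j : ℤ)) t = 0 := by
      apply Finset.prod_eq_zero (Finset.mem_Icc.2 ⟨by omega, by omega⟩ : i + 1 ∈ Finset.Icc 1 p)
      apply haneg
      push_cast
      omega
    have key : a (i:ℤ) t * (∏ j ∈ Finset.Icc 1 p, a ((i:ℤ) + (j : ℤ)) t -
        ∏ j ∈ Finset.Icc 1 p, a ((i:ℤ) - (j : ℤ)) t)
        = Bogo.da p (fun n : ℕ => a (n : ℤ) t) i := by
      rw [eq2]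
      unfold Bogo.da
      rw [if_pos hip, ← eq1]
      ring
    exact key ▸ h
  · have eq3 : a (i:ℤ) t * ∏ j ∈ Finset.Icc 1 p, a ((i:ℤ) - (j : ℤ)) t
        = Bogo.pprod p (fun n : ℕ => a (n : ℤ) t) (i - p) := by
      have s1 : ∏ j ∈ Finset.Icc 1 p, a ((i:ℤ) - (j : ℤ)) t
          = ∏ j ∈ Finset.range p, a (((i - 1 - j : ℕ)):ℤ) t := by
        rw [hIcc (fun j => a ((i:ℤ) - (j:ℤ)) t)]
        apply Finset.prod_congr rfl
        intro j hj
        have hj' : j < p := Finset.mem_range.1 hj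
        congr 1
        push_cast
        omega
      have s2 : ∏ j ∈ Finset.range p, a (((i - 1 - j : ℕ)):ℤ) t
          = ∏ j ∈ Finset.range p, a (((i - p + j : ℕ)):ℤ) t := by
        rw [← Finset.prod_range_reflect (fun j => a (((i - p + j : ℕ)):ℤ) t) p]
        apply Finset.prod_congr rfl
        intro j hj
        have hj' : j < p := Finset.mem_range.1 hj
        congr 2
        omega
      unfold Bogo.pprod
      rw [s1, s2, Finset.prod_range_succ, show i - p + p = i by omega, mul_comm]
    have key : a (i:ℤ) t * (∏ j ∈ Finset.Icc 1 p, a ((i:ℤ) + (j : ℤ)) t -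
        ∏ j ∈ Finset.Icc 1 p, a ((i:ℤ) - (j : ℤ)) t)
        = Bogo.da p (fun n : ℕ => a (n : ℤ) t) i := by
      unfold Bogo.da
      rw [if_neg (by omega), ← eq1, ← eq3]
      ring
    exact key ▸ h

namespace Bogo2
open Bogo Set Finset

/-- the tau-like exponential factor -/
noncomputable def Efun (p : ℕ) (A : ℕ → ℝ → ℂ) : ℝ → ℂ :=
  fun t => Complex.exp (∫ s in (0:ℝ)..t, (Bogo.Lop p (fun i => A i s))^[p+1] (stdBasis 0) 0)

lemma summable_mom (p : ℕ) (A : ℕ → ℝ → ℂ) (C : ℝ) (hC : 0 ≤ C)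
    (hbd : ∀ i : ℕ, ‖A i 0‖ ≤ C) (t : ℝ) (ht0 : 0 ≤ t) (k n : ℕ) :
    Summable (fun l : ℕ =>
      ‖(Bogo.Lop p (fun i => A i 0))^[k + (p+1)*l] (stdBasis 0) n * (t:ℂ)^l /
        (l.factorial : ℂ)‖) := by
  have hmaj := (Real.summable_pow_div_factorial ((1+C)^(p+1) * t)).mul_left ((1+C)^k)
  apply Summable.of_nonneg_of_le (fun l => norm_nonneg _) _ hmaj
  intro l
  have hb := Bogo.V_bound p (fun i => A i 0) C hC hbd (k + (p+1)*l) n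
  have hnorm : ‖(Bogo.Lop p (fun i => A i 0))^[k + (p+1)*l] (stdBasis 0) n * (t:ℂ)^l /
      (l.factorial : ℂ)‖
      = ‖(Bogo.Lop p (fun i => A i 0))^[k + (p+1)*l] (stdBasis 0) n‖ * t^l / l.factorial := by
    rw [norm_div, norm_mul, norm_pow]
    congr 2
    · rw [Complex.norm_real, Real.norm_of_nonneg ht0]
    · rw [Complex.norm_natCast]
  rw [hnorm]
  have h1 : ((1+C):ℝ)^(k + (p+1)*l) = (1+C)^k * ((1+C)^(p+1))^l := by
    rw [pow_add, pow_mul]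
  have hfac : (0:ℝ) < l.factorial := by positivity
  calc ‖(Bogo.Lop p (fun i => A i 0))^[k + (p+1)*l] (stdBasis 0) n‖ * t^l / l.factorial
      ≤ (1+C)^(k + (p+1)*l) * t^l / l.factorial := by
        gcongr
    _ = (1+C)^k * (((1+C)^(p+1) * t)^l / l.factorial) := by
        rw [h1, mul_pow]
        ring

lemma taylor_main (p : ℕ) (T : ℝ) (hT : 0 < T) (A : ℕ → ℝ → ℂ)
    (hode : ∀ i, ∀ t ∈ Set.Ico (0:ℝ) T,
      HasDerivWithinAt (A i) (Bogo.da p (fun n => A n t) i) (Set.Ico (0:ℝ) T) t)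
    (C : ℝ) (hC : 0 ≤ C) (hbd : ∀ i : ℕ, ∀ t ∈ Set.Ico (0:ℝ) T, ‖A i t‖ ≤ C) :
    ∀ t ∈ Set.Ico (0:ℝ) T, ∀ (k m' : ℕ), m' ≤ p + 1 →
      (Bogo.Lop p (fun i => A i t))^[k] (stdBasis 0) (m'-1) * Efun p A t
        = ∑' l : ℕ, (Bogo.Lop p (fun i => A i 0))^[k + (p+1)*l] (stdBasis 0) (m'-1)
            * (t:ℂ)^l / (l.factorial : ℂ) := by
  intro t ht k m' hm'
  obtain ⟨ht0, htT⟩ := ht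
  have h0T : (0:ℝ) ∈ Set.Ico (0:ℝ) T := ⟨le_refl _, hT⟩
  have hsub : Set.Icc (0:ℝ) t ⊆ Set.Ico (0:ℝ) T :=
    fun x hx => ⟨hx.1, lt_of_le_of_lt hx.2 htT⟩
  set R : ℝ := 1 + C with hR
  have hR0 : 0 ≤ R := by positivity
  have hR1 : 1 ≤ R := by simp [hR]; linarith
  -- scalar function S
  set Sf : ℝ → ℂ := fun u => (Bogo.Lop p (fun i => A i u))^[p+1] (stdBasis 0) 0 with hSf
  have hSd : ∀ u ∈ Set.Ico (0:ℝ) T, HasDerivWithinAt Sf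
      (Bogo.Bop p (fun i => A i u) ((Bogo.Lop p (fun i => A i u))^[p+1] (stdBasis 0)) 0
        - ((Bogo.Lop p (fun i => A i u))^[p+1] (stdBasis 0) 0)
          * (Bogo.Lop p (fun i => A i u))^[p+1] (stdBasis 0) 0)
      (Set.Ico (0:ℝ) T) u := fun u hu => Bogo.hasDeriv_V p T A hode (p+1) 0 u hu
  have hScont : ContinuousOn Sf (Set.Ico (0:ℝ) T) :=
    fun u hu => ((hSd u hu).continuousWithinAt)
  have hScont' : ContinuousOn Sf (Set.Icc (0:ℝ) t) := hScont.mono hsub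
  -- E and its derivative
  have hEd : ∀ b ∈ Set.Icc (0:ℝ) t, HasDerivWithinAt (Efun p A)
      (Sf b * Efun p A b) (Set.Icc (0:ℝ) t) b := by
    intro b hb
    have hi : HasDerivWithinAt (fun u => ∫ s in (0:ℝ)..u, Sf s) (Sf b)
        (Set.Icc (0:ℝ) t) b := by
      haveI : Fact (b ∈ Set.Icc (0:ℝ) t) := ⟨hb⟩
      apply intervalIntegral.integral_hasDerivWithinAt_right
      · apply ContinuousOn.intervalIntegrable
        apply hScont'.mono
        rw [Set.uIcc_of_le hb.1]
        exact Set.Icc_subset_Icc le_rfl hb.2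
      · exact hScont'.stronglyMeasurableAtFilter_nhdsWithin measurableSet_Icc b
      · exact hScont' b hb
    have he := hi.cexp
    have : Efun p A = fun u => Complex.exp (∫ s in (0:ℝ)..u, Sf s) := rfl
    rw [this]
    convert he using 1
    try rw [mul_comm]
    try rfl
  have hE0 : Efun p A 0 = 1 := by
    simp [Efun, intervalIntegral.integral_same, Complex.exp_zero]
  have hEcont : ContinuousOn (Efun p A) (Set.Icc (0:ℝ) t) :=
    fun u hu => (hEd u hu).continuousWithinAt
  obtain ⟨M, hM⟩ := (isCompact_Icc : IsCompact (Set.Icc (0:ℝ) t)).exists_bound_of_continuousOn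
    hEcont
  set M' : ℝ := max M 0 with hM'
  have hM'0 : 0 ≤ M' := le_max_right _ _
  have hMb : ∀ u ∈ Set.Icc (0:ℝ) t, ‖Efun p A u‖ ≤ M' :=
    fun u hu => le_trans (hM u hu) (le_max_left _ _)
  -- bound on V entries
  have hVb : ∀ (j : ℕ) (u : ℝ), u ∈ Set.Ico (0:ℝ) T → ∀ n,
      ‖(Bogo.Lop p (fun i => A i u))^[j] (stdBasis 0) n‖ ≤ R^j := by
    intro j u hu n
    exact Bogo.V_bound p (fun i => A i u) C hC (fun i => hbd i u hu) j n
  -- derivative of G j := V j * E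
  have hGd : ∀ (j : ℕ), ∀ b ∈ Set.Icc (0:ℝ) t,
      HasDerivWithinAt (fun u => (Bogo.Lop p (fun i => A i u))^[j] (stdBasis 0) (m'-1)
          * Efun p A u)
        ((Bogo.Lop p (fun i => A i b))^[j + (p+1)] (stdBasis 0) (m'-1) * Efun p A b)
        (Set.Icc (0:ℝ) t) b := by
    intro j b hb
    have h1 := (Bogo.hasDeriv_V p T A hode j (m'-1) b (hsub hb)).mono hsub
    have h3 := h1.mul (hEd b hb)
    refine h3.congr_deriv ?_
    have hPio : Bogo.Pio p (fun i => A i b) ((Bogo.Lop p (fun i => A i b))^[j] (stdBasis 0))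
        (m'-1) = 0 := by
      unfold Bogo.Pio
      rw [if_pos (by omega : m' - 1 ≤ p)]
    have hBop : Bogo.Bop p (fun i => A i b) ((Bogo.Lop p (fun i => A i b))^[j] (stdBasis 0))
        (m'-1) = (Bogo.Lop p (fun i => A i b))^[j + (p+1)] (stdBasis 0) (m'-1) := by
      unfold Bogo.Bop
      rw [hPio, sub_zero, show j + (p+1) = (p+1) + j by omega,
        Function.iterate_add_apply _ (p+1) j]
    rw [hBop]
    ring
  -- the coefficients
  set c : ℕ → ℂ := fun l => (Bogo.Lop p (fun i => A i 0))^[k + (p+1)*l] (stdBasis 0) (m'-1)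
      * (t:ℂ)^l / (l.factorial : ℂ) with hc
  have hsum : Summable (fun l => ‖c l‖) :=
    summable_mom p A C hC (fun i => hbd i 0 h0T) t ht0 k (m'-1)
  -- the key Taylor estimate
  have key : ∀ N : ℕ, ‖(Bogo.Lop p (fun i => A i t))^[k] (stdBasis 0) (m'-1) * Efun p A t
      - ∑ l ∈ Finset.range (N+1), c l‖
      ≤ (M' * R^k * R^(p+1) * t) * ((R^(p+1) * t)^N / N.factorial) := by
    intro N
    set F : ℝ → ℂ := fun u => ∑ l ∈ Finset.range (N+1),
      (Bogo.Lop p (fun i => A i u))^[k + (p+1)*l] (stdBasis 0) (m'-1) * Efun p A u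
        * ((t:ℂ) - (u:ℂ))^l / (l.factorial : ℂ) with hF
    set F' : ℝ → ℂ := fun u => (Bogo.Lop p (fun i => A i u))^[k + (p+1)*(N+1)]
        (stdBasis 0) (m'-1) * Efun p A u * ((t:ℂ) - (u:ℂ))^N / (N.factorial : ℂ) with hF'
    have hFd : ∀ b ∈ Set.Icc (0:ℝ) t, HasDerivWithinAt F (F' b) (Set.Icc (0:ℝ) t) b := by
      intro b hb
      -- G-value function for convenience
      set G : ℕ → ℝ → ℂ := fun j u =>
        (Bogo.Lop p (fun i => A i u))^[j] (stdBasis 0) (m'-1) * Efun p A u with hG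
      have hpsi : ∀ l : ℕ, HasDerivWithinAt (fun u : ℝ => ((t:ℂ) - (u:ℂ))^l)
          ((l:ℂ) * ((t:ℂ) - (b:ℂ))^(l-1) * (-1)) (Set.Icc (0:ℝ) t) b := by
        intro l
        have hinner : HasDerivWithinAt (fun u : ℝ => (t:ℂ) - (u:ℂ)) (-1)
            (Set.Icc (0:ℝ) t) b := by
          have hre : HasDerivWithinAt (fun u : ℝ => ((u:ℝ):ℂ)) 1 (Set.Icc (0:ℝ) t) b := by
            simpa using ((hasDerivAt_id b).ofReal_comp).hasDerivWithinAt
          simpa using hre.const_sub ((t:ℝ):ℂ)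
        have houter := hasDerivAt_pow l ((t:ℂ) - (b:ℂ))
        have hcomp := HasDerivAt.comp_hasDerivWithinAt b houter hinner
        refine hcomp.congr_deriv ?_
        try push_cast
        try ring
      have heach : ∀ l ∈ Finset.range (N+1),
          HasDerivWithinAt (fun u => G (k + (p+1)*l) u * ((t:ℂ) - (u:ℂ))^l / (l.factorial : ℂ))
            ((G (k + (p+1)*(l+1)) b * ((t:ℂ) - (b:ℂ))^l
              + G (k + (p+1)*l) b * ((l:ℂ) * ((t:ℂ) - (b:ℂ))^(l-1) * (-1))) / (l.factorial : ℂ))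
            (Set.Icc (0:ℝ) t) b := by
        intro l _
        have hg : HasDerivWithinAt (fun u => G (k + (p+1)*l) u)
            (G (k + (p+1)*l + (p+1)) b) (Set.Icc (0:ℝ) t) b := hGd (k + (p+1)*l) b hb
        have hmul := hg.mul (hpsi l)
        have := hmul.div_const ((l.factorial : ℂ))
        refine this.congr_deriv ?_
        rw [show k + (p+1)*(l+1) = k + (p+1)*l + (p+1) by ring]
      have hsumd := HasDerivWithinAt.fun_sum (fun l hl => heach l hl)
      have : F = fun u => ∑ l ∈ Finset.range (N+1),
          G (k + (p+1)*l) u * ((t:ℂ) - (u:ℂ))^l / (l.factorial : ℂ) := rfl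
      rw [this]
      refine hsumd.congr_deriv ?_
      -- telescoping
      set phi : ℕ → ℂ := fun l => if l = 0 then 0
        else G (k + (p+1)*l) b * ((t:ℂ) - (b:ℂ))^(l-1) / ((l-1).factorial : ℂ) with hphi
      have hterm : ∀ l ∈ Finset.range (N+1),
          (G (k + (p+1)*(l+1)) b * ((t:ℂ) - (b:ℂ))^l
            + G (k + (p+1)*l) b * ((l:ℂ) * ((t:ℂ) - (b:ℂ))^(l-1) * (-1))) / (l.factorial : ℂ)
          = phi (l+1) - phi l := by
        intro l _
        rcases l with _ | r
        · simp [hphi]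
        · have h1 : phi (r+2) = G (k + (p+1)*(r+2)) b * ((t:ℂ) - (b:ℂ))^(r+1)
              / ((r+1).factorial : ℂ) := by simp [hphi]
          have h2 : phi (r+1) = G (k + (p+1)*(r+1)) b * ((t:ℂ) - (b:ℂ))^r
              / (r.factorial : ℂ) := by simp [hphi]
          rw [h1, h2]
          have hfac : ((r+1).factorial : ℂ) = ((r:ℂ)+1) * (r.factorial : ℂ) := by
            rw [Nat.factorial_succ]
            push_cast
            ring
          have hfz : (r.factorial : ℂ) ≠ 0 := by
            exact_mod_cast Nat.cast_ne_zero.2 (Nat.factorial_ne_zero r)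
          have hfz' : ((r:ℂ)+1) ≠ 0 := Nat.cast_add_one_ne_zero r
          rw [hfac, Nat.add_sub_cancel]
          field_simp
          push_cast
          ring
      rw [Finset.sum_congr rfl hterm, Finset.sum_range_sub phi]
      have hphiN : phi (N+1) = G (k + (p+1)*(N+1)) b * ((t:ℂ) - (b:ℂ))^N
          / (N.factorial : ℂ) := by simp [hphi]
      have hphi0 : phi 0 = 0 := by simp [hphi]
      rw [hphiN, hphi0, sub_zero]
      try rfl
    -- bound on F'
    have hFb : ∀ b ∈ Set.Icc (0:ℝ) t,
        ‖F' b‖ ≤ M' * R^(k + (p+1)*(N+1)) * t^N / N.factorial := by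
      intro b hb
      have h1 : ‖F' b‖ = ‖(Bogo.Lop p (fun i => A i b))^[k + (p+1)*(N+1)]
          (stdBasis 0) (m'-1)‖ * ‖Efun p A b‖ * ‖(t:ℂ) - (b:ℂ)‖^N / N.factorial := by
        rw [hF']
        rw [norm_div, norm_mul, norm_mul, norm_pow, Complex.norm_natCast]
      rw [h1]
      have h2 : ‖(t:ℂ) - (b:ℂ)‖ ≤ t := by
        rw [show (t:ℂ) - (b:ℂ) = (((t - b : ℝ)):ℂ) by push_cast; ring, Complex.norm_real,
          Real.norm_of_nonneg (by linarith [hb.2])]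
        linarith [hb.1]
      have h3 : ‖(t:ℂ) - (b:ℂ)‖^N ≤ t^N := pow_le_pow_left₀ (norm_nonneg _) h2 N
      have h4 := hVb (k + (p+1)*(N+1)) b (hsub hb) (m'-1)
      have h5 := hMb b hb
      have hfac : (0:ℝ) < N.factorial := by positivity
      rw [div_le_div_iff_of_pos_right hfac]
      calc ‖(Bogo.Lop p (fun i => A i b))^[k + (p+1)*(N+1)] (stdBasis 0) (m'-1)‖
            * ‖Efun p A b‖ * ‖(t:ℂ) - (b:ℂ)‖^N
          ≤ R^(k + (p+1)*(N+1)) * M' * t^N := by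
            apply mul_le_mul (mul_le_mul h4 h5 (norm_nonneg _) (by positivity)) h3
              (by positivity) (by positivity)
        _ = M' * R^(k + (p+1)*(N+1)) * t^N := by ring
    -- mean value inequality
    have hmvt := Convex.norm_image_sub_le_of_norm_hasDerivWithin_le hFd hFb (convex_Icc (0:ℝ) t)
      (Set.left_mem_Icc.2 ht0) (Set.right_mem_Icc.2 ht0)
    -- F t and F 0
    have hFt : F t = (Bogo.Lop p (fun i => A i t))^[k] (stdBasis 0) (m'-1) * Efun p A t := by
      simp only [hF]
      rw [Finset.sum_eq_single 0]
      · simp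
      · intro l _ hl
        rcases l with _ | r
        · omega
        · simp [sub_self]
      · intro h
        exact absurd (Finset.mem_range.2 (by omega)) h
    have hF0 : F 0 = ∑ l ∈ Finset.range (N+1), c l := by
      simp only [hF]
      apply Finset.sum_congr rfl
      intro l _
      simp [hc, hE0]
    rw [hFt, hF0] at hmvt
    have hre : M' * R^(k + (p+1)*(N+1)) * t^N / N.factorial * ‖t - 0‖
        = (M' * R^k * R^(p+1) * t) * ((R^(p+1) * t)^N / N.factorial) := by
      rw [sub_zero, Real.norm_of_nonneg ht0]
      rw [show k + (p+1)*(N+1) = k + (p+1) + (p+1)*N by ring, pow_add, pow_add, pow_mul,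
        mul_pow]
      field_simp
    rw [hre] at hmvt
    exact hmvt
  -- pass to the limit
  have hsum' : Summable c := by
    apply Summable.of_norm hsum
  have hlim1 : Filter.Tendsto (fun N => ∑ l ∈ Finset.range (N+1), c l) Filter.atTop
      (nhds (∑' l, c l)) := by
    have h := hsum'.hasSum.tendsto_sum_nat
    exact h.comp (Filter.tendsto_add_atTop_nat 1)
  have hlim2 : Filter.Tendsto
      (fun N : ℕ => (M' * R^k * R^(p+1) * t) * ((R^(p+1) * t)^N / N.factorial))
      Filter.atTop (nhds 0) := by
    have h := FloorSemiring.tendsto_pow_div_factorial_atTop (R^(p+1) * t)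
    have := h.const_mul (M' * R^k * R^(p+1) * t)
    simpa using this
  have hlim3 : Filter.Tendsto (fun N => ∑ l ∈ Finset.range (N+1), c l) Filter.atTop
      (nhds ((Bogo.Lop p (fun i => A i t))^[k] (stdBasis 0) (m'-1) * Efun p A t)) := by
    rw [tendsto_iff_norm_sub_tendsto_zero]
    apply squeeze_zero (fun N => norm_nonneg _) _ hlim2
    intro N
    rw [norm_sub_rev]
    exact key N
  exact tendsto_nhds_unique hlim3 hlim1

end Bogo2


/-- Series formula for the moments of `L1(t)` along a bounded solution of the
semi-infinite Bogoyavlensky lattice: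
`S_k^m(t) · Σ_l S_{(p+1)l}^1(0) t^l/l! = Σ_l S_{k+(p+1)l}^m(0) t^l/l!`, both series being
absolutely convergent. -/
theorem momL1_series_formula (p : ℕ) (hp : 1 ≤ p) (T : ℝ) (hT : 0 < T)
    (a : ℤ → ℝ → ℂ)
    (haneg : ∀ l : ℤ, l < 0 → ∀ t : ℝ, a l t = 0)
    (hane : ∀ i : ℤ, 0 ≤ i → ∀ t ∈ Set.Ico (0 : ℝ) T, a i t ≠ 0)
    (haode : ∀ i : ℤ, 0 ≤ i → ∀ t ∈ Set.Ico (0 : ℝ) T, HasDerivWithinAt (a i)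
      (a i t * (∏ j ∈ Finset.Icc 1 p, a (i + (j : ℤ)) t -
        ∏ j ∈ Finset.Icc 1 p, a (i - (j : ℤ)) t)) (Set.Ico (0 : ℝ) T) t)
    (habd : ∃ C : ℝ, ∀ i : ℤ, 0 ≤ i → ∀ t ∈ Set.Ico (0 : ℝ) T, ‖a i t‖ ≤ C) :
    ∀ k m : ℕ, 1 ≤ m → m ≤ p → ∀ t ∈ Set.Ico (0 : ℝ) T,
      Summable (fun l : ℕ =>
        ‖momL1 p (fun n : ℕ => a (n : ℤ) 0) (k + (p + 1) * l) m * (t : ℂ) ^ l /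
          (l.factorial : ℂ)‖) ∧
      Summable (fun l : ℕ =>
        ‖momL1 p (fun n : ℕ => a (n : ℤ) 0) ((p + 1) * l) 1 * (t : ℂ) ^ l /
          (l.factorial : ℂ)‖) ∧
      momL1 p (fun n : ℕ => a (n : ℤ) t) k m *
          ∑' l : ℕ, momL1 p (fun n : ℕ => a (n : ℤ) 0) ((p + 1) * l) 1 * (t : ℂ) ^ l /
            (l.factorial : ℂ) =
        ∑' l : ℕ, momL1 p (fun n : ℕ => a (n : ℤ) 0) (k + (p + 1) * l) m * (t : ℂ) ^ l /
          (l.factorial : ℂ) := by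
  intro k m hm1 hmp t ht
  have h0T : (0:ℝ) ∈ Set.Ico (0:ℝ) T := ⟨le_refl _, hT⟩
  have hode := hode_of p hp T a haneg haode
  obtain ⟨C, hCb⟩ := habd
  have hC0 : (0:ℝ) ≤ C := le_trans (norm_nonneg (a 0 0)) (hCb 0 le_rfl 0 h0T)
  have hbd : ∀ i : ℕ, ∀ t' ∈ Set.Ico (0:ℝ) T, ‖a (i:ℤ) t'‖ ≤ C :=
    fun i t' ht' => hCb i (by positivity) t' ht'
  have hmom : ∀ (b : ℕ → ℂ) (j n : ℕ),
      momL1 p b j n = (Bogo.Lop p b)^[j] (stdBasis 0) (n-1) := by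
    intro b j n
    unfold momL1
    rw [Bogo.L1apply_eq]
  have hsum1 : Summable (fun l : ℕ =>
      ‖momL1 p (fun n : ℕ => a (n : ℤ) 0) (k + (p + 1) * l) m * (t : ℂ) ^ l /
        (l.factorial : ℂ)‖) := by
    have h := Bogo2.summable_mom p (fun (n : ℕ) (u : ℝ) => a (n:ℤ) u) C hC0
      (fun i => hbd i 0 h0T) t ht.1 k (m-1)
    simpa only [hmom] using h
  have hsum2 : Summable (fun l : ℕ =>
      ‖momL1 p (fun n : ℕ => a (n : ℤ) 0) ((p + 1) * l) 1 * (t : ℂ) ^ l /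
        (l.factorial : ℂ)‖) := by
    have h := Bogo2.summable_mom p (fun (n : ℕ) (u : ℝ) => a (n:ℤ) u) C hC0
      (fun i => hbd i 0 h0T) t ht.1 0 0
    simp only [zero_add] at h
    simpa only [hmom] using h
  refine ⟨hsum1, hsum2, ?_⟩
  have hmain := Bogo2.taylor_main p T hT (fun (n : ℕ) (u : ℝ) => a (n:ℤ) u) hode C hC0
    hbd t ht k m (by omega)
  have hunit := Bogo2.taylor_main p T hT (fun (n : ℕ) (u : ℝ) => a (n:ℤ) u) hode C hC0
    hbd t ht 0 1 (by omega)
  simp only [Function.iterate_zero, id_eq, zero_add] at hunit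
  rw [show stdBasis 0 (1-1) = 1 by simp [stdBasis], one_mul] at hunit
  simp only [hmom]
  rw [show (1:ℕ) - 1 = 0 from rfl, show m - 1 = m - 1 from rfl]
  rw [← hunit]
  simpa using hmain
end
end

section
/- Let p ≥ 1 and let (α_i)_{i≥0} and (β_i)_{i≥0} be bounded sequences of nonzero complex numbers. Then there exists δ > 0 such that: (1) the Cauchy problem for the semi-infinite lattice a_i' = a_i(∏_{j=1}^p a_{i+j} − ∏_{j=1}^p a_{i−j}) with a_i(0) = α_i has exactly one solution (a_i)_{i≥0} on [0,δ) in the class of bounded solutions (sup_{i,t} |a_i(t)| < ∞); and (2) the Cauchy problem for the semi-infinite lattice b_i' = b_i(Σ_{j=1}^p b_{i+j} − Σ_{j=1}^p b_{i−j}) with b_i(0) = β_i has exactly one bounded solution (b_i)_{i≥0} on [0,δ). -/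
open scoped BigOperators

noncomputable section

/-- `a` is a bounded solution on `[0,δ)` of the semi-infinite Bogoyavlensky lattice
`a_i' = a_i (∏_{j=1}^p a_{i+j} − ∏_{j=1}^p a_{i−j})` with initial data `α`. -/
def IsBoundedSolA (p : ℕ) (δ : ℝ) (α : ℕ → ℂ) (a : ℤ → ℝ → ℂ) : Prop :=
  (∀ l : ℤ, l < 0 → ∀ t ∈ Set.Ico (0 : ℝ) δ, a l t = 0) ∧
  (∀ i : ℤ, 0 ≤ i → ∀ t ∈ Set.Ico (0 : ℝ) δ, HasDerivWithinAt (a i)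
    (a i t * (∏ j ∈ Finset.Icc 1 p, a (i + (j : ℤ)) t -
      ∏ j ∈ Finset.Icc 1 p, a (i - (j : ℤ)) t)) (Set.Ico (0 : ℝ) δ) t) ∧
  (∃ C : ℝ, ∀ i : ℤ, ∀ t ∈ Set.Ico (0 : ℝ) δ, ‖a i t‖ ≤ C) ∧
  (∀ i : ℕ, a (i : ℤ) 0 = α i)

/-- `b` is a bounded solution on `[0,δ)` of the semi-infinite Bogoyavlensky lattice
`b_i' = b_i (Σ_{j=1}^p b_{i+j} − Σ_{j=1}^p b_{i−j})` with initial data `β`. -/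
def IsBoundedSolB (p : ℕ) (δ : ℝ) (β : ℕ → ℂ) (b : ℤ → ℝ → ℂ) : Prop :=
  (∀ l : ℤ, l < 0 → ∀ t ∈ Set.Ico (0 : ℝ) δ, b l t = 0) ∧
  (∀ i : ℤ, 0 ≤ i → ∀ t ∈ Set.Ico (0 : ℝ) δ, HasDerivWithinAt (b i)
    (b i t * (∑ j ∈ Finset.Icc 1 p, b (i + (j : ℤ)) t -
      ∑ j ∈ Finset.Icc 1 p, b (i - (j : ℤ)) t)) (Set.Ico (0 : ℝ) δ) t) ∧
  (∃ C : ℝ, ∀ i : ℤ, ∀ t ∈ Set.Ico (0 : ℝ) δ, ‖b i t‖ ≤ C) ∧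
  (∀ i : ℕ, b (i : ℤ) 0 = β i)

namespace BogAux
open Set Metric BoundedContinuousFunction

lemma norm_prod_le_pow {ι : Type*} (s : Finset ι) (f : ι → ℂ) {R : ℝ} (hR : 0 ≤ R)
    (hf : ∀ j ∈ s, ‖f j‖ ≤ R) : ‖∏ j ∈ s, f j‖ ≤ R ^ s.card := by
  rw [norm_prod]
  calc ∏ j ∈ s, ‖f j‖ ≤ ∏ _j ∈ s, R := by
        refine Finset.prod_le_prod (fun j _ => norm_nonneg _) hf
    _ = R ^ s.card := by rw [Finset.prod_const]

lemma norm_prod_sub_prod_le {ι : Type*} [DecidableEq ι] (s : Finset ι) (f g : ι → ℂ) {R d : ℝ}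
    (hR : 1 ≤ R) (hd : 0 ≤ d) (hf : ∀ j ∈ s, ‖f j‖ ≤ R) (hg : ∀ j ∈ s, ‖g j‖ ≤ R)
    (hfg : ∀ j ∈ s, ‖f j - g j‖ ≤ d) :
    ‖∏ j ∈ s, f j - ∏ j ∈ s, g j‖ ≤ s.card * R ^ s.card * d := by
  have hR0 : (0:ℝ) ≤ R := le_trans zero_le_one hR
  induction s using Finset.induction_on with
  | empty => simp
  | insert a s h ih =>
      have hf' : ∀ j ∈ s, ‖f j‖ ≤ R := fun j hj => hf j (Finset.mem_insert_of_mem hj)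
      have hg' : ∀ j ∈ s, ‖g j‖ ≤ R := fun j hj => hg j (Finset.mem_insert_of_mem hj)
      have hfg' : ∀ j ∈ s, ‖f j - g j‖ ≤ d := fun j hj => hfg j (Finset.mem_insert_of_mem hj)
      have IH := ih hf' hg' hfg'
      rw [Finset.prod_insert h, Finset.prod_insert h, Finset.card_insert_of_notMem h]
      have key : f a * ∏ j ∈ s, f j - g a * ∏ j ∈ s, g j
          = f a * (∏ j ∈ s, f j - ∏ j ∈ s, g j) + (f a - g a) * ∏ j ∈ s, g j := by ring
      rw [key]
      have h1 : ‖f a * (∏ j ∈ s, f j - ∏ j ∈ s, g j)‖ ≤ R * (s.card * R ^ s.card * d) := by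
        rw [norm_mul]
        exact mul_le_mul (hf a (Finset.mem_insert_self a s)) IH (norm_nonneg _) hR0
      have h2 : ‖(f a - g a) * ∏ j ∈ s, g j‖ ≤ d * R ^ s.card := by
        rw [norm_mul]
        exact mul_le_mul (hfg a (Finset.mem_insert_self a s))
          (norm_prod_le_pow s g hR0 hg') (norm_nonneg _) hd
      have hpow : R ^ s.card ≤ R ^ (s.card + 1) := pow_le_pow_right₀ hR (Nat.le_succ _)
      have hc : (0:ℝ) ≤ (s.card : ℝ) := Nat.cast_nonneg _
      have hp0 : (0:ℝ) ≤ R ^ s.card := pow_nonneg hR0 _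
      have hps : R ^ (s.card + 1) = R ^ s.card * R := pow_succ R s.card
      have hfinal : R * (↑s.card * R ^ s.card * d) + d * R ^ s.card
          ≤ (↑(s.card + 1) : ℝ) * R ^ (s.card + 1) * d := by
        push_cast
        rw [hps]
        nlinarith [mul_le_mul_of_nonneg_left (le_mul_of_one_le_right hp0 hR) hd]
      exact le_trans (le_trans (norm_add_le _ _) (add_le_add h1 h2)) hfinal


abbrev Seq := BoundedContinuousFunction ℤ ℂ

/-- Generic solution predicate. -/
def GSol (P : (ℤ → ℂ) → ℤ → ℂ) (δ : ℝ) (α : ℕ → ℂ) (a : ℤ → ℝ → ℂ) : Prop :=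
  (∀ l : ℤ, l < 0 → ∀ t ∈ Set.Ico (0 : ℝ) δ, a l t = 0) ∧
  (∀ i : ℤ, 0 ≤ i → ∀ t ∈ Set.Ico (0 : ℝ) δ, HasDerivWithinAt (a i)
    (a i t * P (fun j => a j t) i) (Set.Ico (0 : ℝ) δ) t) ∧
  (∃ C : ℝ, ∀ i : ℤ, ∀ t ∈ Set.Ico (0 : ℝ) δ, ‖a i t‖ ≤ C) ∧
  (∀ i : ℕ, a (i : ℤ) 0 = α i)

section Generic

variable (P : (ℤ → ℂ) → ℤ → ℂ) (L K : ℝ → ℝ)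

/-- The hypotheses on the nonlinearity `P`. -/
def GoodP : Prop :=
  (∀ R, 1 ≤ R → 0 ≤ L R) ∧ (∀ R, 1 ≤ R → 0 ≤ K R) ∧
  (∀ R, 1 ≤ R → ∀ x : ℤ → ℂ, (∀ j, ‖x j‖ ≤ R) → ∀ i, ‖P x i‖ ≤ L R) ∧
  (∀ R, 1 ≤ R → ∀ d, 0 ≤ d → ∀ x y : ℤ → ℂ, (∀ j, ‖x j‖ ≤ R) → (∀ j, ‖y j‖ ≤ R) →
    (∀ j, ‖x j - y j‖ ≤ d) → ∀ i, ‖P x i - P y i‖ ≤ K R * d) ∧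
  (∀ (s : Set ℝ) (c : ℤ → ℝ → ℂ), (∀ j, ContinuousOn (c j) s) →
    ∀ i, ContinuousOn (fun t => P (fun j => c j t) i) s)

/-- The vector field on `Seq` given by the lattice. -/
def vecF (hG : GoodP P L K) (x : Seq) : Seq :=
  BoundedContinuousFunction.ofNormedAddCommGroupDiscrete
    (fun i : ℤ => if 0 ≤ i then x i * P (⇑x) i else 0)
    (max ‖x‖ 1 * L (max ‖x‖ 1)) (by
      intro i
      have hR : (1:ℝ) ≤ max ‖x‖ 1 := le_max_right _ _
      have hxj : ∀ j : ℤ, ‖x j‖ ≤ max ‖x‖ 1 :=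
        fun j => le_trans (x.norm_coe_le_norm j) (le_max_left _ _)
      by_cases h : 0 ≤ i
      · simp only [if_pos h, norm_mul]
        exact mul_le_mul (hxj i) (hG.2.2.1 _ hR _ hxj i) (norm_nonneg _)
          (le_trans zero_le_one hR)
      · simp only [if_neg h, norm_zero]
        exact mul_nonneg (le_trans zero_le_one hR) (hG.1 _ hR))

lemma vecF_apply (hG : GoodP P L K) (x : Seq) (i : ℤ) :
    vecF P L K hG x i = if 0 ≤ i then x i * P (⇑x) i else 0 := rfl

theorem gexists (hG : GoodP P L K) (α : ℕ → ℂ) (hαbd : ∃ C : ℝ, ∀ i, ‖α i‖ ≤ C) :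
    ∃ δ : ℝ, 0 < δ ∧ ∃ a, GSol P δ α a := by
  classical
  obtain ⟨C0, hC0⟩ := hαbd
  set x₀ : Seq := BoundedContinuousFunction.ofNormedAddCommGroupDiscrete
    (fun i : ℤ => if 0 ≤ i then α i.toNat else 0) (max C0 0) (by
      intro i
      by_cases h : 0 ≤ i
      · simpa [h] using (Or.inl (hC0 i.toNat) : ‖α i.toNat‖ ≤ C0 ∨ α i.toNat = 0)
      · simp [h]) with hx₀
  set R : ℝ := ‖x₀‖ + 2 with hRdef
  have hR1 : (1:ℝ) ≤ R := by have := norm_nonneg x₀; simp only [hRdef]; linarith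
  have hR0 : (0:ℝ) ≤ R := le_trans zero_le_one hR1
  set C : ℝ := R * L R with hCdef
  have hC : 0 ≤ C := mul_nonneg hR0 (hG.1 R hR1)
  set δ : ℝ := min 1 (1 / (C + 1)) with hδdef
  have hδpos : 0 < δ := lt_min one_pos (by positivity)
  -- coordinates of elements of the ball are bounded by R
  have hball : ∀ y : Seq, y ∈ closedBall x₀ 1 → ∀ j : ℤ, ‖y j‖ ≤ R := by
    intro y hy j
    have h1 : ‖y‖ ≤ ‖x₀‖ + 1 := by
      have := mem_closedBall_iff_norm.1 hy
      calc ‖y‖ = ‖x₀ + (y - x₀)‖ := by ring_nf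
        _ ≤ ‖x₀‖ + ‖y - x₀‖ := norm_add_le _ _
        _ ≤ ‖x₀‖ + 1 := by linarith
    exact le_trans (y.norm_coe_le_norm j) (by simp only [hRdef]; linarith)
  have hKey : IsPicardLindelof (fun _ : ℝ => vecF P L K hG) (tmin := 0) (tmax := δ)
      ⟨0, ⟨le_refl _, le_of_lt hδpos⟩⟩ x₀ 1 0 (Real.toNNReal C)
      (Real.toNNReal (L R + R * K R)) := by
    constructor
    · intro t _
      apply LipschitzOnWith.of_dist_le_mul
      intro x hx y hy
      rw [dist_eq_norm, dist_eq_norm]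
      have hnn : 0 ≤ L R + R * K R :=
        add_nonneg (hG.1 R hR1) (mul_nonneg hR0 (hG.2.1 R hR1))
      rw [Real.coe_toNNReal _ hnn]
      have hxy : ∀ j : ℤ, ‖x j - y j‖ ≤ ‖x - y‖ := by
        intro j
        have := (x - y).norm_coe_le_norm j
        simpa using this
      refine (BoundedContinuousFunction.norm_le
        (mul_nonneg hnn (norm_nonneg _))).2 (fun i => ?_)
      have hcoe : (vecF P L K hG x - vecF P L K hG y) i
          = vecF P L K hG x i - vecF P L K hG y i := rfl
      rw [hcoe, vecF_apply, vecF_apply]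
      by_cases h : 0 ≤ i
      · simp only [if_pos h]
        have hsplit : x i * P (⇑x) i - y i * P (⇑y) i
            = (x i - y i) * P (⇑x) i + y i * (P (⇑x) i - P (⇑y) i) := by ring
        rw [hsplit]
        have h1 : ‖(x i - y i) * P (⇑x) i‖ ≤ ‖x - y‖ * L R := by
          rw [norm_mul]
          exact mul_le_mul (hxy i) (hG.2.2.1 R hR1 _ (hball x hx) i)
            (norm_nonneg _) (norm_nonneg _)
        have h2 : ‖y i * (P (⇑x) i - P (⇑y) i)‖ ≤ R * (K R * ‖x - y‖) := by
          rw [norm_mul]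
          exact mul_le_mul (hball y hy i)
            (hG.2.2.2.1 R hR1 _ (norm_nonneg _) _ _ (hball x hx) (hball y hy) hxy i)
            (norm_nonneg _) hR0
        calc ‖_ + _‖ ≤ ‖(x i - y i) * P (⇑x) i‖ + ‖y i * (P (⇑x) i - P (⇑y) i)‖ :=
              norm_add_le _ _
          _ ≤ ‖x - y‖ * L R + R * (K R * ‖x - y‖) := add_le_add h1 h2
          _ = (L R + R * K R) * ‖x - y‖ := by ring
      · simp only [if_neg h, sub_zero, norm_zero]
        positivity
    · intro x _
      exact continuousOn_const
    · intro t _ x hx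
      rw [Real.coe_toNNReal _ hC]
      refine (BoundedContinuousFunction.norm_le hC).2 (fun i => ?_)
      rw [vecF_apply]
      by_cases h : 0 ≤ i
      · simp only [if_pos h, norm_mul]
        exact mul_le_mul (hball x hx i) (hG.2.2.1 R hR1 _ (hball x hx) i)
          (norm_nonneg _) hR0
      · simp only [if_neg h, norm_zero]; exact hC
    · rw [Real.coe_toNNReal _ hC]
      show C * max (δ - 0) (0 - 0) ≤ ((1:NNReal):ℝ) - ((0:NNReal):ℝ)
      rw [NNReal.coe_one, NNReal.coe_zero, sub_zero (1:ℝ)]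
      have h1 : max (δ - 0) (0 - 0) = δ := by
        simp [le_of_lt hδpos]
      rw [h1]
      have h2 : δ ≤ 1 / (C + 1) := min_le_right _ _
      calc C * δ ≤ C * (1 / (C + 1)) := by
            exact mul_le_mul_of_nonneg_left h2 hC
        _ ≤ 1 := by
            rw [mul_one_div, div_le_one (by linarith : (0:ℝ) < C + 1)]
            linarith
  obtain ⟨f, hf0 : f 0 = x₀, hfd⟩ := hKey.exists_eq_forall_mem_Icc_hasDerivWithinAt₀
  refine ⟨δ, hδpos, fun i t => f t i, ?_, ?_, ?_, ?_⟩
  · -- negative coordinates vanish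
    intro l hl t ht
    have hder : ∀ s ∈ Icc (0:ℝ) δ,
        HasDerivWithinAt (fun u => f u l) ((0 : Seq →L[ℝ] ℂ) 0) (Icc (0:ℝ) δ) s := by
      intro s hs
      have h1 := ((BoundedContinuousFunction.evalCLM ℝ (β := ℂ) l).hasFDerivAt).comp_hasDerivWithinAt
        s (hfd s hs)
      have h2 : BoundedContinuousFunction.evalCLM ℝ (β := ℂ) l (vecF P L K hG (f s)) = 0 := by
        show vecF P L K hG (f s) l = 0
        rw [vecF_apply, if_neg (not_le.2 hl)]
      rw [h2] at h1
      exact h1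
    have hconst := Convex.norm_image_sub_le_of_norm_hasDerivWithin_le
      (f' := fun _ => (0 : ℂ)) (C := 0)
      (fun s hs => by simpa using hder s hs) (fun s _ => by simp)
      (convex_Icc (0:ℝ) δ) (Set.left_mem_Icc.2 (le_of_lt hδpos))
      (Set.mem_Icc.2 ⟨ht.1, le_of_lt ht.2⟩)
    simp only [zero_mul, norm_le_zero_iff, sub_eq_zero] at hconst
    show f t l = 0
    rw [hconst, hf0]
    show (if 0 ≤ l then α l.toNat else 0) = 0
    rw [if_neg (not_le.2 hl)]
  · -- the ODE on nonnegative coordinates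
    intro i hi t ht
    have ht' : t ∈ Icc (0:ℝ) δ := ⟨ht.1, le_of_lt ht.2⟩
    have h1 := ((BoundedContinuousFunction.evalCLM ℝ (β := ℂ) i).hasFDerivAt).comp_hasDerivWithinAt
      t (hfd t ht')
    have h2 : BoundedContinuousFunction.evalCLM ℝ (β := ℂ) i (vecF P L K hG (f t))
        = f t i * P (fun j => f t j) i := by
      show vecF P L K hG (f t) i = _
      rw [vecF_apply, if_pos hi]
    rw [h2] at h1
    exact (h1.mono Set.Ico_subset_Icc_self)
  · -- boundedness
    have hcont : ContinuousOn f (Icc (0:ℝ) δ) :=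
      fun s hs => (hfd s hs).continuousWithinAt
    obtain ⟨Cb, hCb⟩ := isCompact_Icc.exists_bound_of_continuousOn hcont
    exact ⟨Cb, fun i t ht => le_trans ((f t).norm_coe_le_norm i)
      (hCb t ⟨ht.1, le_of_lt ht.2⟩)⟩
  · -- initial condition
    intro i
    show f 0 (i : ℤ) = α i
    rw [hf0]
    show (if (0:ℤ) ≤ (i:ℤ) then α ((i:ℤ)).toNat else 0) = α i
    rw [if_pos (Int.natCast_nonneg i)]
    simp

theorem guniq (hG : GoodP P L K) (δ : ℝ) (α : ℕ → ℂ) (a a' : ℤ → ℝ → ℂ)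
    (ha : GSol P δ α a) (ha' : GSol P δ α a') :
    ∀ i : ℤ, ∀ t ∈ Set.Ico (0:ℝ) δ, a i t = a' i t := by
  obtain ⟨haneg, hader, ⟨Ca, hCa⟩, hainit⟩ := ha
  obtain ⟨ha'neg, ha'der, ⟨Ca', hCa'⟩, ha'init⟩ := ha'
  set C : ℝ := max (max Ca Ca') 1 with hCdef
  have hC1 : (1:ℝ) ≤ C := le_max_right _ _
  have hC0 : (0:ℝ) ≤ C := le_trans zero_le_one hC1
  have hCa2 : ∀ j t, t ∈ Ico (0:ℝ) δ → ‖a j t‖ ≤ C :=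
    fun j t ht => (hCa j t ht).trans ((le_max_left _ _).trans (le_max_left _ _))
  have hCa'2 : ∀ j t, t ∈ Ico (0:ℝ) δ → ‖a' j t‖ ≤ C :=
    fun j t ht => (hCa' j t ht).trans ((le_max_right _ _).trans (le_max_left _ _))
  set K0 : ℝ := L C + C * K C with hK0def
  have hK0 : 0 ≤ K0 := add_nonneg (hG.1 C hC1) (mul_nonneg hC0 (hG.2.1 C hC1))
  have hacont : ∀ i, ContinuousOn (a i) (Ico (0:ℝ) δ) := by
    intro i
    rcases le_or_gt 0 i with hi | hi
    · exact fun t ht => (hader i hi t ht).continuousWithinAt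
    · exact continuousOn_const.congr (fun t ht => haneg i hi t ht)
  have ha'cont : ∀ i, ContinuousOn (a' i) (Ico (0:ℝ) δ) := by
    intro i
    rcases le_or_gt 0 i with hi | hi
    · exact fun t ht => (ha'der i hi t ht).continuousWithinAt
    · exact continuousOn_const.congr (fun t ht => ha'neg i hi t ht)
  -- bound for the difference of the right-hand sides
  have hgb : ∀ t, t ∈ Ico (0:ℝ) δ → ∀ h : ℝ, 0 ≤ h → (∀ j, ‖a j t - a' j t‖ ≤ h) →
      ∀ i : ℤ, ‖a i t * P (fun j => a j t) i - a' i t * P (fun j => a' j t) i‖ ≤ K0 * h := by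
    intro t ht h h0 hj i
    have hsplit : a i t * P (fun j => a j t) i - a' i t * P (fun j => a' j t) i
        = (a i t - a' i t) * P (fun j => a j t) i
          + a' i t * (P (fun j => a j t) i - P (fun j => a' j t) i) := by ring
    rw [hsplit]
    have h1 : ‖(a i t - a' i t) * P (fun j => a j t) i‖ ≤ h * L C := by
      rw [norm_mul]
      exact mul_le_mul (hj i) (hG.2.2.1 C hC1 _ (fun j => hCa2 j t ht) i)
        (norm_nonneg _) h0
    have h2 : ‖a' i t * (P (fun j => a j t) i - P (fun j => a' j t) i)‖
        ≤ C * (K C * h) := by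
      rw [norm_mul]
      exact mul_le_mul (hCa'2 i t ht)
        (hG.2.2.2.1 C hC1 h h0 _ _ (fun j => hCa2 j t ht) (fun j => hCa'2 j t ht) hj i)
        (norm_nonneg _) hC0
    calc ‖_ + _‖ ≤ _ := norm_add_le _ _
      _ ≤ h * L C + C * (K C * h) := add_le_add h1 h2
      _ = K0 * h := by rw [hK0def]; ring
  -- main induction
  have main : ∀ n : ℕ, ∀ i : ℤ, ∀ t ∈ Ico (0:ℝ) δ,
      ‖a i t - a' i t‖ ≤ 2 * C * K0 ^ n * t ^ n / (n.factorial : ℝ) := by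
    intro n
    induction n with
    | zero =>
        intro i t ht
        simp only [pow_zero, Nat.factorial_zero, Nat.cast_one, mul_one, div_one]
        calc ‖a i t - a' i t‖ ≤ ‖a i t‖ + ‖a' i t‖ := norm_sub_le _ _
          _ ≤ 2 * C := by
              have := hCa2 i t ht; have := hCa'2 i t ht; linarith
    | succ n IH =>
        intro i t ht
        rcases lt_or_ge i 0 with hi | hi
        · rw [haneg i hi t ht, ha'neg i hi t ht, sub_zero, norm_zero]
          have : (0:ℝ) ≤ t := ht.1
          positivity
        · -- FTC argument
          have hsub : Icc (0:ℝ) t ⊆ Ico (0:ℝ) δ := fun s hs =>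
            ⟨hs.1, lt_of_le_of_lt hs.2 ht.2⟩
          set D : ℝ → ℂ := fun s => a i s - a' i s with hDdef
          set G : ℝ → ℂ := fun s =>
            a i s * P (fun j => a j s) i - a' i s * P (fun j => a' j s) i with hGdef
          have hD0 : D 0 = 0 := by
            have hnat : ((i.toNat : ℕ) : ℤ) = i := Int.toNat_of_nonneg hi
            simp only [hDdef]
            rw [← hnat, hainit, ha'init, sub_self]
          have hDcont : ContinuousOn D (Icc 0 t) :=
            ((hacont i).mono hsub).sub ((ha'cont i).mono hsub)
          have hGcont : ContinuousOn G (Icc 0 t) := by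
            refine ContinuousOn.sub ?_ ?_
            · exact ((hacont i).mono hsub).mul
                ((hG.2.2.2.2 _ a hacont i).mono hsub)
            · exact ((ha'cont i).mono hsub).mul
                ((hG.2.2.2.2 _ a' ha'cont i).mono hsub)
          have hGint : IntervalIntegrable G MeasureTheory.volume 0 t := by
            apply ContinuousOn.intervalIntegrable
            rwa [Set.uIcc_of_le ht.1]
          have hDder : ∀ s ∈ Ioo (0:ℝ) t, HasDerivWithinAt D (G s) (Ioi s) s := by
            intro s hs
            have hsm : s ∈ Ico (0:ℝ) δ := hsub ⟨le_of_lt hs.1, le_of_lt hs.2⟩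
            have hnhds : Ico (0:ℝ) δ ∈ nhds s :=
              Ico_mem_nhds (lt_of_lt_of_le hs.1 (le_refl s) |>.trans_le (le_refl s)) hsm.2
            have h1 := ((hader i hi s hsm).hasDerivAt hnhds).sub
              ((ha'der i hi s hsm).hasDerivAt hnhds)
            exact h1.hasDerivWithinAt
          have hFTC : ∫ s in (0:ℝ)..t, G s = D t - D 0 :=
            intervalIntegral.integral_eq_sub_of_hasDeriv_right_of_le ht.1 hDcont hDder hGint
          have hGbd : ∀ s ∈ Icc (0:ℝ) t, ‖G s‖
              ≤ 2 * C * K0 ^ (n + 1) / (n.factorial : ℝ) * s ^ n := by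
            intro s hs
            have hsm : s ∈ Ico (0:ℝ) δ := hsub hs
            have := hgb s hsm (2 * C * K0 ^ n * s ^ n / (n.factorial : ℝ))
              (by have := hs.1; positivity) (fun j => IH j s hsm) i
            calc ‖G s‖ ≤ K0 * (2 * C * K0 ^ n * s ^ n / (n.factorial : ℝ)) := this
              _ = 2 * C * K0 ^ (n + 1) / (n.factorial : ℝ) * s ^ n := by
                  rw [pow_succ]; ring
          have hnormint : ‖∫ s in (0:ℝ)..t, G s‖
              ≤ 2 * C * K0 ^ (n + 1) / (n.factorial : ℝ) * (t ^ (n + 1) / (n + 1)) := by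
            calc ‖∫ s in (0:ℝ)..t, G s‖ ≤ ∫ s in (0:ℝ)..t, ‖G s‖ :=
                  intervalIntegral.norm_integral_le_integral_norm ht.1
              _ ≤ ∫ s in (0:ℝ)..t, 2 * C * K0 ^ (n + 1) / (n.factorial : ℝ) * s ^ n := by
                  apply intervalIntegral.integral_mono_on ht.1 hGint.norm
                  · exact (Continuous.intervalIntegrable (continuous_const.mul (continuous_pow n)) 0 t)
                  · exact hGbd
              _ = 2 * C * K0 ^ (n + 1) / (n.factorial : ℝ) * (t ^ (n + 1) / (n + 1)) := by
                  rw [intervalIntegral.integral_const_mul, integral_pow]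
                  norm_num
          have hDt : ‖D t‖ ≤ 2 * C * K0 ^ (n + 1) / (n.factorial : ℝ)
              * (t ^ (n + 1) / (n + 1)) := by
            rw [← sub_zero (D t), ← hD0, ← hFTC]; exact hnormint
          calc ‖a i t - a' i t‖ = ‖D t‖ := rfl
            _ ≤ 2 * C * K0 ^ (n + 1) / (n.factorial : ℝ) * (t ^ (n + 1) / (n + 1)) := hDt
            _ = 2 * C * K0 ^ (n + 1) * t ^ (n + 1) / ((n + 1).factorial : ℝ) := by
                have h3 : (((n + 1).factorial : ℕ) : ℝ) = ((n : ℝ) + 1) * (n.factorial : ℝ) := by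
                  rw [Nat.factorial_succ]; push_cast; ring
                rw [h3, div_mul_div_comm, mul_comm ((n.factorial : ℝ)) ((n : ℝ) + 1)]
  -- pass to the limit
  intro i t ht
  have hlim : Filter.Tendsto (fun n : ℕ => 2 * C * ((K0 * t) ^ n / (n.factorial : ℝ)))
      Filter.atTop (nhds (2 * C * 0)) :=
    (FloorSemiring.tendsto_pow_div_factorial_atTop (K0 * t)).const_mul (2 * C)
  rw [mul_zero] at hlim
  have hle : ∀ n : ℕ, ‖a i t - a' i t‖ ≤ 2 * C * ((K0 * t) ^ n / (n.factorial : ℝ)) := by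
    intro n
    have := main n i t ht
    calc ‖a i t - a' i t‖ ≤ 2 * C * K0 ^ n * t ^ n / (n.factorial : ℝ) := this
      _ = 2 * C * ((K0 * t) ^ n / (n.factorial : ℝ)) := by rw [mul_pow]; ring
  have : ‖a i t - a' i t‖ ≤ 0 := ge_of_tendsto' hlim hle
  have := le_antisymm this (norm_nonneg _)
  rwa [norm_eq_zero, sub_eq_zero] at this

end Generic

theorem gmono {P : (ℤ → ℂ) → ℤ → ℂ} {δ δ' : ℝ} {α : ℕ → ℂ} {a : ℤ → ℝ → ℂ}
    (hle : δ ≤ δ') (h : GSol P δ' α a) : GSol P δ α a := by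
  obtain ⟨h1, h2, ⟨C, h3⟩, h4⟩ := h
  have hsub : Ico (0:ℝ) δ ⊆ Ico (0:ℝ) δ' := Ico_subset_Ico_right hle
  exact ⟨fun l hl t ht => h1 l hl t (hsub ht),
    fun i hi t ht => (h2 i hi t (hsub ht)).mono hsub,
    ⟨C, fun i t ht => h3 i t (hsub ht)⟩, h4⟩

def PA (p : ℕ) (x : ℤ → ℂ) (i : ℤ) : ℂ :=
  ∏ j ∈ Finset.Icc 1 p, x (i + (j : ℤ)) - ∏ j ∈ Finset.Icc 1 p, x (i - (j : ℤ))

def PB (p : ℕ) (x : ℤ → ℂ) (i : ℤ) : ℂ :=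
  ∑ j ∈ Finset.Icc 1 p, x (i + (j : ℤ)) - ∑ j ∈ Finset.Icc 1 p, x (i - (j : ℤ))

lemma card_Icc_one (p : ℕ) : (Finset.Icc 1 p).card = p := by
  rw [Nat.card_Icc]; omega

theorem goodPA (p : ℕ) : GoodP (PA p) (fun R => 2 * R ^ p) (fun R => 2 * p * R ^ p) := by
  refine ⟨?_, ?_, ?_, ?_, ?_⟩
  · intro R hR; positivity
  · intro R hR; positivity
  · intro R hR x hx i
    have hR0 : (0:ℝ) ≤ R := le_trans zero_le_one hR
    have h1 : ‖∏ j ∈ Finset.Icc 1 p, x (i + (j : ℤ))‖ ≤ R ^ p := by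
      have := norm_prod_le_pow (Finset.Icc 1 p) (fun j => x (i + (j : ℤ))) hR0
        (fun j _ => hx _)
      rwa [card_Icc_one] at this
    have h2 : ‖∏ j ∈ Finset.Icc 1 p, x (i - (j : ℤ))‖ ≤ R ^ p := by
      have := norm_prod_le_pow (Finset.Icc 1 p) (fun j => x (i - (j : ℤ))) hR0
        (fun j _ => hx _)
      rwa [card_Icc_one] at this
    calc ‖PA p x i‖ ≤ ‖∏ j ∈ Finset.Icc 1 p, x (i + (j : ℤ))‖
          + ‖∏ j ∈ Finset.Icc 1 p, x (i - (j : ℤ))‖ := norm_sub_le _ _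
      _ ≤ 2 * R ^ p := by linarith
  · intro R hR d hd x y hx hy hxy i
    have h1 : ‖∏ j ∈ Finset.Icc 1 p, x (i + (j : ℤ))
        - ∏ j ∈ Finset.Icc 1 p, y (i + (j : ℤ))‖ ≤ p * R ^ p * d := by
      have := norm_prod_sub_prod_le (Finset.Icc 1 p) (fun j => x (i + (j : ℤ)))
        (fun j => y (i + (j : ℤ))) hR hd (fun j _ => hx _) (fun j _ => hy _)
        (fun j _ => hxy _)
      rwa [card_Icc_one] at this
    have h2 : ‖∏ j ∈ Finset.Icc 1 p, x (i - (j : ℤ))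
        - ∏ j ∈ Finset.Icc 1 p, y (i - (j : ℤ))‖ ≤ p * R ^ p * d := by
      have := norm_prod_sub_prod_le (Finset.Icc 1 p) (fun j => x (i - (j : ℤ)))
        (fun j => y (i - (j : ℤ))) hR hd (fun j _ => hx _) (fun j _ => hy _)
        (fun j _ => hxy _)
      rwa [card_Icc_one] at this
    have key : PA p x i - PA p y i
        = (∏ j ∈ Finset.Icc 1 p, x (i + (j : ℤ)) - ∏ j ∈ Finset.Icc 1 p, y (i + (j : ℤ)))
          - (∏ j ∈ Finset.Icc 1 p, x (i - (j : ℤ))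
            - ∏ j ∈ Finset.Icc 1 p, y (i - (j : ℤ))) := by
      simp only [PA]; ring
    rw [key]
    calc ‖_ - _‖ ≤ _ := norm_sub_le _ _
      _ ≤ p * R ^ p * d + p * R ^ p * d := add_le_add h1 h2
      _ = 2 * p * R ^ p * d := by ring
  · intro s c hc i
    apply ContinuousOn.sub
    · exact continuousOn_finset_prod _ (fun j _ => hc (i + (j : ℤ)))
    · exact continuousOn_finset_prod _ (fun j _ => hc (i - (j : ℤ)))

theorem goodPB (p : ℕ) : GoodP (PB p) (fun R => 2 * p * R) (fun _ => 2 * p) := by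
  refine ⟨?_, ?_, ?_, ?_, ?_⟩
  · intro R hR
    have : (0:ℝ) ≤ R := le_trans zero_le_one hR
    positivity
  · intro R hR; positivity
  · intro R hR x hx i
    have h1 : ‖∑ j ∈ Finset.Icc 1 p, x (i + (j : ℤ))‖ ≤ p * R := by
      calc ‖∑ j ∈ Finset.Icc 1 p, x (i + (j : ℤ))‖
          ≤ ∑ j ∈ Finset.Icc 1 p, ‖x (i + (j : ℤ))‖ := norm_sum_le _ _
        _ ≤ ∑ _j ∈ Finset.Icc 1 p, R := Finset.sum_le_sum (fun j _ => hx _)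
        _ = p * R := by rw [Finset.sum_const, card_Icc_one]; simp [nsmul_eq_mul]
    have h2 : ‖∑ j ∈ Finset.Icc 1 p, x (i - (j : ℤ))‖ ≤ p * R := by
      calc ‖∑ j ∈ Finset.Icc 1 p, x (i - (j : ℤ))‖
          ≤ ∑ j ∈ Finset.Icc 1 p, ‖x (i - (j : ℤ))‖ := norm_sum_le _ _
        _ ≤ ∑ _j ∈ Finset.Icc 1 p, R := Finset.sum_le_sum (fun j _ => hx _)
        _ = p * R := by rw [Finset.sum_const, card_Icc_one]; simp [nsmul_eq_mul]
    calc ‖PB p x i‖ ≤ _ + _ := norm_sub_le _ _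
      _ ≤ p * R + p * R := add_le_add h1 h2
      _ = 2 * p * R := by ring
  · intro R hR d hd x y hx hy hxy i
    have h1 : ‖∑ j ∈ Finset.Icc 1 p, x (i + (j : ℤ))
        - ∑ j ∈ Finset.Icc 1 p, y (i + (j : ℤ))‖ ≤ p * d := by
      rw [← Finset.sum_sub_distrib]
      calc ‖∑ j ∈ Finset.Icc 1 p, (x (i + (j : ℤ)) - y (i + (j : ℤ)))‖
          ≤ ∑ j ∈ Finset.Icc 1 p, ‖x (i + (j : ℤ)) - y (i + (j : ℤ))‖ := norm_sum_le _ _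
        _ ≤ ∑ _j ∈ Finset.Icc 1 p, d := Finset.sum_le_sum (fun j _ => hxy _)
        _ = p * d := by rw [Finset.sum_const, card_Icc_one]; simp [nsmul_eq_mul]
    have h2 : ‖∑ j ∈ Finset.Icc 1 p, x (i - (j : ℤ))
        - ∑ j ∈ Finset.Icc 1 p, y (i - (j : ℤ))‖ ≤ p * d := by
      rw [← Finset.sum_sub_distrib]
      calc ‖∑ j ∈ Finset.Icc 1 p, (x (i - (j : ℤ)) - y (i - (j : ℤ)))‖
          ≤ ∑ j ∈ Finset.Icc 1 p, ‖x (i - (j : ℤ)) - y (i - (j : ℤ))‖ := norm_sum_le _ _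
        _ ≤ ∑ _j ∈ Finset.Icc 1 p, d := Finset.sum_le_sum (fun j _ => hxy _)
        _ = p * d := by rw [Finset.sum_const, card_Icc_one]; simp [nsmul_eq_mul]
    have key : PB p x i - PB p y i
        = (∑ j ∈ Finset.Icc 1 p, x (i + (j : ℤ)) - ∑ j ∈ Finset.Icc 1 p, y (i + (j : ℤ)))
          - (∑ j ∈ Finset.Icc 1 p, x (i - (j : ℤ))
            - ∑ j ∈ Finset.Icc 1 p, y (i - (j : ℤ))) := by
      simp only [PB]; ring
    rw [key]
    calc ‖_ - _‖ ≤ _ := norm_sub_le _ _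
      _ ≤ p * d + p * d := add_le_add h1 h2
      _ = 2 * p * d := by ring
  · intro s c hc i
    apply ContinuousOn.sub
    · exact continuousOn_finset_sum _ (fun j _ => hc (i + (j : ℤ)))
    · exact continuousOn_finset_sum _ (fun j _ => hc (i - (j : ℤ)))

end BogAux


/-- Local existence and uniqueness of bounded solutions of the Cauchy problems for both
semi-infinite Bogoyavlensky lattices, for bounded nonvanishing initial data. -/
theorem local_existence_uniqueness (p : ℕ) (hp : 1 ≤ p) (α β : ℕ → ℂ)
    (hα : ∀ i, α i ≠ 0) (hβ : ∀ i, β i ≠ 0)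
    (hαbd : ∃ C : ℝ, ∀ i, ‖α i‖ ≤ C) (hβbd : ∃ C : ℝ, ∀ i, ‖β i‖ ≤ C) :
    ∃ δ : ℝ, 0 < δ ∧
      (∃ a, IsBoundedSolA p δ α a) ∧
      (∀ a a', IsBoundedSolA p δ α a → IsBoundedSolA p δ α a' →
        ∀ i : ℤ, ∀ t ∈ Set.Ico (0 : ℝ) δ, a i t = a' i t) ∧
      (∃ b, IsBoundedSolB p δ β b) ∧
      (∀ b b', IsBoundedSolB p δ β b → IsBoundedSolB p δ β b' →
        ∀ i : ℤ, ∀ t ∈ Set.Ico (0 : ℝ) δ, b i t = b' i t) := by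
  classical
  obtain ⟨δa, hδa, a, hA⟩ := BogAux.gexists (BogAux.PA p) _ _ (BogAux.goodPA p) α hαbd
  obtain ⟨δb, hδb, b, hB⟩ := BogAux.gexists (BogAux.PB p) _ _ (BogAux.goodPB p) β hβbd
  refine ⟨min δa δb, lt_min hδa hδb, ⟨a, ?_⟩, ?_, ⟨b, ?_⟩, ?_⟩
  · exact BogAux.gmono (min_le_left _ _) hA
  · intro x x' hx hx' i t ht
    exact BogAux.guniq _ _ _ (BogAux.goodPA p) _ α x x' hx hx' i t ht
  · exact BogAux.gmono (min_le_right _ _) hB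
  · intro x x' hx hx' i t ht
    exact BogAux.guniq _ _ _ (BogAux.goodPB p) _ β x x' hx hx' i t ht
end
end

section
/- Let p ≥ 2 and let (a_i)_{i≥0} be a solution of the semi-infinite lattice a_i' = a_i(∏_{j=1}^p a_{i+j} − ∏_{j=1}^p a_{i−j}) on [0,T) with a_i(t) ≠ 0 for all i,t (and a_l ≡ 0 for l < 0). Put b_i(t) := a_i(t) a_{i+1}(t) ⋯ a_{i+p−1}(t). Let S_k^l(t) be the moments of L1(t) built from (a_i(t)) and S̃_k^l(t) the moments of L2(t) built from (b_i(t)). Then for every t ∈ [0,T), every k ≥ 0 and every 1 ≤ l ≤ p: S_{l−1}^l(t) ≠ 0 and S_k^l(t) = S_{l−1}^l(t)·S̃_k^l(t) (equivalently, S_k^l(t)/S_{l−1}^l(t) = S̃_k^l(t)). -/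
open scoped BigOperators

noncomputable section

namespace MMaux

variable (p : ℕ) (A B : ℕ → ℂ)

/-- Diagonal gauge: `D_m = a_0 ⋯ a_{m-1}`. -/
def Dfun (A : ℕ → ℂ) (m : ℕ) : ℂ := ∏ j ∈ Finset.range m, A j

/-- The Miura transform `b_n = a_n ⋯ a_{n+p-1}`. -/
def Bof (p : ℕ) (A : ℕ → ℂ) : ℕ → ℂ := fun n => ∏ j ∈ Finset.range p, A (n + j)

def ffun (k m : ℕ) : ℂ := (L1apply p A)^[k] (stdBasis 0) m

def gfun (k m : ℕ) : ℂ := (L2apply p B)^[k] (stdBasis m) 0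

lemma L1apply_eval (v : ℕ → ℂ) (m : ℕ) :
    L1apply p A v m = v (m + p) + (if m = 0 then 0 else A (m - 1) * v (m - 1)) := by
  unfold L1apply L1entry
  have h : ∀ j ∈ Finset.range (m + p + 1),
      (if j = m + p then (1:ℂ) else if m = j + 1 then A j else 0) * v j
        = (if j = m + p then v j else 0) + (if m = j + 1 then A j * v j else 0) := by
    intro j hj
    by_cases h1 : j = m + p
    · subst h1
      have h2 : ¬ (m = m + p + 1) := by omega
      rw [if_pos rfl, if_pos rfl, if_neg h2, one_mul, add_zero]
    · rw [if_neg h1, if_neg h1, zero_add]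
      by_cases h2 : m = j + 1 <;> simp [h2]
  rw [Finset.sum_congr rfl h, Finset.sum_add_distrib]
  congr 1
  · rw [Finset.sum_ite_eq' (Finset.range (m + p + 1)) (m + p) v]
    simp
  · rcases m with _ | m'
    · simp
    · have h3 : ∀ j : ℕ, (m' + 1 = j + 1) = (j = m') := by
        intro j; simp [eq_comm]
      simp only [h3]
      rw [Finset.sum_ite_eq' (Finset.range (m' + 1 + p + 1)) m' (fun j => A j * v j)]
      have hmem : m' ∈ Finset.range (m' + 1 + p + 1) := Finset.mem_range.mpr (by omega)
      simp [hmem]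

lemma L2apply_std (m : ℕ) :
    L2apply p B (stdBasis m) =
      fun i => (if m = 0 then 0 else stdBasis (m - 1) i) + B m * stdBasis (m + p) i := by
  funext i
  unfold L2apply L2entry stdBasis
  have h : ∀ k ∈ Finset.range (i + 2),
      (if k = i + 1 then (1:ℂ) else if i = k + p then B k else 0) * (if k = m then 1 else 0)
        = if k = m then (if k = i + 1 then (1:ℂ) else if i = k + p then B k else 0) else 0 := by
    intro k _
    by_cases hk : k = m <;> simp [hk]
  rw [Finset.sum_congr rfl h, Finset.sum_ite_eq']
  simp only [Finset.mem_range]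
  split_ifs <;> (first | ring1 | (exfalso; omega))

lemma L2apply_lin (u v : ℕ → ℂ) (c : ℂ) :
    L2apply p B (fun i => u i + c * v i) = fun i => L2apply p B u i + c * L2apply p B v i := by
  funext i
  unfold L2apply
  rw [Finset.mul_sum, ← Finset.sum_add_distrib]
  exact Finset.sum_congr rfl (fun k _ => by ring)

lemma iterL2_lin (k : ℕ) : ∀ (u v : ℕ → ℂ) (c : ℂ),
    (L2apply p B)^[k] (fun i => u i + c * v i)
      = fun i => (L2apply p B)^[k] u i + c * (L2apply p B)^[k] v i := by
  induction k with
  | zero => intro u v c; simp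
  | succ k ih =>
    intro u v c
    rw [Function.iterate_succ_apply, Function.iterate_succ_apply, Function.iterate_succ_apply,
      L2apply_lin, ih]

lemma iterL2_zero (k : ℕ) : (L2apply p B)^[k] (fun _ => (0:ℂ)) = fun _ => 0 := by
  induction k with
  | zero => rfl
  | succ k ih =>
    rw [Function.iterate_succ_apply]
    have h : L2apply p B (fun _ => (0:ℂ)) = fun _ => 0 := by
      funext i; simp [L2apply]
    rw [h, ih]

lemma gfun_succ (k m : ℕ) :
    gfun p B (k + 1) m = (if m = 0 then 0 else gfun p B k (m - 1)) + B m * gfun p B k (m + p) := by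
  unfold gfun
  rw [Function.iterate_succ_apply, L2apply_std]
  by_cases hm : m = 0
  · subst hm
    have hfun : (fun i => (if (0:ℕ) = 0 then (0:ℂ) else stdBasis (0 - 1) i)
          + B 0 * stdBasis (0 + p) i)
        = fun i => (fun _ => (0:ℂ)) i + B 0 * stdBasis (0 + p) i := by
      funext i; simp
    rw [hfun, iterL2_lin p B k (fun _ => 0) (stdBasis (0 + p)) (B 0), iterL2_zero]
    simp
  · simp only [if_neg hm]
    rw [iterL2_lin p B k (stdBasis (m - 1)) (stdBasis (m + p)) (B m)]

lemma gfun_vanish : ∀ k m, k < m → gfun p B k m = 0 := by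
  intro k
  induction k with
  | zero =>
    intro m hm
    unfold gfun stdBasis
    simp only [Function.iterate_zero, id]
    rw [if_neg (by omega)]
  | succ k ih =>
    intro m hm
    rw [gfun_succ, if_neg (by omega : ¬ m = 0), ih (m - 1) (by omega), ih (m + p) (by omega),
      mul_zero, add_zero]

lemma gfun_diag : ∀ k, gfun p B k k = 1 := by
  intro k
  induction k with
  | zero =>
    unfold gfun stdBasis
    simp
  | succ k ih =>
    rw [gfun_succ, if_neg (Nat.succ_ne_zero k)]
    simp only [Nat.add_sub_cancel]
    rw [ih, gfun_vanish p B k (k + 1 + p) (by omega), mul_zero, add_zero]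

lemma ffun_succ (k m : ℕ) :
    ffun p A (k + 1) m
      = ffun p A k (m + p) + (if m = 0 then 0 else A (m - 1) * ffun p A k (m - 1)) := by
  unfold ffun
  rw [Function.iterate_succ_apply', L1apply_eval]

lemma Dfun_mul_Bof (m : ℕ) : Dfun A m * Bof p A m = Dfun A (m + p) := by
  unfold Dfun Bof
  rw [Finset.prod_range_add]

lemma key : ∀ k m, ffun p A k m = Dfun A m * gfun p (Bof p A) k m := by
  intro k
  induction k with
  | zero =>
    intro m
    unfold ffun gfun Dfun stdBasis
    simp only [Function.iterate_zero, id]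
    rcases m with _ | m'
    · simp
    · simp [Nat.succ_ne_zero, (Nat.succ_ne_zero m').symm]
  | succ k ih =>
    intro m
    rw [ffun_succ, gfun_succ, ih (m + p), ih (m - 1)]
    by_cases hm : m = 0
    · subst hm
      rw [← Dfun_mul_Bof p A 0]
      simp [Dfun]
    · simp only [if_neg hm]
      obtain ⟨m', rfl⟩ : ∃ m'', m = m'' + 1 := ⟨m - 1, by omega⟩
      simp only [Nat.add_sub_cancel]
      rw [← Dfun_mul_Bof p A (m' + 1)]
      have hD : Dfun A (m' + 1) = Dfun A m' * A m' := Finset.prod_range_succ A m'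
      rw [hD]
      ring

end MMaux

/-- Description of the Miura transformation `b_i = a_i ⋯ a_{i+p−1}` in terms of moments:
`S_{l−1}^l(t) ≠ 0` and `S_k^l(t) = S_{l−1}^l(t) · S̃_k^l(t)`. -/
theorem miura_moments_direct (p : ℕ) (hp : 2 ≤ p) (T : ℝ) (hT : 0 < T)
    (a : ℤ → ℝ → ℂ)
    (haneg : ∀ l : ℤ, l < 0 → ∀ t : ℝ, a l t = 0)
    (hane : ∀ i : ℤ, 0 ≤ i → ∀ t ∈ Set.Ico (0 : ℝ) T, a i t ≠ 0)
    (haode : ∀ i : ℤ, 0 ≤ i → ∀ t ∈ Set.Ico (0 : ℝ) T, HasDerivWithinAt (a i)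
      (a i t * (∏ j ∈ Finset.Icc 1 p, a (i + (j : ℤ)) t -
        ∏ j ∈ Finset.Icc 1 p, a (i - (j : ℤ)) t)) (Set.Ico (0 : ℝ) T) t) :
    ∀ t ∈ Set.Ico (0 : ℝ) T, ∀ k l : ℕ, 1 ≤ l → l ≤ p →
      momL1 p (fun n : ℕ => a (n : ℤ) t) (l - 1) l ≠ 0 ∧
      momL1 p (fun n : ℕ => a (n : ℤ) t) k l =
        momL1 p (fun n : ℕ => a (n : ℤ) t) (l - 1) l *
          momL2 p (fun n : ℕ => ∏ j ∈ Finset.range p, a ((n : ℤ) + (j : ℤ)) t) k l := by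
  
  intro t ht k l hl1 hlp
  set A : ℕ → ℂ := fun n : ℕ => a (n : ℤ) t with hA
  have hB : (fun n : ℕ => ∏ j ∈ Finset.range p, a ((n : ℤ) + (j : ℤ)) t) = MMaux.Bof p A := by
    funext n
    unfold MMaux.Bof
    apply Finset.prod_congr rfl
    intro j _
    have : ((n + j : ℕ) : ℤ) = (n : ℤ) + (j : ℤ) := by push_cast; ring
    simp only [hA, this]
  have hM1 : ∀ k' : ℕ, momL1 p A k' l = MMaux.ffun p A k' (l - 1) := fun _ => rfl
  have hM2 : momL2 p (MMaux.Bof p A) k l = MMaux.gfun p (MMaux.Bof p A) k (l - 1) := rfl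
  have hAne : ∀ j : ℕ, A j ≠ 0 := fun j => hane j (Int.ofNat_nonneg j) t ht
  have hDne : MMaux.Dfun A (l - 1) ≠ 0 := by
    unfold MMaux.Dfun
    exact Finset.prod_ne_zero_iff.mpr fun j _ => hAne j
  constructor
  · rw [hM1, MMaux.key, MMaux.gfun_diag]
    simpa using hDne
  · rw [hB, hM1, hM1, hM2, MMaux.key, MMaux.key, MMaux.gfun_diag, mul_one]
end
end
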